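/- arXiv:1203.1256 — 8 statements merged into one kernel-verified Lean document; each statement's English description precedes it below -/
import Mathlib

section
/- Matrix-Tree Theorem (eigenvalue form): For a network (G,c), let det₀Δ denote the product of the nonzero eigenvalues of the Laplacian Δ, counted with multiplicity (Δ is real symmetric positive semidefinite, so all eigenvalues are real and nonnegative). Then (1/|V|)·det₀Δ = Σ_T ∏_{e∈T} c_e, where the sum is over all spanning trees T of G. -/
open Matrix BigOperators
open scoped Classical

section GraphAux
variable {V : Type*}

lemma mt_walk_closed {G : SimpleGraph V} (P : V → Prop)
    (hcl : ∀ {a b}, G.Adj a b → P a → P b) : ∀ {u v : V}, G.Walk u v → P u → P v := by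
  intro u v p
  induction p with
  | nil => exact id
  | cons h p ih => exact fun hu => ih (hcl h hu)

lemma mt_connected_delete_of_not_bridge {G : SimpleGraph V} (hG : G.Connected)
    {u v : V} (h : G.Adj u v) (hb : ¬ G.IsBridge s(u,v)) :
    (G \ SimpleGraph.fromEdgeSet {s(u,v)}).Connected := by
  have hr : (G \ SimpleGraph.fromEdgeSet {s(u,v)}).Reachable u v := by
    rw [SimpleGraph.isBridge_iff] at hb; push_neg at hb; exact hb
  have key : ∀ {x y : V}, G.Walk x y → (G \ SimpleGraph.fromEdgeSet {s(u,v)}).Reachable x y := by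
    intro x y p
    induction p with
    | nil => exact SimpleGraph.Reachable.refl _
    | @cons x b y hadj p ih =>
      refine SimpleGraph.Reachable.trans ?_ ih
      by_cases he : s(x, b) = s(u,v)
      · rw [Sym2.eq_iff] at he
        rcases he with ⟨rfl, rfl⟩ | ⟨rfl, rfl⟩
        · exact hr
        · exact hr.symm
      · refine SimpleGraph.Adj.reachable ?_
        rw [SimpleGraph.sdiff_adj]
        refine ⟨hadj, fun hc => ?_⟩
        rw [SimpleGraph.fromEdgeSet_adj] at hc
        exact he hc.1
  rw [SimpleGraph.connected_iff]
  exact ⟨fun x y => key (hG x y).some, hG.nonempty⟩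

lemma mt_edgeSet_delete (G : SimpleGraph V) {u v : V} (h : G.Adj u v) :
    (G \ SimpleGraph.fromEdgeSet {s(u,v)}).edgeSet = G.edgeSet \ {s(u,v)} := by
  rw [SimpleGraph.edgeSet_sdiff, SimpleGraph.edgeSet_fromEdgeSet]
  ext e
  simp only [Set.mem_diff, Set.mem_singleton_iff, Set.mem_setOf_eq]
  constructor
  · rintro ⟨he, hne⟩
    exact ⟨he, fun hc => hne ⟨hc, SimpleGraph.not_isDiag_of_mem_edgeSet G (hc ▸ he)⟩⟩
  · rintro ⟨he, hne⟩
    exact ⟨he, fun hc => hne hc.1⟩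

lemma mt_ncard_eq_card_edgeFinset [Fintype V] (G : SimpleGraph V) [Fintype G.edgeSet] :
    G.edgeSet.ncard = G.edgeFinset.card := by
  rw [SimpleGraph.edgeFinset, ← Set.ncard_eq_toFinset_card']

lemma mt_card_le_of_connected [Fintype V] : ∀ (m : ℕ) (G : SimpleGraph V),
    G.edgeSet.ncard = m → G.Connected → Fintype.card V ≤ G.edgeSet.ncard + 1 := by
  intro m
  induction m using Nat.strong_induction_on with
  | _ m ih =>
    intro G hm hG
    by_cases hac : G.IsAcyclic
    · rw [mt_ncard_eq_card_edgeFinset]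
      exact le_of_eq (SimpleGraph.IsTree.card_edgeFinset ⟨hG, hac⟩).symm
    · rw [SimpleGraph.isAcyclic_iff_forall_adj_isBridge] at hac
      push_neg at hac
      obtain ⟨u, v, hadj, hb⟩ := hac
      have hconn' := mt_connected_delete_of_not_bridge hG hadj hb
      have hmem : s(u,v) ∈ G.edgeSet := hadj
      have hcard' : (G \ SimpleGraph.fromEdgeSet {s(u,v)}).edgeSet.ncard
          = G.edgeSet.ncard - 1 := by
        rw [mt_edgeSet_delete G hadj, Set.ncard_diff_singleton_of_mem hmem]
      have hpos : 0 < G.edgeSet.ncard :=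
        (Set.ncard_pos (Set.toFinite _)).2 ⟨_, hmem⟩
      have hlt : G.edgeSet.ncard - 1 < m := by omega
      have := ih _ hlt _ hcard' hconn'
      omega

lemma mt_acyclic_of_connected_card [Fintype V] {G : SimpleGraph V} (hG : G.Connected)
    (hc : G.edgeSet.ncard + 1 = Fintype.card V) : G.IsAcyclic := by
  by_contra hac
  rw [SimpleGraph.isAcyclic_iff_forall_adj_isBridge] at hac
  push_neg at hac
  obtain ⟨u, v, hadj, hb⟩ := hac
  have hconn' := mt_connected_delete_of_not_bridge hG hadj hb
  have hmem : s(u,v) ∈ G.edgeSet := hadj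
  have hcard' : (G \ SimpleGraph.fromEdgeSet {s(u,v)}).edgeSet.ncard
      = G.edgeSet.ncard - 1 := by
    rw [mt_edgeSet_delete G hadj, Set.ncard_diff_singleton_of_mem hmem]
  have hpos : 0 < G.edgeSet.ncard := (Set.ncard_pos (Set.toFinite _)).2 ⟨_, hmem⟩
  have := mt_card_le_of_connected _ _ hcard' hconn'
  omega

end GraphAux

/-- The Laplacian of a finite graph with edge conductances `c`. -/
noncomputable def glap {V : Type*} [Fintype V] [DecidableEq V] (G : SimpleGraph V)
    (c : Sym2 V → ℝ) : Matrix V V ℝ :=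
  Matrix.of fun v w =>
    if v = w then ∑ u, if G.Adj v u then c s(v, u) else 0
    else if G.Adj v w then -c s(v, w) else 0

section LapAux
variable {V : Type*} [Fintype V] [DecidableEq V] (G : SimpleGraph V) (c : Sym2 V → ℝ)

noncomputable def mtA (v w : V) : ℝ := if G.Adj v w then c s(v,w) else 0

variable {G c}

lemma mtA_symm (v w : V) : mtA G c v w = mtA G c w v := by
  unfold mtA
  rw [Sym2.eq_swap]
  congr 1
  simp [SimpleGraph.adj_comm]

lemma mtA_self (v : V) : mtA G c v v = 0 := by simp [mtA]

lemma mtA_nonneg (hpos : ∀ e ∈ G.edgeSet, 0 < c e) (v w : V) : 0 ≤ mtA G c v w := by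
  unfold mtA; split_ifs with h
  · exact (hpos _ h).le
  · exact le_refl 0

lemma glap_apply (v w : V) :
    glap G c v w = if v = w then ∑ u, mtA G c v u else -(mtA G c v w) := by
  unfold glap mtA
  rw [Matrix.of_apply]
  split_ifs with h h2
  · rfl
  · rfl
  · simp

lemma glap_rowsum (v : V) : ∑ w, glap G c v w = 0 := by
  rw [← Finset.add_sum_erase _ _ (Finset.mem_univ v)]
  have h1 : glap G c v v = ∑ u, mtA G c v u := by rw [glap_apply]; simp
  have h2 : ∀ w ∈ Finset.univ.erase v, glap G c v w = -(mtA G c v w) := by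
    intro w hw
    rw [glap_apply, if_neg (Ne.symm (Finset.mem_erase.1 hw).1)]
  rw [h1, Finset.sum_congr rfl h2, ← Finset.add_sum_erase _ (mtA G c v) (Finset.mem_univ v),
    mtA_self]
  ring_nf
  rw [Finset.sum_neg_distrib]
  ring

lemma glap_mulVec_apply (x : V → ℝ) (v : V) :
    (glap G c *ᵥ x) v = ∑ u, mtA G c v u * (x v - x u) := by
  have : (glap G c *ᵥ x) v = ∑ w, glap G c v w * x w := rfl
  rw [this, ← Finset.add_sum_erase _ _ (Finset.mem_univ v)]
  have h1 : glap G c v v * x v = (∑ u, mtA G c v u) * x v := by rw [glap_apply]; simp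
  have h2 : ∀ w ∈ Finset.univ.erase v, glap G c v w * x w = -(mtA G c v w * x w) := by
    intro w hw
    rw [glap_apply, if_neg (Ne.symm (Finset.mem_erase.1 hw).1)]; ring
  rw [h1, Finset.sum_congr rfl h2]
  have h3 : ∑ u, mtA G c v u * (x v - x u)
      = (∑ u, mtA G c v u * x v) - ∑ u, mtA G c v u * x u := by
    rw [← Finset.sum_sub_distrib]; congr 1; ext u; ring
  rw [h3, ← Finset.sum_mul]
  have h4 : ∑ u, mtA G c v u * x u
      = mtA G c v v * x v + ∑ u ∈ Finset.univ.erase v, mtA G c v u * x u :=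
    (Finset.add_sum_erase _ _ (Finset.mem_univ v)).symm
  rw [h4, mtA_self, Finset.sum_neg_distrib]
  ring

lemma glap_mulVec_const (k : ℝ) : glap G c *ᵥ (fun _ => k) = 0 := by
  ext v
  rw [glap_mulVec_apply]
  simp

lemma glap_ker_const [Nonempty V] (hpos : ∀ e ∈ G.edgeSet, 0 < c e) (hconn : G.Connected)
    {x : V → ℝ} (hx : glap G c *ᵥ x = 0) (v w : V) : x v = x w := by
  obtain ⟨vm, -, hvm⟩ := Finset.exists_max_image Finset.univ x ⟨Classical.arbitrary V,
    Finset.mem_univ _⟩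
  have hclosed : ∀ {a b : V}, G.Adj a b → x a = x vm → x b = x vm := by
    intro a b hab ha
    have h0 : ∑ u, mtA G c a u * (x a - x u) = 0 := by
      rw [← glap_mulVec_apply, hx]; rfl
    have hnn : ∀ u ∈ Finset.univ, 0 ≤ mtA G c a u * (x a - x u) := by
      intro u _
      apply mul_nonneg (mtA_nonneg hpos a u)
      rw [ha]
      exact sub_nonneg.2 (hvm u (Finset.mem_univ u))
    have := (Finset.sum_eq_zero_iff_of_nonneg hnn).1 h0 b (Finset.mem_univ b)
    have hAb : 0 < mtA G c a b := by
      unfold mtA; rw [if_pos hab]; exact hpos _ hab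
    have : x a - x b = 0 := by
      rcases mul_eq_zero.1 this with h | h
      · exact absurd h hAb.ne'
      · exact h
    rw [← ha]; linarith
  have hall : ∀ u, x u = x vm := fun u =>
    mt_walk_closed (fun z => x z = x vm) hclosed (hconn vm u).some rfl
  rw [hall v, hall w]

end LapAux

section IncAux
variable {V : Type*} [Fintype V] [DecidableEq V]

/-- signed incidence "matrix" entry for vertex v and potential edge e -/
noncomputable def mtN (v : V) (e : Sym2 V) : ℝ :=
  if v = e.out.1 then (if v = e.out.2 then 0 else 1)
  else if v = e.out.2 then -1 else 0

noncomputable def mtW (G : SimpleGraph V) (c : Sym2 V → ℝ) (e : Sym2 V) : ℝ :=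
  if e ∈ G.edgeSet then c e else 0

lemma mtN_eq_zero_of_not_mem {v : V} {e : Sym2 V} (h : v ∉ e) : mtN v e = 0 := by
  unfold mtN
  have h1 : v ≠ e.out.1 := fun hc => h (by rw [← Quot.out_eq e, hc]; exact Sym2.mem_mk_left _ _)
  have h2 : v ≠ e.out.2 := fun hc => h (by rw [← Quot.out_eq e, hc]; exact Sym2.mem_mk_right _ _)
  rw [if_neg h1, if_neg h2]

lemma mtN_out_cases {a b : V} (hab : a ≠ b) :
    (s(a,b).out = (a,b) ∧ mtN a s(a,b) = 1 ∧ mtN b s(a,b) = -1) ∨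
    (s(a,b).out = (b,a) ∧ mtN a s(a,b) = -1 ∧ mtN b s(a,b) = 1) := by
  have hout : s(s(a,b).out.1, s(a,b).out.2) = s(a,b) := Quot.out_eq _
  rw [Sym2.eq_iff] at hout
  rcases hout with ⟨h1, h2⟩ | ⟨h1, h2⟩
  · left
    refine ⟨Prod.ext h1 h2, ?_, ?_⟩
    · unfold mtN
      rw [h1, h2, if_pos rfl, if_neg hab]
    · unfold mtN
      rw [h1, h2, if_neg (Ne.symm hab), if_pos rfl]
  · right
    refine ⟨Prod.ext h1 h2, ?_, ?_⟩
    · unfold mtN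
      rw [h1, h2, if_neg hab, if_pos rfl]
    · unfold mtN
      rw [h1, h2, if_pos rfl, if_neg (Ne.symm hab)]

lemma mtN_mul_self {a b : V} (hab : a ≠ b) : mtN a s(a,b) * mtN b s(a,b) = -1 := by
  rcases mtN_out_cases hab with ⟨-, h1, h2⟩ | ⟨-, h1, h2⟩ <;> rw [h1, h2] <;> ring

lemma mtN_sq {a b : V} (hab : a ≠ b) : mtN a s(a,b) * mtN a s(a,b) = 1 := by
  rcases mtN_out_cases hab with ⟨-, h1, -⟩ | ⟨-, h1, -⟩ <;> rw [h1] <;> ring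

lemma mtN_ne_zero {a b : V} (hab : a ≠ b) : mtN a s(a,b) ≠ 0 := by
  rcases mtN_out_cases hab with ⟨-, h1, -⟩ | ⟨-, h1, -⟩ <;> rw [h1] <;> norm_num

lemma mtN_mem_ne_zero {v : V} {e : Sym2 V} (hmem : v ∈ e) (hd : ¬ e.IsDiag) : mtN v e ≠ 0 := by
  obtain ⟨u, rfl⟩ := Sym2.mem_iff_exists.mp hmem
  exact mtN_ne_zero (fun h => hd (by rw [h]; exact Sym2.mk_isDiag_iff.2 rfl))

/-- key off-diagonal identity -/
lemma mt_offdiag (G : SimpleGraph V) (c : Sym2 V → ℝ) {v w : V} (hvw : v ≠ w) :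
    ∑ e : Sym2 V, mtW G c e * mtN v e * mtN w e = glap G c v w := by
  rw [glap_apply, if_neg hvw]
  rw [Finset.sum_eq_single s(v,w)]
  · unfold mtW mtA
    by_cases h : G.Adj v w
    · rw [if_pos ((SimpleGraph.mem_edgeSet G).2 h), if_pos h, mul_assoc, mtN_mul_self hvw]
      ring
    · rw [if_neg (fun hc => h ((SimpleGraph.mem_edgeSet G).1 hc)), if_neg h]
      ring
  · intro e _ hne
    by_cases hW : mtW G c e = 0
    · rw [hW]; ring
    have he : e ∈ G.edgeSet := by
      by_contra hc; exact hW (if_neg hc)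
    by_cases hv : v ∈ e
    · by_cases hw : w ∈ e
      · exfalso
        obtain ⟨u, rfl⟩ := Sym2.mem_iff_exists.mp hv
        rcases Sym2.mem_iff.mp hw with rfl | rfl
        · exact hvw rfl
        · exact hne rfl
      · rw [mtN_eq_zero_of_not_mem hw]; ring
    · rw [mtN_eq_zero_of_not_mem hv]; ring
  · intro h
    exact absurd (Finset.mem_univ _) h

/-- diagonal identity -/
lemma mt_diag (G : SimpleGraph V) (c : Sym2 V → ℝ) (v : V) :
    ∑ e : Sym2 V, mtW G c e * mtN v e * mtN v e = glap G c v v := by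
  rw [glap_apply, if_pos rfl]
  have lhs_eq : ∀ e : Sym2 V, mtW G c e * mtN v e * mtN v e
      = if e ∈ G.edgeSet ∧ v ∈ e then c e else 0 := by
    intro e
    by_cases he : e ∈ G.edgeSet
    · by_cases hv : v ∈ e
      · rw [if_pos ⟨he, hv⟩]
        unfold mtW
        rw [if_pos he]
        obtain ⟨u, rfl⟩ := Sym2.mem_iff_exists.mp hv
        have hvu : v ≠ u := fun hc =>
          (SimpleGraph.not_isDiag_of_mem_edgeSet G he) (by rw [hc]; exact Sym2.mk_isDiag_iff.2 rfl)
        rw [mul_assoc, mtN_sq hvu, mul_one]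
      · rw [if_neg (fun hc => hv hc.2), mtN_eq_zero_of_not_mem hv]; ring
    · rw [if_neg (fun hc => he hc.1)]
      unfold mtW
      rw [if_neg he]; ring
  rw [Finset.sum_congr rfl (fun e _ => lhs_eq e)]
  unfold mtA
  rw [← Finset.sum_filter, ← Finset.sum_filter]
  have himg : (Finset.univ.filter (fun e : Sym2 V => e ∈ G.edgeSet ∧ v ∈ e))
      = (Finset.univ.filter (fun u => G.Adj v u)).image (fun u => s(v,u)) := by
    ext e
    simp only [Finset.mem_filter, Finset.mem_univ, true_and, Finset.mem_image]
    constructor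
    · rintro ⟨he, hv⟩
      obtain ⟨u, rfl⟩ := Sym2.mem_iff_exists.mp hv
      exact ⟨u, he, rfl⟩
    · rintro ⟨u, hu, rfl⟩
      exact ⟨hu, Sym2.mem_mk_left _ _⟩
  rw [himg, Finset.sum_image]
  intro u hu u' hu' heq
  rw [Finset.mem_coe, Finset.mem_filter] at hu hu'
  rw [Sym2.eq_iff] at heq
  rcases heq with ⟨-, h⟩ | ⟨h1, h2⟩
  · exact h
  · exact absurd h2 hu.2.ne'
end IncAux



section DetExp
variable {m E R : Type*} [Fintype m] [DecidableEq m] [Fintype E] [CommRing R]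

lemma mt_det_mul_expansion (A : Matrix m E R) (B : Matrix E m R) :
    (A * B).det = ∑ f : m → E, (∏ i, A i (f i)) * (B.submatrix f id).det := by
  have hrows : (A * B).det = Matrix.detRowAlternating (fun i => ∑ e, A i e • B e) := by
    congr 1
    ext i j
    simp [Matrix.mul_apply, Finset.sum_apply]
  have key := (Matrix.detRowAlternating (R := R) (n := m)).toMultilinearMap.map_sum
    (g := fun i e => A i e • B e)
  have key2 : ∀ f : m → E,
      (Matrix.detRowAlternating (R := R) (n := m)).toMultilinearMap
        (fun i => A i (f i) • B (f i))
      = (∏ i, A i (f i)) • (Matrix.detRowAlternating (R := R) (n := m)).toMultilinearMap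
          (fun i => B (f i)) := fun f => MultilinearMap.map_smul_univ _ _ _
  simp only [AlternatingMap.coe_multilinearMap] at key key2
  rw [hrows, key]
  apply Finset.sum_congr rfl
  intro f _
  rw [key2 f, smul_eq_mul]
  congr 1
end DetExp


/-- A spanning tree of `G`, as a set of edges: contained in the edges of `G`,
connected and acyclic (as a graph on the full vertex set `V`). -/
def IsSpanningTree {V : Type*} (G : SimpleGraph V) (T : Finset (Sym2 V)) : Prop :=
  ↑T ⊆ G.edgeSet ∧ (SimpleGraph.fromEdgeSet (↑T : Set (Sym2 V))).Connected ∧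
    (SimpleGraph.fromEdgeSet (↑T : Set (Sym2 V))).IsAcyclic

section TreeAux
variable {V : Type*} [Fintype V] [DecidableEq V]

lemma mtN_add {a b : V} (hab : a ≠ b) : mtN a s(a,b) + mtN b s(a,b) = 0 := by
  rcases mtN_out_cases hab with ⟨-, h1, h2⟩ | ⟨-, h1, h2⟩ <;> rw [h1, h2] <;> ring

lemma mt_parent {H : SimpleGraph V} (hH : H.Connected) {v v₀ : V} (hv : v ≠ v₀) :
    ∃ u, H.Adj v u ∧ H.dist u v₀ + 1 = H.dist v v₀ := by
  obtain ⟨p, hp⟩ := hH.exists_walk_length_eq_dist v v₀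
  cases p with
  | nil => exact absurd rfl hv
  | @cons _ u _ hadj q =>
    refine ⟨u, hadj, ?_⟩
    have h1 : H.dist u v₀ ≤ q.length := SimpleGraph.dist_le q
    obtain ⟨q', hq'⟩ := hH.exists_walk_length_eq_dist u v₀
    have h2 : H.dist v v₀ ≤ q'.length + 1 := by
      simpa [SimpleGraph.Walk.length_cons] using
        SimpleGraph.dist_le (SimpleGraph.Walk.cons hadj q')
    rw [SimpleGraph.Walk.length_cons] at hp
    omega

noncomputable def mtB (v₀ : V) : Matrix (Sym2 V) {v : V // v ≠ v₀} ℝ :=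
  Matrix.of fun e j => mtN j.1 e

lemma mt_tree_fiber (G : SimpleGraph V) (c : Sym2 V → ℝ) (v₀ : V) {T : Finset (Sym2 V)}
    (hTsub : ↑T ⊆ G.edgeSet)
    (hconnT : (SimpleGraph.fromEdgeSet (↑T : Set (Sym2 V))).Connected)
    (hcard : T.card = Fintype.card {v : V // v ≠ v₀}) :
    ∑ f ∈ Finset.univ.filter (fun f : {v : V // v ≠ v₀} → Sym2 V =>
        Function.Injective f ∧ Finset.univ.image f = T),
      (∏ i, (mtW G c (f i) * mtN i.1 (f i))) * ((mtB v₀).submatrix f id).det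
    = ∏ e ∈ T, c e := by
  set H := SimpleGraph.fromEdgeSet (↑T : Set (Sym2 V)) with hHdef
  have hadjH : ∀ {a b : V}, H.Adj a b ↔ s(a,b) ∈ T ∧ a ≠ b := by
    intro a b
    rw [hHdef, SimpleGraph.fromEdgeSet_adj, Finset.mem_coe]
  have hpar : ∀ v : {v : V // v ≠ v₀}, ∃ u, H.Adj v.1 u ∧ H.dist u v₀ + 1 = H.dist v.1 v₀ :=
    fun v => mt_parent hconnT v.2
  choose par hparadj hpardist using hpar
  have hne : ∀ v : {v : V // v ≠ v₀}, v.1 ≠ par v := fun v => (hparadj v).ne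
  set f₀ : {v : V // v ≠ v₀} → Sym2 V := fun v => s(v.1, par v) with hf₀def
  have hf₀T : ∀ v, f₀ v ∈ T := fun v => (hadjH.mp (hparadj v)).1
  have hf₀inj : Function.Injective f₀ := by
    intro x y hxy
    rw [hf₀def, Sym2.eq_iff] at hxy
    rcases hxy with ⟨h1, -⟩ | ⟨h1, h2⟩
    · exact Subtype.ext h1
    · exfalso
      have d1 := hpardist x
      have d2 := hpardist y
      rw [h2] at d1
      rw [← h1] at d2
      omega
  have himg : Finset.univ.image f₀ = T := by
    apply Finset.eq_of_subset_of_card_le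
    · intro e he
      obtain ⟨v, -, rfl⟩ := Finset.mem_image.mp he
      exact hf₀T v
    · rw [Finset.card_image_of_injective _ hf₀inj, Finset.card_univ, hcard]
  -- the linear order making the tree matrix triangular
  set r : {v : V // v ≠ v₀} → ℕ := fun v => H.dist v.1 v₀ with hrdef
  set C : ℕ := Fintype.card {v : V // v ≠ v₀} + 1 with hCdef
  have hgC : ∀ v : {v : V // v ≠ v₀}, ((Fintype.equivFin {v : V // v ≠ v₀}) v : ℕ) < C :=
    fun v => Nat.lt_succ_of_lt (Fin.is_lt _) |>.trans_le le_rfl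
  set b : {v : V // v ≠ v₀} → ℕ := fun v => r v * C + ((Fintype.equivFin _) v : ℕ) with hbdef
  have hbmono : ∀ x y : {v : V // v ≠ v₀}, r x < r y → b x < b y := by
    intro x y h
    calc b x < r x * C + C := Nat.add_lt_add_left (hgC x) _
      _ = (r x + 1) * C := by ring
      _ ≤ r y * C := Nat.mul_le_mul_right C h
      _ ≤ b y := Nat.le_add_right _ _
  have hbinj : Function.Injective b := by
    intro x y hxy
    have hrxy : r x = r y := by
      rcases lt_trichotomy (r x) (r y) with h | h | h
      · exact absurd hxy (hbmono x y h).ne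
      · exact h
      · exact absurd hxy.symm (hbmono y x h).ne
    have : ((Fintype.equivFin {v : V // v ≠ v₀}) x : ℕ)
        = ((Fintype.equivFin {v : V // v ≠ v₀}) y : ℕ) := by
      rw [hbdef] at hxy
      simp only [hrxy] at hxy
      omega
    exact (Fintype.equivFin _).injective (Fin.ext this)
  letI : LinearOrder {v : V // v ≠ v₀} := LinearOrder.lift' b hbinj
  have hlt_iff : ∀ x y : {v : V // v ≠ v₀}, x < y ↔ b x < b y := by
    intro x y
    constructor
    · intro h
      rcases lt_or_ge (b x) (b y) with h' | h'
      · exact h'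
      · exfalso
        rcases h'.lt_or_eq with h'' | h''
        · exact absurd h (not_lt_of_ge (le_of_lt h''))
        · exact h.ne (hbinj h''.symm)
    · intro h
      rcases lt_trichotomy x y with h' | h' | h'
      · exact h'
      · exact absurd h (by rw [h']; exact lt_irrefl _)
      · exact absurd h (not_lt_of_ge (le_of_lt h'))
  have htri : ((mtB v₀).submatrix f₀ id).BlockTriangular OrderDual.toDual := by
    intro i j hij
    have hij' : i < j := hij
    show mtN (id j).1 (f₀ i) = 0
    by_contra h0
    have hmem : (j : {v : V // v ≠ v₀}).1 ∈ f₀ i := by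
      by_contra hm
      exact h0 (mtN_eq_zero_of_not_mem hm)
    rw [hf₀def] at hmem
    rcases Sym2.mem_iff.mp hmem with h | h
    · exact (hij'.ne.symm) (Subtype.ext h)
    · have : r j < r i := by
        have := hpardist i
        rw [hrdef]
        simp only []
        rw [h]
        omega
      exact absurd hij' (not_lt_of_ge (le_of_lt ((hlt_iff j i).mpr (hbmono j i this))))
  have hdet : ((mtB v₀).submatrix f₀ id).det = ∏ i, mtN i.1 (f₀ i) :=
    Matrix.det_of_lowerTriangular _ htri
  have hdet_sq : ((mtB v₀).submatrix f₀ id).det * ((mtB v₀).submatrix f₀ id).det = 1 := by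
    rw [hdet, ← Finset.prod_mul_distrib]
    apply Finset.prod_eq_one
    intro i _
    rw [hf₀def]
    exact mtN_sq (hne i)
  -- the fiber is the image of the permutations
  have hfiber : Finset.univ.filter (fun f : {v : V // v ≠ v₀} → Sym2 V =>
      Function.Injective f ∧ Finset.univ.image f = T)
      = Finset.univ.image (fun σ : Equiv.Perm {v : V // v ≠ v₀} => f₀ ∘ σ) := by
    ext f
    simp only [Finset.mem_filter, Finset.mem_univ, true_and, Finset.mem_image]
    constructor
    · rintro ⟨hinj, himgf⟩
      have hfT : ∀ v, f v ∈ T := fun v =>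
        himgf ▸ Finset.mem_image_of_mem f (Finset.mem_univ v)
      have hcardT : Fintype.card {e // e ∈ T} = Fintype.card {v : V // v ≠ v₀} := by
        rw [Fintype.card_coe, hcard]
      have hFbij : Function.Bijective (fun v : {v : V // v ≠ v₀} => (⟨f v, hfT v⟩ : {e // e ∈ T})) :=
        (Fintype.bijective_iff_injective_and_card _).2
          ⟨fun x y h => hinj (congrArg Subtype.val h), hcardT.symm⟩
      have hF₀bij : Function.Bijective (fun v : {v : V // v ≠ v₀} => (⟨f₀ v, hf₀T v⟩ : {e // e ∈ T})) :=
        (Fintype.bijective_iff_injective_and_card _).2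
          ⟨fun x y h => hf₀inj (congrArg Subtype.val h), hcardT.symm⟩
      refine ⟨(Equiv.ofBijective _ hFbij).trans (Equiv.ofBijective _ hF₀bij).symm, ?_⟩
      funext v
      have h1 : (fun v : {v : V // v ≠ v₀} => (⟨f₀ v, hf₀T v⟩ : {e // e ∈ T}))
          ((Equiv.ofBijective _ hF₀bij).symm (Equiv.ofBijective _ hFbij v))
          = Equiv.ofBijective _ hFbij v :=
        (Equiv.ofBijective _ hF₀bij).apply_symm_apply _
      exact congrArg Subtype.val h1
    · rintro ⟨σ, rfl⟩
      refine ⟨hf₀inj.comp σ.injective, ?_⟩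
      rw [show f₀ ∘ ⇑σ = f₀ ∘ ⇑σ from rfl, ← Finset.image_image, Finset.image_univ_equiv, himg]
  rw [hfiber, Finset.sum_image (by
    intro σ _ τ _ h
    ext v : 1
    exact hf₀inj (congrFun h v))]
  have hterm : ∀ σ : Equiv.Perm {v : V // v ≠ v₀},
      (∏ i, (mtW G c ((f₀ ∘ σ) i) * mtN i.1 ((f₀ ∘ σ) i)))
        * ((mtB v₀).submatrix (f₀ ∘ σ) id).det
      = ((∏ e ∈ T, c e) * ((mtB v₀).submatrix f₀ id).det)
        * (((Equiv.Perm.sign σ : ℤ) : ℝ) * ∏ i, mtN i.1 (f₀ (σ i))) := by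
    intro σ
    have hW : (∏ i, mtW G c (f₀ (σ i))) = ∏ e ∈ T, c e := by
      rw [Equiv.prod_comp σ (fun i => mtW G c (f₀ i))]
      rw [← himg, Finset.prod_image (fun x _ y _ h => hf₀inj h)]
      apply Finset.prod_congr rfl
      intro v _
      unfold mtW
      rw [if_pos (hTsub (hf₀T v))]
    have hsub : (mtB v₀).submatrix (f₀ ∘ σ) id
        = ((mtB v₀).submatrix f₀ id).submatrix σ id := by
      rw [Matrix.submatrix_submatrix]
      rfl
    rw [Finset.prod_mul_distrib, hsub, Matrix.det_permute]
    simp only [Function.comp_apply]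
    rw [hW]
    ring
  rw [Finset.sum_congr rfl (fun σ _ => hterm σ), ← Finset.mul_sum]
  have hdetsum : (∑ σ : Equiv.Perm {v : V // v ≠ v₀},
      ((Equiv.Perm.sign σ : ℤ) : ℝ) * ∏ i, mtN i.1 (f₀ (σ i)))
      = ((mtB v₀).submatrix f₀ id).det := by
    rw [Matrix.det_apply']
    rfl
  rw [hdetsum, mul_assoc, hdet_sq, mul_one]
end TreeAux

section MinorAux
variable {V : Type*} [Fintype V] [DecidableEq V]

lemma mt_card_compl [Nonempty V] (v₀ : V) :
    Fintype.card {v : V // v ≠ v₀} + 1 = Fintype.card V := by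
  have h1 : Fintype.card {v : V // v = v₀} = 1 := Fintype.card_subtype_eq v₀
  have h2 := Fintype.card_subtype_compl (fun v : V => v = v₀)
  rw [h1] at h2
  have h3 : 0 < Fintype.card V := Fintype.card_pos
  have h4 : Fintype.card {v : V // ¬ v = v₀} = Fintype.card {v : V // v ≠ v₀} := rfl
  omega

lemma mt_det_minor [Nonempty V] (G : SimpleGraph V) (c : Sym2 V → ℝ) (v₀ : V) :
    ((glap G c).submatrix (fun v : {v : V // v ≠ v₀} => v.1) (fun v => v.1)).det
      = ∑ T ∈ Finset.univ.filter (fun T : Finset (Sym2 V) => IsSpanningTree G T),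
          ∏ e ∈ T, c e := by
  classical
  set Am : Matrix {v : V // v ≠ v₀} (Sym2 V) ℝ :=
    Matrix.of (fun i e => mtW G c e * mtN i.1 e) with hAmdef
  have hAB : Am * mtB v₀ = (glap G c).submatrix (fun v : {v : V // v ≠ v₀} => v.1) (fun v => v.1) := by
    ext i j
    rw [Matrix.mul_apply]
    have hterm : ∀ e, Am i e * mtB v₀ e j = mtW G c e * mtN i.1 e * mtN j.1 e := fun e => rfl
    rw [Finset.sum_congr rfl (fun e _ => hterm e)]
    by_cases hij : i = j
    · subst hij
      exact mt_diag G c i.1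
    · exact mt_offdiag G c (fun h => hij (Subtype.ext h))
  rw [← hAB, mt_det_mul_expansion]
  -- drop non-injective terms
  rw [← Finset.sum_filter_add_sum_filter_not Finset.univ
    (fun f : {v : V // v ≠ v₀} → Sym2 V => Function.Injective f)]
  have hnoninj : ∑ f ∈ Finset.univ.filter (fun f : {v : V // v ≠ v₀} → Sym2 V =>
      ¬ Function.Injective f), (∏ i, Am i (f i)) * ((mtB v₀).submatrix f id).det = 0 := by
    apply Finset.sum_eq_zero
    intro f hf
    rw [Finset.mem_filter] at hf
    obtain ⟨x, y, hfxy, hxy⟩ := Function.not_injective_iff.mp hf.2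
    have : ((mtB v₀).submatrix f id).det = 0 :=
      Matrix.det_zero_of_row_eq hxy (by
        ext j
        show mtB v₀ (f x) j = mtB v₀ (f y) j
        rw [hfxy])
    rw [this, mul_zero]
  rw [hnoninj, add_zero]
  -- fiberwise over the image
  rw [← Finset.sum_fiberwise (Finset.univ.filter (fun f : {v : V // v ≠ v₀} → Sym2 V =>
      Function.Injective f)) (fun f => Finset.univ.image f)
      (fun f => (∏ i, Am i (f i)) * ((mtB v₀).submatrix f id).det)]
  have hper : ∀ T : Finset (Sym2 V),
      (∑ f ∈ (Finset.univ.filter (fun f : {v : V // v ≠ v₀} → Sym2 V =>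
          Function.Injective f)).filter (fun f => Finset.univ.image f = T),
        (∏ i, Am i (f i)) * ((mtB v₀).submatrix f id).det)
      = if IsSpanningTree G T then ∏ e ∈ T, c e else 0 := by
    intro T
    rw [Finset.filter_filter]
    by_cases hTsub : ↑T ⊆ G.edgeSet
    · by_cases hconnT : (SimpleGraph.fromEdgeSet (↑T : Set (Sym2 V))).Connected
      · by_cases hcard : T.card = Fintype.card {v : V // v ≠ v₀}
        · -- spanning tree case
          have hst : IsSpanningTree G T := by
            refine ⟨hTsub, hconnT, ?_⟩
            apply mt_acyclic_of_connected_card hconnT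
            have hes : (SimpleGraph.fromEdgeSet (↑T : Set (Sym2 V))).edgeSet = ↑T := by
              rw [SimpleGraph.edgeSet_fromEdgeSet]
              ext e
              simp only [Set.mem_diff, Set.mem_setOf_eq, Finset.mem_coe]
              exact ⟨fun h => h.1, fun h => ⟨h, SimpleGraph.not_isDiag_of_mem_edgeSet G (hTsub h)⟩⟩
            rw [hes, Set.ncard_coe_finset, hcard, mt_card_compl]
          rw [if_pos hst]
          rw [← mt_tree_fiber G c v₀ hTsub hconnT hcard]
          rfl
        · -- wrong cardinality: fiber is empty, and T is not a spanning tree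
          have h0 : ∀ f ∈ Finset.univ.filter (fun f : {v : V // v ≠ v₀} → Sym2 V =>
              Function.Injective f ∧ Finset.univ.image f = T), False := by
            intro f hf
            rw [Finset.mem_filter] at hf
            apply hcard
            rw [← hf.2.2, Finset.card_image_of_injective _ hf.2.1, Finset.card_univ]
          rw [Finset.sum_eq_zero (fun f hf => absurd hf (fun h => h0 f h))]
          rw [if_neg]
          intro hst
          apply hcard
          have htree : (SimpleGraph.fromEdgeSet (↑T : Set (Sym2 V))).IsTree := ⟨hst.2.1, hst.2.2⟩
          have := htree.card_edgeFinset
          have hes : (SimpleGraph.fromEdgeSet (↑T : Set (Sym2 V))).edgeSet = ↑T := by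
            rw [SimpleGraph.edgeSet_fromEdgeSet]
            ext e
            simp only [Set.mem_diff, Set.mem_setOf_eq, Finset.mem_coe]
            exact ⟨fun h => h.1, fun h => ⟨h, SimpleGraph.not_isDiag_of_mem_edgeSet G (hTsub h)⟩⟩
          have hnc := mt_ncard_eq_card_edgeFinset (SimpleGraph.fromEdgeSet (↑T : Set (Sym2 V)))
          rw [hes, Set.ncard_coe_finset] at hnc
          have := mt_card_compl (V := V) v₀
          omega
      · -- disconnected case
        rw [if_neg (fun hst => hconnT hst.2.1)]
        apply Finset.sum_eq_zero
        intro f hf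
        rw [Finset.mem_filter] at hf
        obtain ⟨-, -, himgf⟩ := hf
        set H := SimpleGraph.fromEdgeSet (↑T : Set (Sym2 V)) with hHdef
        -- find a vertex not reachable from v₀
        have hu : ∃ u, ¬ H.Reachable v₀ u := by
          by_contra hc
          push_neg at hc
          exact hconnT (by
            rw [SimpleGraph.connected_iff]
            exact ⟨fun x y => (hc x).symm.trans (hc y), ⟨v₀⟩⟩)
        obtain ⟨u, hu⟩ := hu
        have huv₀ : u ≠ v₀ := by
          rintro rfl
          exact hu (SimpleGraph.Reachable.refl u)
        have hdet0 : ((mtB v₀).submatrix f id).det = 0 := by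
          rw [← Matrix.exists_mulVec_eq_zero_iff]
          refine ⟨fun j => if H.Reachable u j.1 then 1 else 0, ?_, ?_⟩
          · intro hzero
            have := congrFun hzero ⟨u, huv₀⟩
            simp only [Pi.zero_apply] at this
            rw [if_pos (SimpleGraph.Reachable.refl u)] at this
            exact one_ne_zero this
          · funext i
            show (∑ j : {v : V // v ≠ v₀}, mtN j.1 (f i) * if H.Reachable u j.1 then 1 else 0)
              = (0 : {v : V // v ≠ v₀} → ℝ) i
            rw [show (0 : {v : V // v ≠ v₀} → ℝ) i = 0 from rfl]
            have hfiT : f i ∈ T := by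
              rw [← himgf]
              exact Finset.mem_image_of_mem f (Finset.mem_univ i)
            -- sum over the subtype equals sum over univ minus v₀ term
            have hsub : (∑ z ∈ Finset.univ.erase v₀, (mtN z (f i) * if H.Reachable u z then 1 else 0))
                = ∑ j : {v : V // v ≠ v₀}, mtN j.1 (f i) * if H.Reachable u j.1 then 1 else 0 :=
              Finset.sum_subtype _ (fun z => by simp [Finset.mem_erase]) _
            rw [← hsub]
            have hv₀term : mtN v₀ (f i) * (if H.Reachable u v₀ then 1 else 0) = 0 := by
              rw [if_neg (fun h => hu h.symm), mul_zero]
            have hall : (∑ z, mtN z (f i) * if H.Reachable u z then 1 else 0)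
                = ∑ z ∈ Finset.univ.erase v₀, (mtN z (f i) * if H.Reachable u z then 1 else 0) := by
              rw [← Finset.add_sum_erase _ _ (Finset.mem_univ v₀), hv₀term, zero_add]
            rw [← hall]
            -- now compute the full sum: only the two endpoints of f i matter
            set a := (f i).out.1 with hadef
            set bb := (f i).out.2 with hbdef
            have hout : s(a, bb) = f i := Quot.out_eq (f i)
            have hab : a ≠ bb := by
              intro h
              apply SimpleGraph.not_isDiag_of_mem_edgeSet G (hTsub hfiT)
              rw [← hout, h]
              exact Sym2.mk_isDiag_iff.2 rfl
            have hHadj : H.Adj a bb := by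
              rw [hHdef, SimpleGraph.fromEdgeSet_adj]
              exact ⟨by rw [hout]; exact hfiT, hab⟩
            have hreach : H.Reachable u a ↔ H.Reachable u bb :=
              ⟨fun h => h.trans hHadj.reachable, fun h => h.trans hHadj.symm.reachable⟩
            have hzero_out : ∀ z, z ∉ ({a, bb} : Finset V) →
                mtN z (f i) * (if H.Reachable u z then 1 else 0) = 0 := by
              intro z hz
              simp only [Finset.mem_insert, Finset.mem_singleton] at hz
              push_neg at hz
              have : z ∉ f i := by
                rw [← hout]
                rw [Sym2.mem_iff]
                push_neg
                exact hz
              rw [mtN_eq_zero_of_not_mem this, zero_mul]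
            rw [← Finset.sum_subset (Finset.subset_univ ({a, bb} : Finset V))
              (fun z _ hz => hzero_out z hz)]
            rw [Finset.sum_pair hab]
            by_cases hra : H.Reachable u a
            · rw [if_pos hra, if_pos (hreach.mp hra), mul_one, mul_one, ← hout]
              exact mtN_add hab
            · rw [if_neg hra, if_neg (fun h => hra (hreach.mpr h)), mul_zero, mul_zero, add_zero]
        rw [hdet0, mul_zero]
    · -- some edge of T is not an edge of G
      rw [if_neg (fun hst => hTsub hst.1)]
      apply Finset.sum_eq_zero
      intro f hf
      rw [Finset.mem_filter] at hf
      obtain ⟨-, -, himgf⟩ := hf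
      rw [Set.not_subset] at hTsub
      obtain ⟨e, heT, heG⟩ := hTsub
      rw [Finset.mem_coe, ← himgf, Finset.mem_image] at heT
      obtain ⟨i, -, rfl⟩ := heT
      have : Am i (f i) = 0 := by
        show mtW G c (f i) * mtN i.1 (f i) = 0
        unfold mtW
        rw [if_neg heG, zero_mul]
      rw [Finset.prod_eq_zero (Finset.mem_univ i) this, zero_mul]
  rw [Finset.sum_congr rfl (fun T _ => hper T)]
  exact (Finset.sum_filter _ _).symm

end MinorAux

section EigenAux
variable {V : Type*} [Fintype V] [DecidableEq V]

lemma glap_symm (G : SimpleGraph V) (c : Sym2 V → ℝ) : (glap G c)ᵀ = glap G c := by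
  ext v w
  show glap G c w v = glap G c v w
  unfold glap
  rw [Matrix.of_apply, Matrix.of_apply]
  by_cases h : v = w
  · subst h; rfl
  · rw [if_neg (Ne.symm h), if_neg h, Sym2.eq_swap]
    congr 1
    simp [SimpleGraph.adj_comm]

lemma glap_det_zero [Nonempty V] (G : SimpleGraph V) (c : Sym2 V → ℝ) :
    (glap G c).det = 0 := by
  rw [← Matrix.exists_mulVec_eq_zero_iff]
  refine ⟨fun _ => 1, ?_, glap_mulVec_const 1⟩
  intro h
  exact one_ne_zero (congrFun h (Classical.arbitrary V))

lemma glap_adjugate_const [Nonempty V] (G : SimpleGraph V) (c : Sym2 V → ℝ)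
    (hpos : ∀ e ∈ G.edgeSet, 0 < c e) (hconn : G.Connected) (v₀ v w : V) :
    (glap G c).adjugate v w = (glap G c).adjugate v₀ v₀ := by
  have hcol : ∀ (w' v1 v2 : V), (glap G c).adjugate v1 w' = (glap G c).adjugate v2 w' := by
    intro w' v1 v2
    have hx : glap G c *ᵥ (fun v => (glap G c).adjugate v w') = 0 := by
      funext i
      show ∑ j, glap G c i j * (glap G c).adjugate j w' = (0 : V → ℝ) i
      have : (glap G c * (glap G c).adjugate) i w' = ∑ j, glap G c i j * (glap G c).adjugate j w' :=
        Matrix.mul_apply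
      rw [← this, Matrix.mul_adjugate, glap_det_zero]
      simp
    exact glap_ker_const hpos hconn hx v1 v2
  have hsymadj : ∀ a b : V, (glap G c).adjugate a b = (glap G c).adjugate b a := by
    intro a b
    have h1 : ((glap G c).adjugate)ᵀ = (glap G c).adjugate := by
      rw [Matrix.adjugate_transpose, glap_symm]
    exact (congrFun (congrFun h1 b) a).symm ▸ rfl
  calc (glap G c).adjugate v w = (glap G c).adjugate v₀ w := hcol w v v₀
    _ = (glap G c).adjugate w v₀ := hsymadj v₀ w
    _ = (glap G c).adjugate v₀ v₀ := hcol v₀ w v₀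

lemma glap_adjugate_diag_eq_minor [Nonempty V] (G : SimpleGraph V) (c : Sym2 V → ℝ) (v₀ : V) :
    (glap G c).adjugate v₀ v₀
      = ((glap G c).submatrix (fun v : {v : V // v ≠ v₀} => v.1) (fun v => v.1)).det := by
  rw [Matrix.adjugate_apply]
  set M := (glap G c).updateRow v₀ (Pi.single v₀ 1) with hMdef
  let e : {v : V // v = v₀} ⊕ {v : V // ¬ v = v₀} ≃ V := Equiv.sumCompl (· = v₀)
  have hdet1 : M.det = (M.submatrix e e).det := (Matrix.det_submatrix_equiv_self e M).symm
  have hblocks : M.submatrix e e = Matrix.fromBlocks 1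
      0 (Matrix.of fun (i : {v : V // ¬ v = v₀}) (j : {v : V // v = v₀}) => glap G c i.1 j.1)
      ((glap G c).submatrix (fun v : {v : V // ¬ v = v₀} => v.1) (fun v => v.1)) := by
    ext i j
    cases i with
    | inl i =>
      cases j with
      | inl j =>
        show M (e (Sum.inl i)) (e (Sum.inl j)) = _
        have hi : e (Sum.inl i) = v₀ := i.2
        have hj : e (Sum.inl j) = v₀ := j.2
        rw [hi, hj, hMdef, Matrix.updateRow_self]
        have : (1 : Matrix {v : V // v = v₀} {v : V // v = v₀} ℝ) i j = 1 := by
          have hij : i = j := Subtype.ext (i.2.trans j.2.symm)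
          rw [hij, Matrix.one_apply_eq]
        rw [Matrix.fromBlocks_apply₁₁, this, Pi.single_eq_same]
      | inr j =>
        show M (e (Sum.inl i)) (e (Sum.inr j)) = _
        have hi : e (Sum.inl i) = v₀ := i.2
        rw [hi, hMdef, Matrix.updateRow_self]
        rw [show e (Sum.inr j) = j.1 from rfl]
        rw [Matrix.fromBlocks_apply₁₂, Matrix.zero_apply,
          Pi.single_eq_of_ne (fun h : j.1 = v₀ => j.2 h)]
    | inr i =>
      cases j with
      | inl j =>
        show M (e (Sum.inr i)) (e (Sum.inl j)) = _
        have hj : e (Sum.inl j) = v₀ := j.2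
        rw [hj, hMdef, show e (Sum.inr i) = i.1 from rfl,
          Matrix.updateRow_ne i.2, Matrix.fromBlocks_apply₂₁]
        rw [Matrix.of_apply, j.2]
      | inr j =>
        show M (e (Sum.inr i)) (e (Sum.inr j)) = _
        rw [hMdef, show e (Sum.inr i) = i.1 from rfl, show e (Sum.inr j) = j.1 from rfl,
          Matrix.updateRow_ne i.2, Matrix.fromBlocks_apply₂₂]
        rfl
  rw [hdet1, hblocks, Matrix.det_fromBlocks_zero₁₂, Matrix.det_one, one_mul]

end EigenAux

section SpectralAux
variable {V : Type*} [Fintype V] [DecidableEq V]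

lemma mt_trace_adjugate_eq (A : Matrix V V ℝ) (hH : A.IsHermitian) :
    (A.adjugate).trace = ∑ i, ∏ j ∈ Finset.univ.erase i, hH.eigenvalues j := by
  have hU1 : (star (hH.eigenvectorUnitary : Matrix V V ℝ))
      * (hH.eigenvectorUnitary : Matrix V V ℝ) = 1 :=
    Matrix.mem_unitaryGroup_iff'.mp (hH.eigenvectorUnitary).2
  have hspec := hH.spectral_theorem
  rw [RCLike.ofReal_real_eq_id, Function.id_comp, Unitary.conjStarAlgAut_apply] at hspec
  conv_lhs => rw [hspec]
  rw [Matrix.adjugate_mul_distrib, Matrix.adjugate_mul_distrib,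
    Matrix.trace_mul_comm, Matrix.mul_assoc, ← Matrix.adjugate_mul_distrib,
    hU1, Matrix.adjugate_one, Matrix.mul_one, Matrix.adjugate_diagonal,
    Matrix.trace_diagonal]

end SpectralAux

/-- Matrix-Tree theorem, eigenvalue form: the product of the nonzero eigenvalues
(with multiplicity) of the Laplacian of a connected network, divided by the number of
vertices, equals the weighted sum of spanning trees. -/
theorem matrix_tree_eigenvalue_form {V : Type*} [Fintype V] [DecidableEq V] [Nonempty V]
    (G : SimpleGraph V) (c : Sym2 V → ℝ)
    (hpos : ∀ e ∈ G.edgeSet, 0 < c e) (hconn : G.Connected)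
    (hH : (glap G c).IsHermitian) :
    (1 / (Fintype.card V : ℝ)) *
      ∏ i ∈ Finset.univ.filter (fun i => hH.eigenvalues i ≠ 0), hH.eigenvalues i
    = ∑ T ∈ Finset.univ.filter (fun T : Finset (Sym2 V) => IsSpanningTree G T),
        ∏ e ∈ T, c e := by
  classical
  have v₀ : V := Classical.arbitrary V
  have hkerspan : LinearMap.ker (Matrix.mulVecLin (glap G c))
      = Submodule.span ℝ {(fun _ => 1 : V → ℝ)} := by
    ext x
    rw [LinearMap.mem_ker, Submodule.mem_span_singleton]
    constructor
    · intro hx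
      refine ⟨x v₀, ?_⟩
      funext v
      have hx' : glap G c *ᵥ x = 0 := by rwa [Matrix.mulVecLin_apply] at hx
      have := glap_ker_const hpos hconn hx' v₀ v
      simp only [Pi.smul_apply, smul_eq_mul, mul_one]
      exact this
    · rintro ⟨a, rfl⟩
      rw [Matrix.mulVecLin_apply]
      have : (a • (fun _ => 1 : V → ℝ)) = (fun _ => a : V → ℝ) := by
        funext v; simp
      rw [this]
      exact glap_mulVec_const a
  have hone_ne : (fun _ => 1 : V → ℝ) ≠ 0 := by
    intro h
    exact one_ne_zero (congrFun h (Classical.arbitrary V))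
  have hrank : (glap G c).rank = Fintype.card V - 1 := by
    have h2 := LinearMap.finrank_range_add_finrank_ker (Matrix.mulVecLin (glap G c))
    have h3 : Module.finrank ℝ (V → ℝ) = Fintype.card V := Module.finrank_pi ℝ
    have h4 : Module.finrank ℝ (LinearMap.ker (Matrix.mulVecLin (glap G c))) = 1 := by
      rw [hkerspan]
      exact finrank_span_singleton hone_ne
    have h5 : (glap G c).rank = Module.finrank ℝ
        (LinearMap.range (Matrix.mulVecLin (glap G c))) := rfl
    omega
  have hcnz : (Finset.univ.filter (fun i => hH.eigenvalues i ≠ 0)).card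
      = Fintype.card V - 1 := by
    have h1 := hH.rank_eq_card_non_zero_eigs
    rw [hrank, Fintype.card_subtype] at h1
    omega
  have hcz : (Finset.univ.filter (fun i => hH.eigenvalues i = 0)).card = 1 := by
    have hsplit := Finset.card_filter_add_card_filter_not
      (s := (Finset.univ : Finset V)) (p := fun i => hH.eigenvalues i = 0)
    have hpos' : 0 < Fintype.card V := Fintype.card_pos
    have heqf : Finset.univ.filter (fun i => ¬ hH.eigenvalues i = 0)
        = Finset.univ.filter (fun i => hH.eigenvalues i ≠ 0) :=
      Finset.filter_congr (fun i _ => Iff.rfl)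
    rw [heqf] at hsplit
    rw [Finset.card_univ] at hsplit
    omega
  obtain ⟨i₀, hi₀⟩ := Finset.card_eq_one.mp hcz
  have hlam_i₀ : hH.eigenvalues i₀ = 0 := by
    have : i₀ ∈ Finset.univ.filter (fun i => hH.eigenvalues i = 0) :=
      hi₀ ▸ Finset.mem_singleton_self i₀
    exact (Finset.mem_filter.mp this).2
  have hlam_ne : ∀ j, j ≠ i₀ → hH.eigenvalues j ≠ 0 := by
    intro j hj hc
    have : j ∈ ({i₀} : Finset V) :=
      hi₀ ▸ Finset.mem_filter.mpr ⟨Finset.mem_univ j, hc⟩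
    exact hj (Finset.mem_singleton.mp this)
  have hsum : (∑ i, ∏ j ∈ Finset.univ.erase i, hH.eigenvalues j)
      = ∏ j ∈ Finset.univ.erase i₀, hH.eigenvalues j := by
    rw [Finset.sum_eq_single i₀]
    · intro i _ hi
      exact Finset.prod_eq_zero
        (Finset.mem_erase.mpr ⟨Ne.symm hi, Finset.mem_univ i₀⟩) hlam_i₀
    · intro h
      exact absurd (Finset.mem_univ i₀) h
  have herase : Finset.univ.erase i₀
      = Finset.univ.filter (fun i => hH.eigenvalues i ≠ 0) := by
    ext j
    simp only [Finset.mem_erase, Finset.mem_univ, and_true, Finset.mem_filter, true_and]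
    constructor
    · exact fun h => hlam_ne j h
    · intro h hc
      exact h (hc ▸ hlam_i₀)
  have htr1 : ((glap G c).adjugate).trace
      = ∏ i ∈ Finset.univ.filter (fun i => hH.eigenvalues i ≠ 0), hH.eigenvalues i := by
    rw [mt_trace_adjugate_eq (glap G c) hH, hsum, herase]
  have htr0 : ((glap G c).adjugate).trace = ∑ v, (glap G c).adjugate v v := rfl
  have htr2 : ((glap G c).adjugate).trace
      = (Fintype.card V : ℝ) * ((glap G c).adjugate v₀ v₀) := by
    rw [htr0, Finset.sum_congr rfl
      (fun v _ => glap_adjugate_const G c hpos hconn v₀ v v),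
      Finset.sum_const, Finset.card_univ, nsmul_eq_mul]
  have hminor := glap_adjugate_diag_eq_minor G c v₀
  have hmt := mt_det_minor G c v₀
  have hcard0 : (Fintype.card V : ℝ) ≠ 0 := by
    exact_mod_cast Fintype.card_pos.ne'
  rw [← htr1, htr2, hminor, hmt]
  field_simp
end

section
/- Rooted spanning forest theorem: For a network (G,c) and a nonempty subset B ⊆ V, the determinant of the Dirichlet Laplacian Δ_B (the submatrix of Δ whose rows and columns are indexed by V∖B) equals Σ_F ∏_{e∈F} c_e, where the sum is over all subsets F of edges such that (V,F) has no cycles and each connected component of (V,F) contains exactly one vertex of B. -/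
open Matrix BigOperators
open scoped Classical

/-- A spanning forest of `G` rooted at the vertex set `B`: a set of edges of `G` which is
acyclic and such that every connected component contains exactly one vertex of `B`. -/
def IsRootedSpanningForest {V : Type*} (G : SimpleGraph V) (B : Finset V)
    (F : Finset (Sym2 V)) : Prop :=
  ↑F ⊆ G.edgeSet ∧ (SimpleGraph.fromEdgeSet (↑F : Set (Sym2 V))).IsAcyclic ∧
    ∀ v : V, ∃! b : V, b ∈ B ∧ (SimpleGraph.fromEdgeSet (↑F : Set (Sym2 V))).Reachable v b

set_option linter.unusedSectionVars false
set_option linter.dupNamespace false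
set_option maxHeartbeats 1000000

namespace RSF
open SimpleGraph
variable {V : Type*} [Fintype V] [DecidableEq V]



noncomputable def gfun (B : Finset V) (f : {v : V // v ∉ B} → V) : V → V :=
  fun x => if hx : x ∉ B then f ⟨x, hx⟩ else x

variable {B : Finset V} {f : {v : V // v ∉ B} → V}

lemma gfun_mem {x : V} (hx : x ∈ B) : gfun B f x = x := by simp [gfun, hx]

lemma gfun_not_mem {x : V} (hx : x ∉ B) : gfun B f x = f ⟨x, hx⟩ := by simp [gfun, hx]

lemma iterate_gfun_mem {x : V} (hx : x ∈ B) (k : ℕ) : (gfun B f)^[k] x = x :=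
  Function.iterate_fixed (gfun_mem hx) k

lemma iterate_stable {x : V} {k : ℕ} (hk : (gfun B f)^[k] x ∈ B) {m : ℕ} (hm : k ≤ m) :
    (gfun B f)^[m] x = (gfun B f)^[k] x := by
  obtain ⟨j, rfl⟩ := Nat.exists_eq_add_of_le hm
  rw [Nat.add_comm, Function.iterate_add_apply]
  exact iterate_gfun_mem hk j

lemma iterate_mul_period {y : V} {p : ℕ} (hy : (gfun B f)^[p] y = y) (m : ℕ) :
    (gfun B f)^[m * p] y = y := by
  induction m with
  | zero => simp
  | succ m ih => rw [Nat.succ_mul, Function.iterate_add_apply, hy, ih]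

/-- Acyclicity of the assignment `f`: iterating `gfun` from any vertex reaches `B`. -/
def Acyc (B : Finset V) (f : {v : V // v ∉ B} → V) : Prop :=
  ∀ x : V, ∃ k, (gfun B f)^[k] x ∈ B

lemma no_return (hacyc : Acyc B f) {x : V} (hx : x ∉ B) {p : ℕ} (hp : 0 < p)
    (hxp : (gfun B f)^[p] x = x) : False := by
  obtain ⟨k, hk⟩ := hacyc x
  have h1 : (gfun B f)^[k * p] x = x := iterate_mul_period hxp k
  have h2 : (gfun B f)^[k * p] x = (gfun B f)^[k] x :=
    iterate_stable hk (Nat.le_mul_of_pos_right k hp)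
  rw [h1] at h2
  exact hx (h2 ▸ hk)

noncomputable def ht (hacyc : Acyc B f) (x : V) : ℕ := Nat.find (hacyc x)

lemma ht_spec (hacyc : Acyc B f) (x : V) : (gfun B f)^[ht hacyc x] x ∈ B :=
  Nat.find_spec (hacyc x)

lemma ht_min (hacyc : Acyc B f) {x : V} {m : ℕ} (hm : m < ht hacyc x) :
    (gfun B f)^[m] x ∉ B := Nat.find_min (hacyc x) hm

lemma ht_eq_zero (hacyc : Acyc B f) {x : V} (hx : x ∈ B) : ht hacyc x = 0 := by
  simp only [ht, Nat.find_eq_zero]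
  simpa using hx

lemma ht_pos (hacyc : Acyc B f) {x : V} (hx : x ∉ B) : 0 < ht hacyc x := by
  rcases Nat.eq_zero_or_pos (ht hacyc x) with h | h
  · exact absurd (by simpa [h] using ht_spec hacyc x) hx
  · exact h

lemma iterate_succ_pred (hacyc : Acyc B f) {x : V} (hx : x ∉ B) :
    (gfun B f)^[ht hacyc x - 1] (gfun B f x) = (gfun B f)^[ht hacyc x] x := by
  rw [← Function.iterate_succ_apply]
  congr 1
  have := ht_pos hacyc hx
  omega

lemma ht_gfun_lt (hacyc : Acyc B f) {x : V} (hx : x ∉ B) :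
    ht hacyc (gfun B f x) < ht hacyc x := by
  have h1 : (gfun B f)^[ht hacyc x - 1] (gfun B f x) ∈ B := by
    rw [iterate_succ_pred hacyc hx]; exact ht_spec hacyc x
  have h2 : ht hacyc (gfun B f x) ≤ ht hacyc x - 1 := Nat.find_le h1
  have := ht_pos hacyc hx
  omega

lemma iterate_inj (hacyc : Acyc B f) {x : V} {i j : ℕ} (hi : i ≤ ht hacyc x)
    (hj : j ≤ ht hacyc x) (h : (gfun B f)^[i] x = (gfun B f)^[j] x) : i = j := by
  by_contra hne
  wlog hij : i < j generalizing i j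
  · exact this hj hi h.symm (Ne.symm hne) (by omega)
  have hy : (gfun B f)^[j - i] ((gfun B f)^[i] x) = (gfun B f)^[i] x := by
    rw [← Function.iterate_add_apply]
    have : j - i + i = j := by omega
    rw [this, ← h]
  have hmem : (gfun B f)^[i] x ∉ B := ht_min hacyc (by omega)
  exact no_return hacyc hmem (by omega) hy


/-- The 0/±1 matrix whose row `v` is `e_v - e_{f v}` (restricted to columns outside `B`). -/
noncomputable def Nmat (B : Finset V) (f : {v : V // v ∉ B} → V) :
    Matrix {v : V // v ∉ B} {v : V // v ∉ B} ℝ :=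
  Matrix.of fun v w => (if w = v then (1 : ℝ) else 0) - (if (↑w : V) = f v then 1 else 0)

lemma det_Nmat_of_acyc (hacyc : Acyc B f) : (Nmat B f).det = 1 := by
  rw [← Matrix.det_transpose]
  have hbt : (Nmat B f)ᵀ.BlockTriangular (fun v : {v : V // v ∉ B} => ht hacyc (↑v : V)) := by
    intro i j hij
    simp only [Matrix.transpose_apply, Nmat, Matrix.of_apply]
    have hij' : ht hacyc (↑j : V) < ht hacyc (↑i : V) := hij
    have h1 : i ≠ j := by rintro rfl; exact lt_irrefl _ hij'
    have h2 : (↑i : V) ≠ f j := by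
      intro h
      have : f j = gfun B f (↑j : V) := (gfun_not_mem j.2).symm
      rw [this] at h
      have hlt := ht_gfun_lt hacyc j.2
      rw [← h] at hlt
      omega
    simp [h1, h2]
  rw [hbt.det]
  apply Finset.prod_eq_one
  intro a _
  have hblock : (Nmat B f)ᵀ.toSquareBlock (fun v : {v : V // v ∉ B} => ht hacyc (↑v : V)) a = 1 := by
    ext i j
    simp only [Matrix.toSquareBlock_def, Matrix.transpose_apply, Nmat, Matrix.of_apply]
    have h2 : (↑(↑i : {v : V // v ∉ B}) : V) ≠ f (↑j : {v : V // v ∉ B}) := by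
      intro h
      have hj := (j : {v : V // v ∉ B}).2
      have : f (↑j : {v : V // v ∉ B}) = gfun B f ((↑(↑j : {v : V // v ∉ B})) : V) :=
        (gfun_not_mem hj).symm
      rw [this] at h
      have hlt := ht_gfun_lt hacyc hj
      rw [← h] at hlt
      have hi := i.2
      have hjj := j.2
      rw [hi, hjj] at hlt
      exact lt_irrefl _ hlt
    by_cases hij : i = j
    · subst hij
      simp [h2, Matrix.one_apply]
    · have : (↑i : {v : V // v ∉ B}) ≠ (↑j : {v : V // v ∉ B}) := by
        intro h; exact hij (Subtype.ext h)
      simp [this, h2, Matrix.one_apply, hij]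
  rw [hblock, Matrix.det_one]

lemma det_Nmat_of_not_acyc (hacyc : ¬ Acyc B f) : (Nmat B f).det = 0 := by
  rw [← Matrix.exists_vecMul_eq_zero_iff]
  simp only [Acyc, not_forall, not_exists] at hacyc
  obtain ⟨x, hx⟩ := hacyc
  -- find a repetition in the orbit of x
  obtain ⟨i, j, hne, hij⟩ := Finite.exists_ne_map_eq_of_infinite (fun k : ℕ => (gfun B f)^[k] x)
  wlog hlt : i < j generalizing i j
  · exact this j i (Ne.symm hne) hij.symm (by omega)
  set g := gfun B f with hg
  set y := g^[i] x with hy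
  have hper : g^[j - i] y = y := by
    rw [hy, ← Function.iterate_add_apply]
    have : j - i + i = j := by omega
    rw [this, ← hij]
  set p := j - i with hp
  have hppos : 0 < p := by omega
  set O : Finset V := (Finset.range p).image (fun m => g^[m] y) with hO
  have hyO : y ∈ O := by
    rw [hO]
    exact Finset.mem_image.2 ⟨0, Finset.mem_range.2 hppos, rfl⟩
  have hOB : ∀ z ∈ O, z ∉ B := by
    intro z hz
    rw [hO] at hz
    obtain ⟨m, _, rfl⟩ := Finset.mem_image.1 hz
    rw [hy, ← Function.iterate_add_apply]
    exact hx _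
  have hgO : ∀ z ∈ O, g z ∈ O := by
    intro z hz
    rw [hO] at hz ⊢
    obtain ⟨m, hm, rfl⟩ := Finset.mem_image.1 hz
    rw [Finset.mem_range] at hm
    rcases Nat.lt_or_ge (m+1) p with h | h
    · exact Finset.mem_image.2 ⟨m+1, Finset.mem_range.2 h,
        Function.iterate_succ_apply' g m y⟩
    · have hmp : m + 1 = p := by omega
      refine Finset.mem_image.2 ⟨0, Finset.mem_range.2 hppos, ?_⟩
      calc g^[0] y = y := Function.iterate_zero_apply g y
        _ = g^[p] y := hper.symm
        _ = g^[m+1] y := by rw [hmp]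
        _ = g (g^[m] y) := Function.iterate_succ_apply' g m y
  have hsurj : O ⊆ O.image g := by
    intro z hz
    rw [hO] at hz
    obtain ⟨m, hm, rfl⟩ := Finset.mem_image.1 hz
    rw [Finset.mem_range] at hm
    rcases Nat.eq_zero_or_pos m with rfl | hmpos
    · refine Finset.mem_image.2 ⟨g^[p-1] y, ?_, ?_⟩
      · rw [hO]; exact Finset.mem_image.2 ⟨p-1, Finset.mem_range.2 (by omega), rfl⟩
      · calc g (g^[p-1] y) = g^[p-1+1] y := (Function.iterate_succ_apply' g (p-1) y).symm
          _ = g^[p] y := by congr 1; omega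
          _ = y := hper
          _ = g^[0] y := (Function.iterate_zero_apply g y).symm
    · refine Finset.mem_image.2 ⟨g^[m-1] y, ?_, ?_⟩
      · rw [hO]; exact Finset.mem_image.2 ⟨m-1, Finset.mem_range.2 (by omega), rfl⟩
      · calc g (g^[m-1] y) = g^[m-1+1] y := (Function.iterate_succ_apply' g (m-1) y).symm
          _ = g^[m] y := by congr 1; omega
  have himg : O.image g = O := by
    apply Finset.eq_of_subset_of_card_le
    · intro z hz
      obtain ⟨w, hw, rfl⟩ := Finset.mem_image.1 hz
      exact hgO w hw
    · exact le_trans (Finset.card_le_card hsurj) le_rfl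
  have hinjO : Set.InjOn g ↑O := by
    apply Finset.injOn_of_card_image_eq
    rw [himg]
  -- the vector supported on O
  refine ⟨(fun v : {v : V // v ∉ B} => if (↑v : V) ∈ O then (1:ℝ) else 0), ?_, ?_⟩
  · intro h0
    have := congrFun h0 ⟨y, hOB y hyO⟩
    simp [hyO] at this
  · funext u
    simp only [Matrix.vecMul, dotProduct, Nmat, Matrix.of_apply]
    have key : ∀ v : {v : V // v ∉ B},
        (if (↑v : V) ∈ O then (1:ℝ) else 0) *
          ((if u = v then (1:ℝ) else 0) - (if (↑u : V) = f v then 1 else 0))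
        = (if (↑v : V) ∈ O then (1:ℝ) else 0) * (if u = v then (1:ℝ) else 0)
          - (if (↑v : V) ∈ O then (1:ℝ) else 0) * (if (↑u : V) = g (↑v : V) then 1 else 0) := by
      intro v
      rw [mul_sub]
      congr 2
      rw [hg, gfun_not_mem v.2]
    simp only [key]
    rw [Finset.sum_sub_distrib]
    have h1 : (∑ v : {v : V // v ∉ B}, (if (↑v : V) ∈ O then (1:ℝ) else 0) *
        (if u = v then (1:ℝ) else 0)) = if (↑u : V) ∈ O then 1 else 0 := by
      rw [Finset.sum_eq_single u]
      · simp
      · intro v _ hvu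
        simp [Ne.symm hvu]
      · simp
    have h2 : (∑ v : {v : V // v ∉ B}, (if (↑v : V) ∈ O then (1:ℝ) else 0) *
        (if (↑u : V) = g (↑v : V) then (1:ℝ) else 0)) = if (↑u : V) ∈ O then 1 else 0 := by
      by_cases hu : (↑u : V) ∈ O
      · obtain ⟨w, hwO, hwu⟩ : ∃ w ∈ O, g w = ↑u := by
          obtain ⟨w, hw, hwu⟩ := Finset.mem_image.1 (hsurj hu)
          exact ⟨w, hw, hwu⟩
        have hwB : w ∉ B := hOB w hwO
        rw [Finset.sum_eq_single ⟨w, hwB⟩]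
        · simp [hwO, hwu, hu]
        · intro v _ hv
          by_cases hvO : (↑v : V) ∈ O
          · by_cases hgv : (↑u : V) = g (↑v : V)
            · exfalso
              apply hv
              have : (↑v : V) = w := hinjO hvO hwO (by rw [← hgv, hwu])
              exact Subtype.ext this
            · simp [hgv]
          · simp [hvO]
        · simp
      · rw [Finset.sum_eq_zero, if_neg hu]
        intro v _
        by_cases hvO : (↑v : V) ∈ O
        · have : g (↑v : V) ∈ O := hgO _ hvO
          have hne2 : (↑u : V) ≠ g (↑v : V) := fun h => hu (h ▸ this)
          simp [hne2]
        · simp [hvO]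
    rw [h1, h2, sub_self]
    rfl

lemma getVert_copy' {G : SimpleGraph V} {u v u' v' : V} (p : G.Walk u v) (hu : u = u')
    (hv : v = v') (n : ℕ) : (p.copy hu hv).getVert n = p.getVert n := by
  subst hu; subst hv; rw [SimpleGraph.Walk.copy_rfl_rfl]

/-- The edge set associated to an assignment `f`. -/
noncomputable def Fedges (B : Finset V) (f : {v : V // v ∉ B} → V) : Finset (Sym2 V) :=
  Finset.univ.image (fun v : {v : V // v ∉ B} => s((↑v : V), f v))

lemma edge_map_inj (hacyc : Acyc B f) :
    Function.Injective (fun v : {v : V // v ∉ B} => s((↑v : V), f v)) := by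
  intro v w h
  simp only [Sym2.eq_iff] at h
  rcases h with ⟨h1, _⟩ | ⟨h1, h2⟩
  · exact Subtype.ext h1
  · exfalso
    have hgv : gfun B f (↑v : V) = ↑w := by rw [gfun_not_mem v.2]; exact h2
    have hgw : gfun B f (↑w : V) = ↑v := by rw [gfun_not_mem w.2]; exact h1.symm
    have hper : (gfun B f)^[2] (↑v : V) = ↑v := by
      show gfun B f (gfun B f ((gfun B f)^[0] (↑v:V))) = ↑v
      rw [Function.iterate_zero_apply, hgv, hgw]
    exact no_return hacyc v.2 (by norm_num) hper

/-- The graph generated by the edges of an assignment. -/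
noncomputable abbrev Hgr (B : Finset V) (f : {v : V // v ∉ B} → V) : SimpleGraph V :=
  SimpleGraph.fromEdgeSet (↑(Fedges B f) : Set (Sym2 V))

lemma Hgr_adj_form {x y : V} (h : (Hgr B f).Adj x y) :
    (x ∉ B ∧ y = gfun B f x) ∨ (y ∉ B ∧ x = gfun B f y) := by
  rw [SimpleGraph.fromEdgeSet_adj] at h
  obtain ⟨hmem, hne⟩ := h
  rw [Finset.mem_coe, Fedges, Finset.mem_image] at hmem
  obtain ⟨v, -, hv⟩ := hmem
  rw [Sym2.eq_iff] at hv
  rcases hv with ⟨h1, h2⟩ | ⟨h1, h2⟩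
  · left
    refine ⟨h1 ▸ v.2, ?_⟩
    subst h1
    rw [gfun_not_mem v.2]
    exact h2.symm
  · right
    refine ⟨h1 ▸ v.2, ?_⟩
    subst h1
    rw [gfun_not_mem v.2]
    exact h2.symm

lemma Hgr_adj_g (hne : ∀ v : {v : V // v ∉ B}, (↑v : V) ≠ f v) {x : V} (hx : x ∉ B) :
    (Hgr B f).Adj x (gfun B f x) := by
  rw [SimpleGraph.fromEdgeSet_adj]
  constructor
  · rw [Finset.mem_coe, Fedges, Finset.mem_image]
    exact ⟨⟨x, hx⟩, Finset.mem_univ _, by rw [gfun_not_mem hx]⟩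
  · rw [gfun_not_mem hx]
    exact hne ⟨x, hx⟩

/-- The root of `x`: the element of `B` obtained by iterating. -/
noncomputable def rootv (hacyc : Acyc B f) (x : V) : V := (gfun B f)^[ht hacyc x] x

lemma rootv_mem (hacyc : Acyc B f) (x : V) : rootv hacyc x ∈ B := ht_spec hacyc x

lemma rootv_of_mem (hacyc : Acyc B f) {x : V} (hx : x ∈ B) : rootv hacyc x = x := by
  rw [rootv, ht_eq_zero hacyc hx, Function.iterate_zero_apply]

lemma rootv_gfun (hacyc : Acyc B f) {x : V} (hx : x ∉ B) :
    rootv hacyc (gfun B f x) = rootv hacyc x := by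
  have h1 : (gfun B f)^[ht hacyc x - 1] (gfun B f x) ∈ B := by
    rw [iterate_succ_pred hacyc hx]; exact ht_spec hacyc x
  have h2 : ht hacyc (gfun B f x) ≤ ht hacyc x - 1 := Nat.find_le h1
  calc rootv hacyc (gfun B f x)
      = (gfun B f)^[ht hacyc x - 1] (gfun B f x) :=
        (iterate_stable (ht_spec hacyc (gfun B f x)) h2).symm
    _ = (gfun B f)^[ht hacyc x] x := iterate_succ_pred hacyc hx
    _ = rootv hacyc x := rfl

/-- The canonical walk from `x` along `gfun`. -/
noncomputable def walkAux (hne : ∀ v : {v : V // v ∉ B}, (↑v : V) ≠ f v) :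
    (k : ℕ) → (x : V) → (∀ m, m < k → (gfun B f)^[m] x ∉ B) →
      (Hgr B f).Walk x ((gfun B f)^[k] x)
  | 0, x, _ => SimpleGraph.Walk.nil.copy rfl (by simp)
  | (k+1), x, h =>
      (SimpleGraph.Walk.cons (Hgr_adj_g hne (by simpa using h 0 (Nat.succ_pos k)))
        (walkAux hne k (gfun B f x)
          (fun m hm => by
            rw [← Function.iterate_succ_apply]
            exact h (m+1) (by omega)))).copy rfl
        (Function.iterate_succ_apply (gfun B f) k x).symm

lemma walkAux_support (hne : ∀ v : {v : V // v ∉ B}, (↑v : V) ≠ f v) :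
    ∀ (k : ℕ) (x : V) (h : ∀ m, m < k → (gfun B f)^[m] x ∉ B),
      (walkAux hne k x h).support = (List.range (k+1)).map (fun m => (gfun B f)^[m] x)
  | 0, x, h => by
      simp [walkAux]
  | (k+1), x, h => by
      rw [walkAux, SimpleGraph.Walk.support_copy, SimpleGraph.Walk.support_cons,
        walkAux_support hne k (gfun B f x) _]
      conv_rhs => rw [List.range_succ_eq_map, List.map_cons, List.map_map]
      congr 1

lemma walkAux_getVert (hne : ∀ v : {v : V // v ∉ B}, (↑v : V) ≠ f v) (k : ℕ) (x : V)
    (h : ∀ m, m < k → (gfun B f)^[m] x ∉ B) (hk : 0 < k) :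
    (walkAux hne k x h).getVert 1 = gfun B f x := by
  match k, hk with
  | (k+1), _ =>
    rw [walkAux, getVert_copy', SimpleGraph.Walk.getVert_cons_succ, SimpleGraph.Walk.getVert_zero]

/-- The canonical walk from `x` to its root. -/
noncomputable def gwalk (hacyc : Acyc B f) (hne : ∀ v : {v : V // v ∉ B}, (↑v : V) ≠ f v)
    (x : V) : (Hgr B f).Walk x (rootv hacyc x) :=
  walkAux hne (ht hacyc x) x (fun _ hm => ht_min hacyc hm)

lemma gwalk_isPath (hacyc : Acyc B f) (hne : ∀ v : {v : V // v ∉ B}, (↑v : V) ≠ f v) (x : V) :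
    (gwalk hacyc hne x).IsPath := by
  rw [SimpleGraph.Walk.isPath_def]
  show (walkAux hne (ht hacyc x) x (fun _ hm => ht_min hacyc hm)).support.Nodup
  rw [walkAux_support]
  apply List.Nodup.map_on
  · intro i hi j hj hij
    rw [List.mem_range] at hi hj
    exact iterate_inj hacyc (by omega) (by omega) hij
  · exact List.nodup_range

lemma gwalk_getVert (hacyc : Acyc B f) (hne : ∀ v : {v : V // v ∉ B}, (↑v : V) ≠ f v)
    {x : V} (hx : x ∉ B) : (gwalk hacyc hne x).getVert 1 = gfun B f x :=
  walkAux_getVert hne _ x _ (ht_pos hacyc hx)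

lemma reachable_rootv (hacyc : Acyc B f) (hne : ∀ v : {v : V // v ∉ B}, (↑v : V) ≠ f v)
    (x : V) : (Hgr B f).Reachable x (rootv hacyc x) := ⟨gwalk hacyc hne x⟩

lemma rootv_adj_eq (hacyc : Acyc B f) {x y : V} (h : (Hgr B f).Adj x y) :
    rootv hacyc x = rootv hacyc y := by
  rcases Hgr_adj_form h with ⟨hx, rfl⟩ | ⟨hy, rfl⟩
  · exact (rootv_gfun hacyc hx).symm
  · exact rootv_gfun hacyc hy

lemma rootv_reachable_eq (hacyc : Acyc B f) {x y : V} (h : (Hgr B f).Reachable x y) :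
    rootv hacyc x = rootv hacyc y := by
  obtain ⟨p⟩ := h
  induction p with
  | nil => rfl
  | cons hadj p ih => exact (rootv_adj_eq hacyc hadj).trans ih

lemma rootv_unique (hacyc : Acyc B f) (hne : ∀ v : {v : V // v ∉ B}, (↑v : V) ≠ f v)
    {x b : V} (hb : b ∈ B) (h : (Hgr B f).Reachable x b) : b = rootv hacyc x := by
  rw [rootv_reachable_eq hacyc h]
  exact (rootv_of_mem hacyc hb).symm


lemma not_reachable_del (hacyc : Acyc B f) {x : V} (hx : x ∉ B) :
    ¬ ((Hgr B f) \ SimpleGraph.fromEdgeSet {s(x, gfun B f x)}).Reachable x (gfun B f x) := by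
  intro hreach
  have step : ∀ z y : V, (∃ k, (gfun B f)^[k] z = x) →
      ((Hgr B f) \ SimpleGraph.fromEdgeSet {s(x, gfun B f x)}).Adj z y →
      ∃ k, (gfun B f)^[k] y = x := by
    intro z y hz hadj
    rw [SimpleGraph.sdiff_adj] at hadj
    obtain ⟨hH, hno⟩ := hadj
    have hzy : z ≠ y := hH.ne
    have hse : s(z, y) ≠ s(x, gfun B f x) := by
      intro hs
      exact hno ((SimpleGraph.fromEdgeSet_adj _).2 ⟨by rw [hs]; exact rfl, hzy⟩)
    rcases Hgr_adj_form hH with ⟨hzB, rfl⟩ | ⟨hyB, rfl⟩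
    · obtain ⟨k, hk⟩ := hz
      match k, hk with
      | 0, hk =>
        exfalso
        apply hse
        rw [Function.iterate_zero_apply] at hk
        rw [hk]
      | (j+1), hk =>
        exact ⟨j, by rw [← Function.iterate_succ_apply]; exact hk⟩
    · obtain ⟨k, hk⟩ := hz
      exact ⟨k+1, by rw [Function.iterate_succ_apply]; exact hk⟩
  have main : ∀ (z w : V), (∃ k, (gfun B f)^[k] z = x) →
      ((Hgr B f) \ SimpleGraph.fromEdgeSet {s(x, gfun B f x)}).Walk z w →
      ∃ k, (gfun B f)^[k] w = x := by
    intro z w hz p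
    induction p with
    | nil => exact hz
    | cons h p ih => exact ih (step _ _ hz h)
  obtain ⟨p⟩ := hreach
  obtain ⟨k, hk⟩ := main x (gfun B f x) ⟨0, rfl⟩ p
  exact no_return hacyc hx (Nat.succ_pos k)
    (by rw [Function.iterate_succ_apply]; exact hk)

lemma Hgr_isAcyclic (hacyc : Acyc B f)
    (hne : ∀ v : {v : V // v ∉ B}, (↑v : V) ≠ f v) : (Hgr B f).IsAcyclic := by
  rw [SimpleGraph.isAcyclic_iff_forall_adj_isBridge]
  intro v w hadj
  rw [SimpleGraph.isBridge_iff]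
  rcases Hgr_adj_form hadj with ⟨hv, rfl⟩ | ⟨hw, rfl⟩
  · exact not_reachable_del hacyc hv
  · intro hr
    apply not_reachable_del hacyc hw
    rw [Sym2.eq_swap] at hr
    exact hr.symm


section Rev
variable (H : SimpleGraph V)

/-- The root of a vertex in a graph where every vertex reaches a unique element of `B`. -/
noncomputable def rt (hroot : ∀ x : V, ∃! b : V, b ∈ B ∧ H.Reachable x b) (x : V) : V :=
  (hroot x).choose

variable (hroot : ∀ x : V, ∃! b : V, b ∈ B ∧ H.Reachable x b)

lemma rt_mem (x : V) : rt H hroot x ∈ B := (hroot x).choose_spec.1.1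

lemma rt_reach (x : V) : H.Reachable x (rt H hroot x) := (hroot x).choose_spec.1.2

lemma rt_unique {x b : V} (hb : b ∈ B) (hr : H.Reachable x b) : b = rt H hroot x :=
  (hroot x).choose_spec.2 b ⟨hb, hr⟩

lemma rt_of_mem {x : V} (hx : x ∈ B) : rt H hroot x = x :=
  (rt_unique H hroot hx (Reachable.refl x)).symm

/-- A chosen path from `x` to its root. -/
noncomputable def wpath (x : V) : H.Path x (rt H hroot x) :=
  (Classical.choice (rt_reach H hroot x)).toPath

/-- The next vertex on the way to the root. -/
noncomputable def nxt (x : V) : V := (wpath H hroot x).1.getVert 1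

lemma wpath_eq (hHacyc : H.IsAcyclic) {x : V} (p : H.Walk x (rt H hroot x)) (hp : p.IsPath) :
    (wpath H hroot x).1 = p := by
  have := hHacyc.path_unique (wpath H hroot x) ⟨p, hp⟩
  exact congrArg Subtype.val this

lemma x_ne_rt {x : V} (hx : x ∉ B) : x ≠ rt H hroot x :=
  fun h => hx (h ▸ rt_mem H hroot x)

lemma wpath_not_nil {x : V} (hx : x ∉ B) : ¬ (wpath H hroot x).1.Nil :=
  SimpleGraph.Walk.not_nil_of_ne (x_ne_rt H hroot hx)

lemma nxt_adj {x : V} (hx : x ∉ B) : H.Adj x (nxt H hroot x) :=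
  SimpleGraph.Walk.adj_snd (wpath_not_nil H hroot hx)

lemma rt_nxt {x : V} (hx : x ∉ B) : rt H hroot (nxt H hroot x) = rt H hroot x := by
  have q : H.Walk (nxt H hroot x) (rt H hroot x) :=
    (wpath H hroot x).1.tail
  exact (rt_unique H hroot (rt_mem H hroot x) ⟨q⟩).symm

lemma wpath_nxt_length (hHacyc : H.IsAcyclic) {x : V} (hx : x ∉ B) :
    (wpath H hroot (nxt H hroot x)).1.length + 1
      = (wpath H hroot x).1.length := by
  have hq : (wpath H hroot x).1.tail.IsPath :=
    (wpath H hroot x).2.tail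
  have heq := wpath_eq H hroot hHacyc
    ((wpath H hroot x).1.tail.copy rfl (rt_nxt H hroot hx).symm)
    ((SimpleGraph.Walk.isPath_copy _ _ _).2 hq)
  have hl := (congrArg SimpleGraph.Walk.length heq).trans (SimpleGraph.Walk.length_copy _ _ _)
  unfold nxt
  rw [hl]
  exact SimpleGraph.Walk.length_tail_add_one (wpath_not_nil H hroot hx)

lemma gfun_nxt {x : V} (hx : x ∉ B) :
    gfun B (fun v : {v : V // v ∉ B} => nxt H hroot ↑v) x = nxt H hroot x :=
  gfun_not_mem hx

lemma acyc_nxt (hHacyc : H.IsAcyclic) :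
    Acyc B (fun v : {v : V // v ∉ B} => nxt H hroot ↑v) := by
  suffices h : ∀ (n : ℕ) (x : V), (wpath H hroot x).1.length ≤ n →
      ∃ k, (gfun B (fun v : {v : V // v ∉ B} => nxt H hroot ↑v))^[k] x ∈ B by
    exact fun x => h _ x le_rfl
  intro n
  induction n with
  | zero =>
    intro x hlen
    by_cases hx : x ∈ B
    · exact ⟨0, hx⟩
    · exfalso
      have := (SimpleGraph.Walk.not_nil_iff_lt_length).1 (wpath_not_nil H hroot hx)
      omega
  | succ n ih =>
    intro x hlen
    by_cases hx : x ∈ B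
    · exact ⟨0, hx⟩
    · obtain ⟨k, hk⟩ := ih (nxt H hroot x)
        (by have := wpath_nxt_length H hroot hHacyc hx; omega)
      exact ⟨k+1, by rw [Function.iterate_succ_apply, gfun_nxt H hroot hx]; exact hk⟩

end Rev

lemma nxt_congr {B : Finset V} {H₁ H₂ : SimpleGraph V} (h : H₁ = H₂)
    (hr₁ : ∀ x : V, ∃! b : V, b ∈ B ∧ H₁.Reachable x b)
    (hr₂ : ∀ x : V, ∃! b : V, b ∈ B ∧ H₂.Reachable x b) (x : V) :
    nxt H₁ hr₁ x = nxt H₂ hr₂ x := by subst h; rfl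


lemma f_eq_nxt (hacyc : Acyc B f) (hne : ∀ v : {v : V // v ∉ B}, (↑v : V) ≠ f v)
    (hroot : ∀ x : V, ∃! b : V, b ∈ B ∧ (Hgr B f).Reachable x b) (v : {v : V // v ∉ B}) :
    f v = nxt (Hgr B f) hroot ↑v := by
  have hrr : rootv hacyc (↑v : V) = rt (Hgr B f) hroot ↑v :=
    rt_unique (Hgr B f) hroot (rootv_mem hacyc ↑v) (reachable_rootv hacyc hne ↑v)
  have hpath := wpath_eq (Hgr B f) hroot (Hgr_isAcyclic hacyc hne)
    ((gwalk hacyc hne ↑v).copy rfl hrr)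
    ((SimpleGraph.Walk.isPath_copy _ _ _).2 (gwalk_isPath hacyc hne ↑v))
  have h2 : nxt (Hgr B f) hroot ↑v = ((gwalk hacyc hne (↑v : V)).copy rfl hrr).getVert 1 := by
    rw [nxt, hpath]
  rw [h2, getVert_copy', gwalk_getVert hacyc hne v.2, gfun_not_mem v.2]

lemma nxt_G_adj {G : SimpleGraph V} {F : Finset (Sym2 V)} (hFsub : ↑F ⊆ G.edgeSet)
    (hroot : ∀ x : V, ∃! b : V, b ∈ B ∧ (SimpleGraph.fromEdgeSet (↑F : Set (Sym2 V))).Reachable x b)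
    (v : {v : V // v ∉ B}) :
    G.Adj ↑v (nxt (SimpleGraph.fromEdgeSet (↑F : Set (Sym2 V))) hroot ↑v) := by
  have h := nxt_adj (SimpleGraph.fromEdgeSet (↑F : Set (Sym2 V))) hroot v.2
  rw [SimpleGraph.fromEdgeSet_adj] at h
  exact (SimpleGraph.mem_edgeSet G).1 (hFsub h.1)

lemma nxt_Fedges {F : Finset (Sym2 V)} {H : SimpleGraph V}
    (hadjF : ∀ x y : V, H.Adj x y ↔ s(x, y) ∈ F ∧ x ≠ y)
    (hroot : ∀ x : V, ∃! b : V, b ∈ B ∧ H.Reachable x b)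
    (hHacyc : H.IsAcyclic)
    (hndiag : ∀ e ∈ F, ¬ e.IsDiag) :
    Fedges B (fun v : {v : V // v ∉ B} => nxt H hroot ↑v) = F := by
  apply Finset.Subset.antisymm
  · intro e he
    rw [Fedges, Finset.mem_image] at he
    obtain ⟨v, -, rfl⟩ := he
    have hadj : H.Adj ↑v (nxt H hroot ↑v) := nxt_adj H hroot v.2
    exact ((hadjF _ _).1 hadj).1
  · intro e he
    induction e using Sym2.ind with
    | _ x y =>
    have hxy : x ≠ y := fun h => hndiag _ he (by rw [h]; exact Sym2.mk_isDiag_iff.2 rfl)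
    have hH : H.Adj x y := (hadjF x y).2 ⟨he, hxy⟩
    have hrt : rt H hroot x = rt H hroot y :=
      rt_unique H hroot (rt_mem H hroot x) (hH.symm.reachable.trans (rt_reach H hroot x))
    by_cases hy : y ∈ (wpath H hroot x).1.support
    · have hxB : x ∉ B := by
        intro hxB
        have h1 : rt H hroot x = x := rt_of_mem H hroot hxB
        have hnil : (wpath H hroot x).1.copy rfl h1 = SimpleGraph.Walk.nil :=
          (SimpleGraph.Walk.isPath_iff_eq_nil).1
            ((SimpleGraph.Walk.isPath_copy _ _ _).2 (wpath H hroot x).2)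
        have hsup : (wpath H hroot x).1.support = [x] := by
          have := SimpleGraph.Walk.support_copy (wpath H hroot x).1 rfl h1
          rw [hnil] at this
          simpa using this.symm
        rw [hsup] at hy
        have hyx : y = x := by simpa using hy
        exact hxy hyx.symm
      have hq : ((wpath H hroot x).1.dropUntil y hy).IsPath :=
        (wpath H hroot x).2.dropUntil hy
      have hxnot : x ∉ ((wpath H hroot x).1.dropUntil y hy).support := by
        intro hxs
        have hnodup : (wpath H hroot x).1.support.Nodup :=
          (SimpleGraph.Walk.isPath_def _).1 (wpath H hroot x).2
        have hsplit : (wpath H hroot x).1.support =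
            ((wpath H hroot x).1.takeUntil y hy).support ++
              ((wpath H hroot x).1.dropUntil y hy).support.tail := by
          conv_lhs => rw [← SimpleGraph.Walk.take_spec (wpath H hroot x).1 hy]
          rw [SimpleGraph.Walk.support_append]
        have hx1 : x ∈ ((wpath H hroot x).1.takeUntil y hy).support :=
          SimpleGraph.Walk.start_mem_support _
        have hx2 : x ∈ ((wpath H hroot x).1.dropUntil y hy).support.tail := by
          have hcons := SimpleGraph.Walk.support_eq_cons ((wpath H hroot x).1.dropUntil y hy)
          rw [hcons] at hxs
          rcases List.mem_cons.1 hxs with h | h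
          · exact absurd h hxy
          · exact h
        rw [hsplit] at hnodup
        exact ((List.nodup_append.1 hnodup).2.2) x hx1 x hx2 rfl
      have hW : (SimpleGraph.Walk.cons hH ((wpath H hroot x).1.dropUntil y hy)).IsPath :=
        (SimpleGraph.Walk.cons_isPath_iff _ _).2 ⟨hq, hxnot⟩
      have heq := wpath_eq H hroot hHacyc
        (SimpleGraph.Walk.cons hH ((wpath H hroot x).1.dropUntil y hy)) hW
      have hnxt : nxt H hroot x = y := by
        rw [nxt, heq, SimpleGraph.Walk.getVert_cons_succ, SimpleGraph.Walk.getVert_zero]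
      rw [Fedges, Finset.mem_image]
      refine ⟨⟨x, hxB⟩, Finset.mem_univ _, ?_⟩
      show s(x, nxt H hroot x) = s(x, y)
      rw [hnxt]
    · have hyB : y ∉ B := by
        intro hyB
        have h1 : rt H hroot y = y := rt_of_mem H hroot hyB
        have hend := SimpleGraph.Walk.end_mem_support (wpath H hroot x).1
        have h2 : rt H hroot x = y := hrt.trans h1
        exact hy (h2 ▸ hend)
      have hW : (SimpleGraph.Walk.cons hH.symm (wpath H hroot x).1).IsPath :=
        (SimpleGraph.Walk.cons_isPath_iff _ _).2 ⟨(wpath H hroot x).2, hy⟩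
      have heq := wpath_eq H hroot hHacyc
        ((SimpleGraph.Walk.cons hH.symm (wpath H hroot x).1).copy rfl hrt)
        ((SimpleGraph.Walk.isPath_copy _ _ _).2 hW)
      have hnxt : nxt H hroot y = x := by
        rw [nxt, heq, getVert_copy', SimpleGraph.Walk.getVert_cons_succ,
          SimpleGraph.Walk.getVert_zero]
      rw [Fedges, Finset.mem_image]
      refine ⟨⟨y, hyB⟩, Finset.mem_univ _, ?_⟩
      show s(y, nxt H hroot y) = s(x, y)
      rw [hnxt]
      exact Sym2.eq_swap

variable {B : Finset V} {f : {v : V // v ∉ B} → V}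
lemma isForest_Fedges {G : SimpleGraph V} (hacyc : Acyc B f)
    (hadj : ∀ v : {v : V // v ∉ B}, G.Adj ↑v (f v)) :
    IsRootedSpanningForest G B (Fedges B f) := by
  have hne : ∀ v : {v : V // v ∉ B}, (↑v : V) ≠ f v := fun v => (hadj v).ne
  refine ⟨?_, Hgr_isAcyclic hacyc hne, ?_⟩
  · intro e he
    rw [Finset.mem_coe, Fedges, Finset.mem_image] at he
    obtain ⟨v, -, rfl⟩ := he
    exact (SimpleGraph.mem_edgeSet G).2 (hadj v)
  · intro x
    exact ⟨rootv hacyc x, ⟨rootv_mem hacyc x, reachable_rootv hacyc hne x⟩,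
      fun b hb => rootv_unique hacyc hne hb.1 hb.2⟩

lemma root_prop (hacyc : Acyc B f) (hne : ∀ v : {v : V // v ∉ B}, (↑v : V) ≠ f v) :
    ∀ x : V, ∃! b : V, b ∈ B ∧ (Hgr B f).Reachable x b :=
  fun x => ⟨rootv hacyc x, ⟨rootv_mem hacyc x, reachable_rootv hacyc hne x⟩,
    fun b hb => rootv_unique hacyc hne hb.1 hb.2⟩

end RSF

/-- Rooted spanning forest theorem: the determinant of the Dirichlet Laplacian with
boundary `B` equals the weighted sum over spanning forests each of whose components
contains exactly one vertex of `B`. -/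
theorem dirichlet_det_eq_rooted_forests {V : Type*} [Fintype V] [DecidableEq V] [Nonempty V]
    (G : SimpleGraph V) (c : Sym2 V → ℝ)
    (hpos : ∀ e ∈ G.edgeSet, 0 < c e) (hconn : G.Connected)
    (B : Finset V) (hB : B.Nonempty) :
    ((glap G c).submatrix (fun i : {v : V // v ∉ B} => (i : V))
        (fun j : {v : V // v ∉ B} => (j : V))).det
    = ∑ F ∈ Finset.univ.filter (fun F : Finset (Sym2 V) => IsRootedSpanningForest G B F),
        ∏ e ∈ F, c e := by
  classical
  set M : Matrix {v : V // v ∉ B} {v : V // v ∉ B} ℝ :=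
    (glap G c).submatrix (fun i : {v : V // v ∉ B} => (i : V))
      (fun j : {v : V // v ∉ B} => (j : V)) with hMdef
  -- row decomposition
  set T : {v : V // v ∉ B} → V → ({v : V // v ∉ B} → ℝ) := fun v u w =>
    (if G.Adj (↑v : V) u then c s((↑v : V), u) else 0) *
      ((if w = v then (1:ℝ) else 0) - (if (↑w : V) = u then 1 else 0)) with hTdef
  have hM : ∀ v w, M v w = ∑ u : V, T v u w := by
    intro v w
    have hsub : (∑ u : V, T v u w) =
        (∑ u : V, (if G.Adj (↑v : V) u then c s((↑v : V), u) else 0) *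
          (if w = v then (1:ℝ) else 0))
        - (if G.Adj (↑v : V) (↑w : V) then c s((↑v : V), (↑w : V)) else 0) := by
      rw [hTdef]
      simp only [mul_sub]
      rw [Finset.sum_sub_distrib]
      congr 1
      rw [Finset.sum_congr rfl (fun u _ => by rw [mul_ite, mul_one, mul_zero]),
        Finset.sum_ite_eq]
      simp
    rw [hsub]
    by_cases hvw : w = v
    · subst hvw
      rw [hMdef]
      simp only [Matrix.submatrix_apply, glap, Matrix.of_apply, if_pos rfl]
      simp [G.irrefl]
    · have hvw' : (↑w : V) ≠ (↑v : V) := fun h => hvw (Subtype.ext h)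
      simp only [if_neg hvw, mul_zero, Finset.sum_const_zero, zero_sub]
      rw [hMdef]
      simp only [Matrix.submatrix_apply, glap, Matrix.of_apply, if_neg hvw'.symm]
      by_cases hadj : G.Adj (↑v : V) (↑w : V)
      · simp [hadj]
      · simp [hadj]
  -- expand determinant by multilinearity
  have hfun : (M : {v : V // v ∉ B} → {v : V // v ∉ B} → ℝ)
      = fun v => ∑ u : V, T v u := by
    funext v w
    rw [hM v w]
    simp [Finset.sum_apply]
  have hdet1 : M.det = ∑ r : {v : V // v ∉ B} → V,
      (∏ v : {v : V // v ∉ B}, (if G.Adj (↑v : V) (r v) then c s((↑v : V), r v) else 0))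
        * (RSF.Nmat B r).det := by
    have h0 : M.det = (Matrix.detRowAlternating :
        ({v : V // v ∉ B} → ℝ) [⋀^{v : V // v ∉ B}]→ₗ[ℝ] ℝ) M := rfl
    rw [h0]
    have h1 : ((Matrix.detRowAlternating :
        ({v : V // v ∉ B} → ℝ) [⋀^{v : V // v ∉ B}]→ₗ[ℝ] ℝ)) M
        = (Matrix.detRowAlternating :
        ({v : V // v ∉ B} → ℝ) [⋀^{v : V // v ∉ B}]→ₗ[ℝ] ℝ).toMultilinearMap
          (fun v => ∑ u : V, T v u) := by
      rw [← hfun]; rfl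
    rw [h1, MultilinearMap.map_sum]
    apply Finset.sum_congr rfl
    intro r _
    have h2 : (fun v => T v (r v)) = fun v : {v : V // v ∉ B} =>
        (if G.Adj (↑v : V) (r v) then c s((↑v : V), (r v)) else 0) •
          (fun w : {v : V // v ∉ B} =>
            (if w = v then (1:ℝ) else 0) - (if (↑w : V) = r v then 1 else 0)) := by
      funext v w
      simp [hTdef, smul_eq_mul]
    rw [h2, MultilinearMap.map_smul_univ]
    rw [smul_eq_mul]
    rfl
  rw [hdet1]
  -- termwise evaluation
  have hterm : ∀ r : {v : V // v ∉ B} → V,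
      (∏ v : {v : V // v ∉ B}, (if G.Adj (↑v : V) (r v) then c s((↑v : V), r v) else 0))
        * (RSF.Nmat B r).det
      = if (RSF.Acyc B r ∧ ∀ v : {v : V // v ∉ B}, G.Adj (↑v : V) (r v))
          then ∏ v : {v : V // v ∉ B}, c s((↑v : V), r v) else 0 := by
    intro r
    by_cases hadj : ∀ v : {v : V // v ∉ B}, G.Adj (↑v : V) (r v)
    · by_cases hac : RSF.Acyc B r
      · rw [RSF.det_Nmat_of_acyc hac, mul_one, if_pos ⟨hac, hadj⟩]
        exact Finset.prod_congr rfl fun v _ => if_pos (hadj v)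
      · rw [RSF.det_Nmat_of_not_acyc hac, mul_zero, if_neg (fun h => hac h.1)]
    · rw [if_neg (fun h => hadj h.2)]
      obtain ⟨v, hv⟩ := not_forall.1 hadj
      rw [Finset.prod_eq_zero (Finset.mem_univ v) (by rw [if_neg hv] : (if G.Adj (↑v : V) (r v) then c s((↑v : V), r v) else 0) = 0), zero_mul]
  rw [Finset.sum_congr rfl (fun r _ => hterm r), Finset.sum_ite, Finset.sum_const_zero, add_zero]
  -- bijection with rooted spanning forests
  refine Finset.sum_bij (fun r _ => RSF.Fedges B r) ?_ ?_ ?_ ?_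
  · intro r hr
    rw [Finset.mem_filter] at hr ⊢
    exact ⟨Finset.mem_univ _, RSF.isForest_Fedges hr.2.1 hr.2.2⟩
  · intro r₁ hr₁ r₂ hr₂ heq
    rw [Finset.mem_filter] at hr₁ hr₂
    obtain ⟨-, hac₁, hadj₁⟩ := hr₁
    obtain ⟨-, hac₂, hadj₂⟩ := hr₂
    have hne₁ : ∀ v : {v : V // v ∉ B}, (↑v : V) ≠ r₁ v := fun v => (hadj₁ v).ne
    have hne₂ : ∀ v : {v : V // v ∉ B}, (↑v : V) ≠ r₂ v := fun v => (hadj₂ v).ne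
    have hroot₁ := RSF.root_prop hac₁ hne₁
    have hroot₂ := RSF.root_prop hac₂ hne₂
    funext v
    rw [RSF.f_eq_nxt hac₁ hne₁ hroot₁ v, RSF.f_eq_nxt hac₂ hne₂ hroot₂ v]
    exact RSF.nxt_congr
      (congrArg (fun E : Finset (Sym2 V) => SimpleGraph.fromEdgeSet (↑E : Set (Sym2 V))) heq)
      hroot₁ hroot₂ ↑v
  · intro F hF
    rw [Finset.mem_filter] at hF
    obtain ⟨-, hsub, hFacyc, hFroot⟩ := hF
    have hndiag : ∀ e ∈ F, ¬ e.IsDiag := fun e he =>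
      (SimpleGraph.not_isDiag_of_mem_edgeSet G (hsub (Finset.mem_coe.2 he)))
    refine ⟨fun v => RSF.nxt (SimpleGraph.fromEdgeSet (↑F : Set (Sym2 V))) hFroot ↑v, ?_, ?_⟩
    · rw [Finset.mem_filter]
      exact ⟨Finset.mem_univ _, RSF.acyc_nxt _ hFroot hFacyc,
        fun v => RSF.nxt_G_adj hsub hFroot v⟩
    · exact RSF.nxt_Fedges (fun x y => by rw [SimpleGraph.fromEdgeSet_adj, Finset.mem_coe])
        hFroot hFacyc hndiag
  · intro r hr
    rw [Finset.mem_filter] at hr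
    exact (Finset.prod_image (fun v _ w _ h => RSF.edge_map_inj hr.2.1 h)).symm
end

section
/- Maximum principle: Let (G,c) be a network, B ⊆ V a nonempty set of boundary vertices, and f : V → ℝ a function with (Δf)(v) = 0 for every v ∈ V∖B. Then the maximum of f over V is attained at a vertex of B, i.e. max_{v∈V} f(v) = max_{v∈B} f(v). -/
open Matrix BigOperators

/-- The Laplacian of a network given by a symmetric conductance function `c`
(zero on the diagonal and on non-edges): `Δ v v' = -c v v'` off the diagonal
and `Δ v v = ∑_{v'} c v v'` on the diagonal. -/
noncomputable def netLap {V : Type*} [Fintype V] [DecidableEq V] (c : V → V → ℝ) :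
    Matrix V V ℝ :=
  Matrix.of fun v w => if v = w then ∑ u, c v u else -c v w

/-- Maximum principle: a function harmonic off a nonempty boundary set `B` attains its
maximum on `B`. -/
theorem maximum_principle {V : Type*} [Fintype V] [DecidableEq V] [Nonempty V]
    (c : V → V → ℝ)
    (hsymm : ∀ v w, c v w = c w v)
    (hnonneg : ∀ v w, 0 ≤ c v w)
    (hdiag : ∀ v, c v v = 0)
    (hconn : (SimpleGraph.fromRel fun v w : V => c v w ≠ 0).Connected)
    (B : Finset V) (hB : B.Nonempty)
    (f : V → ℝ) (hf : ∀ v, v ∉ B → ((netLap c) *ᵥ f) v = 0) :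
    Finset.univ.sup' Finset.univ_nonempty f = B.sup' hB f := by
  set G := SimpleGraph.fromRel fun v w : V => c v w ≠ 0 with hG
  set M := Finset.univ.sup' Finset.univ_nonempty f with hM
  have hle : ∀ w : V, f w ≤ M := fun w => Finset.le_sup' f (Finset.mem_univ w)
  -- key step: if v is harmonic and attains the max, so do its neighbors
  have key : ∀ v, v ∉ B → ∀ w, c v w ≠ 0 → f v = M → f w = M := by
    intro v hv w hcw hfv
    have hΔ := hf v hv
    have expand : (netLap c *ᵥ f) v
        = ∑ u, (if v = u then ∑ x, c v x else -c v u) * f u := by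
      simp [netLap, Matrix.mulVec, dotProduct]
    have hterm : ∀ u, (if v = u then ∑ x, c v x else -c v u) * f u
        = (if v = u then (∑ x, c v x) * f u else 0) + (-(c v u * f u)) := by
      intro u
      by_cases h : v = u
      · subst h; simp [hdiag v]
      · simp [h]
    have hsum0 : ∑ u, c v u * (f v - f u) = 0 := by
      have : (netLap c *ᵥ f) v = ∑ u, c v u * (f v - f u) := by
        rw [expand]
        simp only [hterm]
        rw [Finset.sum_add_distrib, Finset.sum_ite_eq Finset.univ v
          (fun u => (∑ x, c v x) * f u)]
        simp only [Finset.mem_univ, if_true, mul_sub]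
        rw [Finset.sum_sub_distrib, ← Finset.sum_mul, Finset.sum_neg_distrib]
        ring
      rw [← this, hΔ]
    have hnn : ∀ u ∈ Finset.univ, (0:ℝ) ≤ c v u * (f v - f u) := by
      intro u _
      apply mul_nonneg (hnonneg v u)
      rw [hfv]
      linarith [hle u]
    have := (Finset.sum_eq_zero_iff_of_nonneg hnn).1 hsum0 w (Finset.mem_univ w)
    rcases mul_eq_zero.1 this with h | h
    · exact absurd h hcw
    · rw [← hfv]; linarith
  apply le_antisymm
  · obtain ⟨v0, -, hv0⟩ := Finset.exists_mem_eq_sup' Finset.univ_nonempty f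
    obtain ⟨b, hb⟩ := hB
    obtain ⟨p⟩ := hconn.preconnected v0 b
    have main : ∀ (v u : V) (p : G.Walk v u), u ∈ B → f v = M → ∃ w ∈ B, f w = M := by
      intro v u p
      induction p with
      | nil => exact fun hu h => ⟨_, hu, h⟩
      | @cons x y _ hadj _ ih =>
        intro hu hx
        by_cases hxB : x ∈ B
        · exact ⟨x, hxB, hx⟩
        · have hcxy : c x y ≠ 0 := by
            rcases hadj.2 with h | h
            · exact h
            · rw [hsymm x y]; exact h
          exact ih hu (key x hxB y hcxy hx)
    obtain ⟨w, hwB, hwM⟩ := main v0 b p hb hv0.symm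
    rw [← hwM]
    exact Finset.le_sup' f hwB
  · exact Finset.sup'_le _ _ fun b _ => Finset.le_sup' f (Finset.mem_univ b)
end

section
/- The Dirichlet-to-Neumann matrix Λ = A − B C⁻¹ Bᵗ of a network is symmetric and positive semidefinite, and its kernel consists exactly of the constant vectors on N: Λu = 0 if and only if u is constant. -/
open Matrix BigOperators

/-- The response matrix `L = -A + B C⁻¹ Bᵀ` of a network with node set `N`, where
`Δ = [[A,B],[Bᵀ,C]]` is the block decomposition of the Laplacian with respect to the
nodes `N` and the internal vertices `V ∖ N`. -/
noncomputable def respMat {V : Type*} [Fintype V] [DecidableEq V]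
    (c : V → V → ℝ) (N : Finset V) : Matrix {v : V // v ∈ N} {v : V // v ∈ N} ℝ :=
  -(netLap c).submatrix (Subtype.val : {v : V // v ∈ N} → V)
      (Subtype.val : {v : V // v ∈ N} → V)
    + (netLap c).submatrix (Subtype.val : {v : V // v ∈ N} → V)
        (Subtype.val : {v : V // v ∉ N} → V)
      * ((netLap c).submatrix (Subtype.val : {v : V // v ∉ N} → V)
          (Subtype.val : {v : V // v ∉ N} → V))⁻¹
      * ((netLap c).submatrix (Subtype.val : {v : V // v ∈ N} → V)
          (Subtype.val : {v : V // v ∉ N} → V))ᵀ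


section aux
variable {V : Type*} [Fintype V] [DecidableEq V] (c : V → V → ℝ)

lemma netLap_isSymm (hsymm : ∀ v w, c v w = c w v) : (netLap c).IsSymm := by
  apply Matrix.IsSymm.ext
  intro i j
  by_cases h : i = j
  · subst h; rfl
  · simp [netLap, h, Ne.symm h, hsymm i j]

lemma netLap_mulVec (hdiag : ∀ v, c v v = 0) (x : V → ℝ) (v : V) :
    (netLap c *ᵥ x) v = ∑ w, c v w * (x v - x w) := by
  have key : ∀ w, (netLap c) v w * x w
      = (if v = w then (∑ u, c v u) * x v else 0) + (-(c v w * x w)) := by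
    intro w
    by_cases h : v = w
    · subst h; simp [netLap, hdiag v]
    · simp [netLap, h]
  simp only [mulVec, dotProduct, key, Finset.sum_add_distrib, Finset.sum_ite_eq,
    Finset.mem_univ, if_true, Finset.sum_neg_distrib, mul_sub, Finset.sum_sub_distrib,
    ← Finset.sum_mul]
  ring

lemma netLap_quad (hsymm : ∀ v w, c v w = c w v) (hdiag : ∀ v, c v v = 0) (x : V → ℝ) :
    2 * (x ⬝ᵥ (netLap c *ᵥ x)) = ∑ v, ∑ w, c v w * (x v - x w) ^ 2 := by
  have h1 : x ⬝ᵥ (netLap c *ᵥ x) = ∑ v, ∑ w, c v w * (x v * (x v - x w)) := by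
    simp only [dotProduct, netLap_mulVec c hdiag x, Finset.mul_sum]
    exact Finset.sum_congr rfl fun v _ => Finset.sum_congr rfl fun w _ => by ring
  have h2 : ∑ v, ∑ w, c v w * (x v * (x v - x w))
      = ∑ v, ∑ w, c v w * (x w * (x w - x v)) := by
    rw [Finset.sum_comm]
    exact Finset.sum_congr rfl fun v _ => Finset.sum_congr rfl fun w _ => by rw [hsymm]
  rw [two_mul, h1]
  nth_rewrite 2 [h2]
  rw [← Finset.sum_add_distrib]
  refine Finset.sum_congr rfl fun v _ => ?_
  rw [← Finset.sum_add_distrib]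
  exact Finset.sum_congr rfl fun w _ => by ring

lemma netLap_mulVec_const (hdiag : ∀ v, c v v = 0) (k : ℝ) :
    netLap c *ᵥ (fun _ => k) = 0 := by
  funext v
  simp [netLap_mulVec c hdiag]

lemma netLap_psd (hsymm : ∀ v w, c v w = c w v) (hnonneg : ∀ v w, 0 ≤ c v w)
    (hdiag : ∀ v, c v v = 0) : (netLap c).PosSemidef := by
  refine Matrix.PosSemidef.of_dotProduct_mulVec_nonneg ?_ ?_
  · rw [Matrix.IsHermitian, Matrix.conjTranspose_eq_transpose_of_trivial]
    exact (netLap_isSymm c hsymm).eq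
  · intro x
    have h2 : 0 ≤ 2 * (star x ⬝ᵥ (netLap c *ᵥ x)) := by
      rw [show (star x : V → ℝ) = x from funext fun _ => star_trivial _,
        netLap_quad c hsymm hdiag x]
      exact Finset.sum_nonneg fun v _ => Finset.sum_nonneg fun w _ =>
        mul_nonneg (hnonneg v w) (sq_nonneg _)
    linarith

lemma netLap_ker (hsymm : ∀ v w, c v w = c w v) (hnonneg : ∀ v w, 0 ≤ c v w)
    (hdiag : ∀ v, c v v = 0)
    (hconn : (SimpleGraph.fromRel fun v w : V => c v w ≠ 0).Connected)
    (x : V → ℝ) (hx : netLap c *ᵥ x = 0) : ∀ v w, x v = x w := by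
  have hq : ∑ v, ∑ w, c v w * (x v - x w) ^ 2 = 0 := by
    rw [← netLap_quad c hsymm hdiag x, hx]
    simp
  have hterm : ∀ v w, c v w * (x v - x w) ^ 2 = 0 := by
    intro v w
    have h1 := (Finset.sum_eq_zero_iff_of_nonneg (fun v _ =>
      Finset.sum_nonneg fun w _ => mul_nonneg (hnonneg v w) (sq_nonneg _))).mp hq v
      (Finset.mem_univ v)
    exact (Finset.sum_eq_zero_iff_of_nonneg (fun w _ =>
      mul_nonneg (hnonneg v w) (sq_nonneg _))).mp h1 w (Finset.mem_univ w)
  have hadj : ∀ v w, (SimpleGraph.fromRel fun v w : V => c v w ≠ 0).Adj v w → x v = x w := by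
    intro v w h
    rcases h.2 with h' | h'
    · have := hterm v w
      have h2 : (x v - x w) ^ 2 = 0 := by
        rcases mul_eq_zero.mp this with h3 | h3
        · exact absurd h3 h'
        · exact h3
      have := pow_eq_zero_iff (n := 2) (by norm_num) |>.mp h2
      linarith
    · have := hterm w v
      have h2 : (x w - x v) ^ 2 = 0 := by
        rcases mul_eq_zero.mp this with h3 | h3
        · exact absurd h3 h'
        · exact h3
      have := pow_eq_zero_iff (n := 2) (by norm_num) |>.mp h2
      linarith
  intro v w
  obtain ⟨p⟩ := hconn.preconnected v w
  induction p with
  | nil => rfl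
  | cons h p ih => exact (hadj _ _ h).trans ih

end aux

/-- The Dirichlet-to-Neumann matrix `Λ = A - B C⁻¹ Bᵀ` of a network is symmetric and
positive semidefinite, and its kernel consists exactly of the constant vectors. -/
theorem dirichlet_to_neumann_psd {V : Type*} [Fintype V] [DecidableEq V]
    (c : V → V → ℝ)
    (hsymm : ∀ v w, c v w = c w v)
    (hnonneg : ∀ v w, 0 ≤ c v w)
    (hdiag : ∀ v, c v v = 0)
    (hconn : (SimpleGraph.fromRel fun v w : V => c v w ≠ 0).Connected)
    (N : Finset V) (hN : N.Nonempty) :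
    (-(respMat c N)).IsSymm ∧ (-(respMat c N)).PosSemidef ∧
      ∀ u : {v : V // v ∈ N} → ℝ,
        (-(respMat c N)) *ᵥ u = 0 ↔ ∃ k : ℝ, ∀ i, u i = k := by
  classical
  set Δ := netLap c with hΔ
  set A := Δ.submatrix (Subtype.val : {v : V // v ∈ N} → V)
      (Subtype.val : {v : V // v ∈ N} → V) with hA
  set B := Δ.submatrix (Subtype.val : {v : V // v ∈ N} → V)
      (Subtype.val : {v : V // v ∉ N} → V) with hB
  set C := Δ.submatrix (Subtype.val : {v : V // v ∉ N} → V)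
      (Subtype.val : {v : V // v ∉ N} → V) with hC
  set e : {v : V // v ∈ N} ⊕ {v : V // v ∉ N} ≃ V := Equiv.sumCompl (· ∈ N) with he
  have hΔsymm := netLap_isSymm c hsymm
  have hΔpsd := netLap_psd c hsymm hnonneg hdiag
  have hblock : Δ.submatrix ⇑e ⇑e = fromBlocks A B Bᵀ C := by
    ext i j
    cases i with
    | inl a =>
      cases j with
      | inl b => rfl
      | inr b => rfl
    | inr a =>
      cases j with
      | inl b => exact hΔsymm.apply _ _
      | inr b => rfl
  -- C is positive definite
  have hCpd : C.PosDef := by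
    refine Matrix.PosDef.of_dotProduct_mulVec_pos (hΔpsd.submatrix _).1 fun x hx => ?_
    have hstar : (star x : _ → ℝ) = x := funext fun _ => star_trivial _
    set y : {v : V // v ∈ N} ⊕ {v : V // v ∉ N} → ℝ := Sum.elim 0 x with hy
    have hdot : x ⬝ᵥ (C *ᵥ x) = (y ∘ ⇑e.symm) ⬝ᵥ (Δ *ᵥ (y ∘ ⇑e.symm)) := by
      have h1 : (Δ.submatrix ⇑e ⇑e) *ᵥ y = (Δ *ᵥ (y ∘ ⇑e.symm)) ∘ ⇑e :=
        Matrix.submatrix_mulVec_equiv Δ y ⇑e e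
      have h2 : y ⬝ᵥ ((Δ.submatrix ⇑e ⇑e) *ᵥ y) = x ⬝ᵥ (C *ᵥ x) := by
        rw [hblock, Matrix.fromBlocks_mulVec, hy, sumElim_dotProduct_sumElim]
        simp
      rw [← h2, h1]
      simp only [dotProduct]
      exact Fintype.sum_equiv e _ _ fun s => by simp
    have hnn : 0 ≤ x ⬝ᵥ (C *ᵥ x) := by
      rw [hdot]
      have := hΔpsd.dotProduct_mulVec_nonneg (y ∘ ⇑e.symm)
      rwa [show (star (y ∘ ⇑e.symm) : V → ℝ) = y ∘ ⇑e.symm from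
        funext fun _ => star_trivial _] at this
    rw [hstar]
    rcases lt_or_eq_of_le hnn with h | h
    · exact h
    exfalso
    have hz : Δ *ᵥ (y ∘ ⇑e.symm) = 0 := by
      have := (hΔpsd.dotProduct_mulVec_zero_iff (y ∘ ⇑e.symm)).mp ?_
      · exact this
      · rw [show (star (y ∘ ⇑e.symm) : V → ℝ) = y ∘ ⇑e.symm from
          funext fun _ => star_trivial _, ← hdot, ← h]
    have hconst := netLap_ker c hsymm hnonneg hdiag hconn _ hz
    obtain ⟨n₀, hn₀⟩ := hN
    apply hx
    funext i
    have h1 : (y ∘ ⇑e.symm) i.val = x i := by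
      simp [hy, he, Equiv.sumCompl_symm_apply_of_neg i.prop]
    have h2 : (y ∘ ⇑e.symm) n₀ = 0 := by
      simp [hy, he, Equiv.sumCompl_symm_apply_of_pos hn₀]
    have := hconst i.val n₀
    rw [h1, h2] at this
    simpa using this
  haveI : Invertible C := hCpd.isUnit.invertible
  have hfb : (fromBlocks A B Bᴴ C).PosSemidef := by
    rw [show (Bᴴ : Matrix _ _ ℝ) = Bᵀ from Matrix.conjTranspose_eq_transpose_of_trivial B,
      ← hblock]
    exact hΔpsd.submatrix ⇑e
  have hΛpsd' : (A - B * C⁻¹ * Bᴴ).PosSemidef :=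
    (Matrix.PosDef.fromBlocks₂₂ A B hCpd).mp hfb
  have hΛeq : -(respMat c N) = A - B * C⁻¹ * Bᴴ := by
    rw [show (Bᴴ : Matrix _ _ ℝ) = Bᵀ from Matrix.conjTranspose_eq_transpose_of_trivial B]
    show -(-A + B * C⁻¹ * Bᵀ) = A - B * C⁻¹ * Bᵀ
    abel
  have hΛpsd : (-(respMat c N)).PosSemidef := hΛeq ▸ hΛpsd'
  refine ⟨?_, hΛpsd, ?_⟩
  · rw [Matrix.IsSymm, ← Matrix.conjTranspose_eq_transpose_of_trivial]
    exact hΛpsd.1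
  intro u
  have hCC : C * C⁻¹ = 1 := Matrix.mul_inv_of_invertible C
  have hCC' : C⁻¹ * C = 1 := Matrix.inv_mul_of_invertible C
  constructor
  · intro hu
    set h : {v : V // v ∉ N} → ℝ := -(C⁻¹ *ᵥ (Bᵀ *ᵥ u)) with hh
    set ut : V → ℝ := Sum.elim u h ∘ ⇑e.symm with hut
    have hmv : (Δ.submatrix ⇑e ⇑e) *ᵥ Sum.elim u h = (Δ *ᵥ ut) ∘ ⇑e :=
      Matrix.submatrix_mulVec_equiv Δ _ ⇑e e
    have hblk : (Δ.submatrix ⇑e ⇑e) *ᵥ Sum.elim u h = 0 := by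
      rw [hblock, Matrix.fromBlocks_mulVec]
      simp only [Sum.elim_comp_inl, Sum.elim_comp_inr]
      have hint : Bᵀ *ᵥ u + C *ᵥ h = 0 := by
        rw [hh, Matrix.mulVec_neg, Matrix.mulVec_mulVec, hCC, Matrix.one_mulVec]
        exact add_neg_cancel _
      have hbd : A *ᵥ u + B *ᵥ h = 0 := by
        have heq : A *ᵥ u + B *ᵥ h = (A - B * C⁻¹ * Bᴴ) *ᵥ u := by
          rw [show (Bᴴ : Matrix _ _ ℝ) = Bᵀ from
            Matrix.conjTranspose_eq_transpose_of_trivial B, hh,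
            Matrix.mulVec_neg, Matrix.mulVec_mulVec, Matrix.mulVec_mulVec,
            Matrix.sub_mulVec, ← sub_eq_add_neg]
        rw [heq, ← hΛeq, hu]
      rw [hint, hbd]
      funext s
      cases s <;> rfl
    have hz : Δ *ᵥ ut = 0 := by
      funext v
      have := congrFun (hmv.symm.trans hblk) (e.symm v)
      simpa [Equiv.apply_symm_apply] using this
    have hconst := netLap_ker c hsymm hnonneg hdiag hconn _ hz
    obtain ⟨n₀, hn₀⟩ := hN
    refine ⟨u ⟨n₀, hn₀⟩, fun i => ?_⟩
    have h1 : ut i.val = u i := by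
      simp [hut, he, Equiv.sumCompl_symm_apply_of_pos i.prop]
    have h2 : ut n₀ = u ⟨n₀, hn₀⟩ := by
      simp [hut, he, Equiv.sumCompl_symm_apply_of_pos hn₀]
    rw [← h1, ← h2]
    exact hconst i.val n₀
  · rintro ⟨k, hk⟩
    have hu : u = fun _ => k := funext hk
    subst hu
    -- constant extension
    have hconstmv : (Δ.submatrix ⇑e ⇑e) *ᵥ Sum.elim (fun _ => k) (fun _ => k) = 0 := by
      have : (Sum.elim (fun _ => k) (fun _ => k) : _ → ℝ) = (fun _ => k) ∘ ⇑e := by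
        funext s; cases s <;> rfl
      rw [this, Matrix.submatrix_mulVec_equiv]
      have : ((fun (_ : V) => k) ∘ ⇑e ∘ ⇑e.symm) = fun _ => k := by
        funext v; rfl
      rw [show ((fun (_ : V) => k) ∘ ⇑e) ∘ ⇑e.symm = fun (_ : V) => k from funext fun _ => rfl,
        netLap_mulVec_const c hdiag k]
      rfl
    rw [hblock, Matrix.fromBlocks_mulVec] at hconstmv
    simp only [Sum.elim_comp_inl, Sum.elim_comp_inr] at hconstmv
    have hbd : A *ᵥ (fun _ => k) + B *ᵥ (fun _ => k) = 0 := by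
      have := congrFun hconstmv
      funext i
      exact this (Sum.inl i)
    have hint : Bᵀ *ᵥ (fun _ => k) + C *ᵥ (fun _ => k) = 0 := by
      funext i
      exact congrFun hconstmv (Sum.inr i)
    have hsolve : C⁻¹ *ᵥ (Bᵀ *ᵥ (fun _ => k)) = -(fun _ => k) := by
      have h1 : Bᵀ *ᵥ (fun _ => k) = -(C *ᵥ (fun _ => k)) := by
        rw [eq_neg_iff_add_eq_zero]; exact hint
      rw [h1, Matrix.mulVec_neg, Matrix.mulVec_mulVec, hCC']
      simp
    rw [hΛeq, show (Bᴴ : Matrix _ _ ℝ) = Bᵀ from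
      Matrix.conjTranspose_eq_transpose_of_trivial B, Matrix.sub_mulVec,
      Matrix.mul_assoc, ← Matrix.mulVec_mulVec, ← Matrix.mulVec_mulVec, hsolve]
    rw [Matrix.mulVec_neg, sub_neg_eq_add]
    exact hbd
end

section
/- Sign pattern of the response matrix: Suppose the node set N has at least two elements. Then the response matrix L = −A + B C⁻¹ Bᵗ of a network satisfies L_{ij} ≥ 0 for all distinct nodes i ≠ j, and L_{ii} < 0 for every node i. -/
set_option linter.unusedSectionVars false
set_option maxHeartbeats 1000000

open Matrix BigOperators

section NetworkHelpers
variable {V : Type*} [Fintype V] [DecidableEq V]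

lemma mulVec_netLap (c : V → V → ℝ) (hdiag : ∀ v, c v v = 0) (x : V → ℝ) (v : V) :
    (netLap c *ᵥ x) v = (∑ u, c v u) * x v - ∑ w, c v w * x w := by
  simp only [mulVec, dotProduct, netLap, of_apply]
  have key : ∀ w, (if v = w then ∑ u, c v u else -c v w) * x w
      = (if v = w then ((∑ u, c v u) + c v w) * x w else 0) + -(c v w * x w) := by
    intro w
    by_cases h : v = w
    · subst h; simp; ring
    · simp [h]
  simp only [key]
  rw [Finset.sum_add_distrib, Finset.sum_ite_eq, if_pos (Finset.mem_univ v), hdiag]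
  simp [sub_eq_add_neg, Finset.sum_neg_distrib]

lemma quad_form (c : V → V → ℝ) (hsymm : ∀ v w, c v w = c w v)
    (hdiag : ∀ v, c v v = 0) (x : V → ℝ) :
    2 * (x ⬝ᵥ netLap c *ᵥ x) = ∑ v, ∑ w, c v w * (x v - x w) ^ 2 := by
  have h1 : x ⬝ᵥ netLap c *ᵥ x
      = (∑ v, ∑ w, c v w * x v ^ 2) - ∑ v, ∑ w, c v w * (x v * x w) := by
    simp only [dotProduct, mulVec_netLap c hdiag, mul_sub, Finset.mul_sum,
      Finset.sum_mul, Finset.sum_sub_distrib]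
    congr 1 <;>
      exact Finset.sum_congr rfl fun v _ => Finset.sum_congr rfl fun w _ => by ring
  have h2 : ∑ v, ∑ w, c v w * x w ^ 2 = ∑ v, ∑ w, c v w * x v ^ 2 := by
    rw [Finset.sum_comm]
    exact Finset.sum_congr rfl fun v _ => Finset.sum_congr rfl fun w _ => by rw [hsymm]
  have h3 : ∑ v, ∑ w, c v w * (x v - x w) ^ 2
      = (∑ v, ∑ w, c v w * x v ^ 2) - 2 * (∑ v, ∑ w, c v w * (x v * x w))
        + ∑ v, ∑ w, c v w * x w ^ 2 := by
    have : ∑ v, ∑ w, c v w * (x v - x w) ^ 2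
        = ∑ v, ∑ w, (c v w * x v ^ 2 - 2 * (c v w * (x v * x w)) + c v w * x w ^ 2) :=
      Finset.sum_congr rfl fun v _ => Finset.sum_congr rfl fun w _ => by ring
    rw [this]
    simp only [Finset.sum_add_distrib, Finset.sum_sub_distrib, ← Finset.mul_sum]
  rw [h1, h3, h2]
  ring

lemma netLap_transpose (c : V → V → ℝ) (hsymm : ∀ v w, c v w = c w v) :
    (netLap c)ᵀ = netLap c := by
  ext v w
  simp only [netLap, transpose_apply, of_apply]
  by_cases h : v = w
  · subst h; simp
  · rw [if_neg h, if_neg (Ne.symm h), hsymm]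

lemma sum_split (N : Finset V) (f : V → ℝ) :
    ∑ v, f v = (∑ i : {v // v ∈ N}, f i) + ∑ i : {v // v ∉ N}, f i := by
  rw [← Equiv.sum_comp (Equiv.sumCompl (· ∈ N)) f, Fintype.sum_sum_type]
  rfl

lemma quad_nonneg (c : V → V → ℝ) (hsymm : ∀ v w, c v w = c w v)
    (hnonneg : ∀ v w, 0 ≤ c v w) (hdiag : ∀ v, c v v = 0) (x : V → ℝ) :
    0 ≤ x ⬝ᵥ netLap c *ᵥ x := by
  have h := quad_form c hsymm hdiag x
  nlinarith [Finset.sum_nonneg fun v (_ : v ∈ (Finset.univ : Finset V)) =>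
    Finset.sum_nonneg fun w (_ : w ∈ (Finset.univ : Finset V)) =>
      mul_nonneg (hnonneg v w) (sq_nonneg (x v - x w))]

lemma reach_prop {r : V → V → Prop} (hconn : (SimpleGraph.fromRel r).Connected)
    (P : V → Prop) (h : ∀ v w, r v w → P v → P w) (hr : ∀ v w, r v w → r w v)
    {u v : V} (hu : P u) : P v := by
  obtain ⟨p⟩ := hconn.preconnected u v
  induction p with
  | nil => exact hu
  | cons hadj p ih =>
    rw [SimpleGraph.fromRel_adj] at hadj
    obtain ⟨-, h1 | h1⟩ := hadj
    · exact ih (h _ _ h1 hu)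
    · exact ih (h _ _ (hr _ _ h1) hu)

lemma quad_zero_const (c : V → V → ℝ) (hsymm : ∀ v w, c v w = c w v)
    (hnonneg : ∀ v w, 0 ≤ c v w) (hdiag : ∀ v, c v v = 0)
    (hconn : (SimpleGraph.fromRel fun v w : V => c v w ≠ 0).Connected)
    (x : V → ℝ) (h : x ⬝ᵥ netLap c *ᵥ x = 0) : ∀ v w, x v = x w := by
  have h2 : ∑ v, ∑ w, c v w * (x v - x w) ^ 2 = 0 := by
    rw [← quad_form c hsymm hdiag, h]; ring
  have hterm : ∀ v w, c v w * (x v - x w) ^ 2 = 0 := by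
    intro v w
    have hv := (Finset.sum_eq_zero_iff_of_nonneg (fun v _ => Finset.sum_nonneg
      fun w _ => mul_nonneg (hnonneg v w) (sq_nonneg _))).mp h2 v (Finset.mem_univ v)
    exact (Finset.sum_eq_zero_iff_of_nonneg
      (fun w _ => mul_nonneg (hnonneg v w) (sq_nonneg _))).mp hv w (Finset.mem_univ w)
  have hedge : ∀ v w, c v w ≠ 0 → x v = x w := by
    intro v w hvw
    rcases mul_eq_zero.mp (hterm v w) with h' | h'
    · exact absurd h' hvw
    · have := pow_eq_zero_iff (n := 2) (by norm_num) |>.mp h'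
      linarith [sub_eq_zero.mp this]
  intro v w
  exact reach_prop hconn (fun u => x v = x u)
    (fun a b hab hpa => hpa.trans (hedge a b hab))
    (fun a b hab => by rwa [hsymm] at hab) rfl

def glue (N : Finset V) (u : {v : V // v ∈ N} → ℝ) (y : {v : V // v ∉ N} → ℝ) : V → ℝ :=
  fun v => if h : v ∈ N then u ⟨v, h⟩ else y ⟨v, h⟩

lemma glue_memN (N : Finset V) (u : {v : V // v ∈ N} → ℝ) (y : {v : V // v ∉ N} → ℝ)
    (i : {v : V // v ∈ N}) : glue N u y i = u i := by
  simp [glue, i.2]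

lemma glue_memI (N : Finset V) (u : {v : V // v ∈ N} → ℝ) (y : {v : V // v ∉ N} → ℝ)
    (i : {v : V // v ∉ N}) : glue N u y i = y i := by
  simp [glue, i.2]

lemma glue_quad (M : Matrix V V ℝ) (N : Finset V)
    (u : {v : V // v ∈ N} → ℝ) (y : {v : V // v ∉ N} → ℝ) :
    glue N u y ⬝ᵥ M *ᵥ glue N u y
      = u ⬝ᵥ (M.submatrix (Subtype.val : {v : V // v ∈ N} → V) Subtype.val *ᵥ u)
        + u ⬝ᵥ (M.submatrix (Subtype.val : {v : V // v ∈ N} → V)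
            (Subtype.val : {v : V // v ∉ N} → V) *ᵥ y)
        + y ⬝ᵥ (M.submatrix (Subtype.val : {v : V // v ∉ N} → V)
            (Subtype.val : {v : V // v ∈ N} → V) *ᵥ u)
        + y ⬝ᵥ (M.submatrix (Subtype.val : {v : V // v ∉ N} → V) Subtype.val *ᵥ y) := by
  simp only [dotProduct, mulVec, submatrix_apply]
  rw [sum_split N]
  have hin : ∀ v : V, (∑ w, M v w * glue N u y w)
      = (∑ j : {v : V // v ∈ N}, M v j * u j) + ∑ j : {v : V // v ∉ N}, M v j * y j := by
    intro v
    rw [sum_split N]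
    congr 1
    · exact Finset.sum_congr rfl fun j _ => by rw [glue_memN]
    · exact Finset.sum_congr rfl fun j _ => by rw [glue_memI]
  simp only [hin, glue_memN, glue_memI, mul_add, Finset.sum_add_distrib]
  ring

lemma min_principle (c : V → V → ℝ) (hsymm : ∀ v w, c v w = c w v)
    (hnonneg : ∀ v w, 0 ≤ c v w) (hdiag : ∀ v, c v v = 0)
    (hconn : (SimpleGraph.fromRel fun v w : V => c v w ≠ 0).Connected)
    (N : Finset V) (hNne : N.Nonempty) (x : {v : V // v ∉ N} → ℝ)
    (hx : ∀ u, 0 ≤ ((netLap c).submatrix (Subtype.val : {v : V // v ∉ N} → V)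
        Subtype.val *ᵥ x) u) :
    ∀ u, 0 ≤ x u := by
  set z : V → ℝ := glue N 0 x with hz
  obtain ⟨b, hb⟩ := hNne
  have hzN : ∀ v (h : v ∈ N), z v = 0 := fun v h => glue_memN N 0 x ⟨v, h⟩
  have hzI : ∀ v (h : v ∉ N), z v = x ⟨v, h⟩ := fun v h => glue_memI N 0 x ⟨v, h⟩
  have hCz : ∀ (v : V) (h : v ∉ N), (netLap c *ᵥ z) v
      = ((netLap c).submatrix (Subtype.val : {v : V // v ∉ N} → V) Subtype.val *ᵥ x)
          ⟨v, h⟩ := by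
    intro v h
    simp only [mulVec, dotProduct, submatrix_apply]
    rw [sum_split N]
    have h1 : ∑ i : {v : V // v ∈ N}, netLap c v i * z i = 0 :=
      Finset.sum_eq_zero fun i _ => by rw [hzN i i.2, mul_zero]
    rw [h1, zero_add]
    exact Finset.sum_congr rfl fun i _ => by rw [hzI i i.2]
  obtain ⟨u₀, -, hu₀⟩ := Finset.exists_min_image Finset.univ z ⟨b, Finset.mem_univ b⟩
  have hmin : ∀ v, z u₀ ≤ z v := fun v => hu₀ v (Finset.mem_univ v)
  set m := z u₀ with hm
  by_cases hm0 : 0 ≤ m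
  · intro u
    rw [← hzI u u.2]
    exact le_trans hm0 (hmin u)
  push_neg at hm0
  exfalso
  have hprop : ∀ v w, c v w ≠ 0 → z v = m → z w = m := by
    intro v w hcvw hzv
    have hvI : v ∉ N := fun h => by rw [hzN v h] at hzv; linarith
    have hge : 0 ≤ (netLap c *ᵥ z) v := by rw [hCz v hvI]; exact hx ⟨v, hvI⟩
    have heq : (netLap c *ᵥ z) v = ∑ w, c v w * (m - z w) := by
      rw [mulVec_netLap c hdiag, hzv, Finset.sum_mul, ← Finset.sum_sub_distrib]
      exact Finset.sum_congr rfl fun w _ => by ring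
    rw [heq] at hge
    have hnp : ∀ w ∈ (Finset.univ : Finset V), c v w * (m - z w) ≤ 0 := fun w _ =>
      mul_nonpos_of_nonneg_of_nonpos (hnonneg v w) (by linarith [hmin w])
    have hzero := (Finset.sum_eq_zero_iff_of_nonpos hnp).mp
      (le_antisymm (Finset.sum_nonpos hnp) hge) w (Finset.mem_univ w)
    rcases mul_eq_zero.mp hzero with h' | h'
    · exact absurd h' hcvw
    · linarith [hmin w]
  have hbm : z b = m := reach_prop hconn (fun v => z v = m)
    (fun v w hvw hzv => hprop v w hvw hzv)
    (fun v w hvw => by rwa [hsymm] at hvw) rfl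
  rw [hzN b hb] at hbm
  linarith

end NetworkHelpers

/-- Sign pattern of the response matrix: if there are at least two nodes then the
off-diagonal entries of `L` are nonnegative and the diagonal entries are negative. -/
theorem response_matrix_signs {V : Type*} [Fintype V] [DecidableEq V]
    (c : V → V → ℝ)
    (hsymm : ∀ v w, c v w = c w v)
    (hnonneg : ∀ v w, 0 ≤ c v w)
    (hdiag : ∀ v, c v v = 0)
    (hconn : (SimpleGraph.fromRel fun v w : V => c v w ≠ 0).Connected)
    (N : Finset V) (hN : 2 ≤ N.card) :
    (∀ i j : {v : V // v ∈ N}, i ≠ j → 0 ≤ respMat c N i j) ∧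
    (∀ i : {v : V // v ∈ N}, respMat c N i i < 0) := by
  have hNne : N.Nonempty := Finset.card_pos.mp (by omega)
  set Δ : Matrix V V ℝ := netLap c with hΔ
  set A : Matrix {v : V // v ∈ N} {v : V // v ∈ N} ℝ :=
    Δ.submatrix Subtype.val Subtype.val with hA
  set B : Matrix {v : V // v ∈ N} {v : V // v ∉ N} ℝ :=
    Δ.submatrix Subtype.val Subtype.val with hB
  set Bt : Matrix {v : V // v ∉ N} {v : V // v ∈ N} ℝ :=
    Δ.submatrix Subtype.val Subtype.val with hBt
  set C : Matrix {v : V // v ∉ N} {v : V // v ∉ N} ℝ :=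
    Δ.submatrix Subtype.val Subtype.val with hC
  have hT : Δᵀ = Δ := netLap_transpose c hsymm
  have hTentry : ∀ v w, Δ v w = Δ w v := by
    intro v w
    conv_lhs => rw [← hT]
    rw [Matrix.transpose_apply]
  have hBT : Bᵀ = Bt := by
    ext j i
    simp only [transpose_apply, hB, hBt, submatrix_apply]
    exact hTentry _ _
  have hCT : Cᵀ = C := by
    ext j i
    simp only [transpose_apply, hC, submatrix_apply]
    exact hTentry _ _
  -- C is positive definite
  have hCquad : ∀ y : {v : V // v ∉ N} → ℝ,
      y ⬝ᵥ (C *ᵥ y) = glue N 0 y ⬝ᵥ Δ *ᵥ glue N 0 y := by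
    intro y
    rw [glue_quad]
    simp [hC]
  have hCpos : ∀ y : {v : V // v ∉ N} → ℝ, y ≠ 0 → 0 < y ⬝ᵥ (C *ᵥ y) := by
    intro y hy
    have hle : 0 ≤ y ⬝ᵥ (C *ᵥ y) := by
      rw [hCquad]; exact quad_nonneg c hsymm hnonneg hdiag _
    rcases lt_or_eq_of_le hle with h | h
    · exact h
    exfalso
    apply hy
    have hconst := quad_zero_const c hsymm hnonneg hdiag hconn _ (by rw [← hCquad, ← h])
    obtain ⟨b, hb⟩ := hNne
    funext u
    have h1 : glue N 0 y u = glue N 0 y b := hconst _ _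
    rw [glue_memI N 0 y u, glue_memN N 0 y ⟨b, hb⟩] at h1
    simpa using h1
  have hherm : C.IsHermitian := by
    have : Cᴴ = Cᵀ := by
      ext i j; simp [conjTranspose_apply]
    rw [Matrix.IsHermitian, this, hCT]
  have hPD : C.PosDef := Matrix.posDef_iff_dotProduct_mulVec.mpr ⟨hherm, fun y hy => by simpa [star_trivial] using hCpos y hy⟩
  have hdet : IsUnit C.det := isUnit_iff_ne_zero.mpr (ne_of_gt hPD.det_pos)
  have hCC : C * C⁻¹ = 1 := Matrix.mul_nonsing_inv C hdet
  have hCinvT : C⁻¹ᵀ = C⁻¹ := by rw [Matrix.transpose_nonsing_inv, hCT]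
  -- entrywise nonnegativity of C⁻¹
  have hCinv : ∀ u w, 0 ≤ C⁻¹ u w := by
    intro u w
    refine min_principle c hsymm hnonneg hdiag hconn N hNne (fun k => C⁻¹ k w) ?_ u
    intro u'
    have : (C *ᵥ fun k => C⁻¹ k w) u' = (C * C⁻¹) u' w := by
      simp [mulVec, dotProduct, Matrix.mul_apply]
    rw [hC] at this ⊢
    rw [this, hCC]
    by_cases h : u' = w <;> simp [Matrix.one_apply, h]
  constructor
  · -- off-diagonal entries
    intro i j hij
    have hij' : (i : V) ≠ (j : V) := fun h => hij (Subtype.ext h)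
    have hA_entry : A i j = -c i j := by
      simp [hA, hΔ, netLap, submatrix_apply, hij']
    have hB_entry : ∀ (k : {v : V // v ∈ N}) (u : {v : V // v ∉ N}),
        B k u = -c k u := by
      intro k u
      have : (k : V) ≠ (u : V) := fun h => u.2 (h ▸ k.2)
      simp [hB, hΔ, netLap, submatrix_apply, this]
    have hEntry : respMat c N i j = -A i j + (B * C⁻¹ * Bᵀ) i j := by
      simp [respMat, Matrix.add_apply, Matrix.neg_apply, hA, hB, hC, hΔ]
    rw [hEntry, hA_entry]
    have h2 : 0 ≤ (B * C⁻¹ * Bᵀ) i j := by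
      rw [Matrix.mul_apply]
      refine Finset.sum_nonneg fun w _ => ?_
      rw [Matrix.mul_apply, transpose_apply, hB_entry j w, Finset.sum_mul]
      refine Finset.sum_nonneg fun u _ => ?_
      rw [hB_entry i u]
      have := mul_nonneg (mul_nonneg (hnonneg i u) (hCinv u w)) (hnonneg j w)
      nlinarith [this]
    have := hnonneg i j
    linarith
  · -- diagonal entries
    intro i
    set u : {v : V // v ∈ N} → ℝ := Pi.single i 1 with hu
    set y : {v : V // v ∉ N} → ℝ := -(C⁻¹ *ᵥ (Bt *ᵥ u)) with hy
    set z : V → ℝ := glue N u y with hzdef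
    have hM := glue_quad Δ N u y
    rw [← hA, ← hB, ← hBt, ← hC] at hM
    -- simplify the four terms
    have key : C *ᵥ (C⁻¹ *ᵥ (Bt *ᵥ u)) = Bt *ᵥ u := by
      rw [Matrix.mulVec_mulVec, hCC, Matrix.one_mulVec]
    have t4 : y ⬝ᵥ (C *ᵥ y) = (C⁻¹ *ᵥ (Bt *ᵥ u)) ⬝ᵥ (Bt *ᵥ u) := by
      rw [hy, Matrix.mulVec_neg, neg_dotProduct, dotProduct_neg,
        neg_neg, key]
    have t3 : y ⬝ᵥ (Bt *ᵥ u) = -((C⁻¹ *ᵥ (Bt *ᵥ u)) ⬝ᵥ (Bt *ᵥ u)) := by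
      rw [hy, neg_dotProduct]
    have t2 : u ⬝ᵥ (B *ᵥ y) = -(u ⬝ᵥ ((B * C⁻¹ * Bᵀ) *ᵥ u)) := by
      rw [hy, Matrix.mulVec_neg, dotProduct_neg, hBT,
        Matrix.mulVec_mulVec, Matrix.mulVec_mulVec, Matrix.mul_assoc]
    have hZq : z ⬝ᵥ Δ *ᵥ z = u ⬝ᵥ ((A - B * C⁻¹ * Bᵀ) *ᵥ u) := by
      rw [hzdef, hM, t2, t3, t4, Matrix.sub_mulVec, dotProduct_sub]
      ring
    have hsingle : ∀ M : Matrix {v : V // v ∈ N} {v : V // v ∈ N} ℝ,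
        (Pi.single i 1 : {v : V // v ∈ N} → ℝ) ⬝ᵥ (M *ᵥ Pi.single i 1) = M i i := by
      intro M
      simp [mulVec, dotProduct, Pi.single_apply, mul_ite, ite_mul,
        Finset.sum_ite_eq, Finset.sum_ite_eq']
    have hdiagEntry : z ⬝ᵥ Δ *ᵥ z = A i i - (B * C⁻¹ * Bᵀ) i i := by
      rw [hZq, hu, hsingle]
      simp [Matrix.sub_apply]
    have hresp : respMat c N i i = -(A i i - (B * C⁻¹ * Bᵀ) i i) := by
      simp only [respMat, Matrix.add_apply, Matrix.neg_apply, ← hΔ, ← hA, ← hB, ← hC]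
      ring
    have hpos : 0 < z ⬝ᵥ Δ *ᵥ z := by
      rcases lt_or_eq_of_le (quad_nonneg c hsymm hnonneg hdiag z) with h | h
      · exact h
      exfalso
      have hconst := quad_zero_const c hsymm hnonneg hdiag hconn z (by rw [← h])
      obtain ⟨b, hb, hbne⟩ := Finset.exists_mem_ne (s := N) (by omega) (i : V)
      have h1 : z i = z b := hconst _ _
      have hz1 : z i = 1 := by
        rw [hzdef, glue_memN N u y i, hu, Pi.single_eq_same]
      have hz0 : z b = 0 := by
        rw [hzdef, glue_memN N u y ⟨b, hb⟩, hu]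
        exact Pi.single_eq_of_ne (fun h => hbne (congrArg Subtype.val h)) 1
      rw [hz1, hz0] at h1
      norm_num at h1
    rw [hresp]
    rw [hdiagEntry] at hpos
    linarith
end

section
/- Schur complement minor identity: Let N and I be finite linearly ordered index sets and let Δ be the real block matrix [[A,B],[B',C]] with A of size N×N, B of size N×I, B' of size I×N, and C of size I×I invertible. Set L = −A + B C⁻¹ B'. Then for any subsets X, Y ⊆ N with |X| = |Y|, listing X and Y in increasing order followed by all of I, the determinant of the submatrix of Δ with rows indexed by X∪I and columns indexed by Y∪I equals (−1)^{|X|} · det(L_X^Y) · det C, where L_X^Y is the submatrix of L with rows X and columns Y. -/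
open Matrix BigOperators

/-- Schur complement minor identity: for a block matrix `Δ = [[A,B],[B',C]]` with `C`
invertible and `L = -A + B C⁻¹ B'`, the determinant of the submatrix of `Δ` with rows
`X ∪ I` and columns `Y ∪ I` (with `X, Y ⊆ N` of equal cardinality `k`, listed in
increasing order followed by all of `I`) equals `(-1)^k · det(L_X^Y) · det C`. -/
theorem schur_complement_minor {N I : Type*} [Fintype N] [LinearOrder N]
    [Fintype I] [DecidableEq I]
    (A : Matrix N N ℝ) (B : Matrix N I ℝ) (B' : Matrix I N ℝ) (C : Matrix I I ℝ)
    (hC : IsUnit C.det)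
    (X Y : Finset N) (k : ℕ) (hX : X.card = k) (hY : Y.card = k) :
    ((Matrix.fromBlocks A B B' C).submatrix
        (Sum.elim (fun i : Fin k => Sum.inl (X.orderEmbOfFin hX i))
          (Sum.inr : I → N ⊕ I))
        (Sum.elim (fun j : Fin k => Sum.inl (Y.orderEmbOfFin hY j))
          (Sum.inr : I → N ⊕ I))).det
    = (-1 : ℝ) ^ k *
        ((-A + B * C⁻¹ * B').submatrix (X.orderEmbOfFin hX) (Y.orderEmbOfFin hY)).det *
        C.det := by
  haveI := hC.invertible
  haveI : Invertible C := C.invertibleOfDetInvertible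
  set f := X.orderEmbOfFin hX
  set g := Y.orderEmbOfFin hY
  have hsub : (Matrix.fromBlocks A B B' C).submatrix
      (Sum.elim (fun i : Fin k => Sum.inl (f i)) (Sum.inr : I → N ⊕ I))
      (Sum.elim (fun j : Fin k => Sum.inl (g j)) (Sum.inr : I → N ⊕ I)) =
      Matrix.fromBlocks (A.submatrix f g) (B.submatrix f id) (B'.submatrix id g) C := by
    ext i j
    cases i <;> cases j <;> rfl
  rw [hsub, Matrix.det_fromBlocks₂₂]
  have hinv : (⅟C : Matrix I I ℝ) = C⁻¹ := (Matrix.invOf_eq_nonsing_inv C)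
  have : A.submatrix f g - B.submatrix f id * ⅟C * B'.submatrix id g =
      (-(1 : ℝ)) • ((-A + B * C⁻¹ * B').submatrix f g) := by
    rw [hinv]
    ext i j
    simp [Matrix.mul_apply, Matrix.sub_apply, Finset.mul_sum, mul_assoc, sub_eq_add_neg,
      add_comm, Finset.sum_comm (γ := I)]
  rw [this, Matrix.det_smul]
  simp only [Fintype.card_fin]; ring
end

section
/- Generalized Dodgson condensation (Desnanot–Jacobi) identity: Let M be an n×n matrix over a commutative ring, n ≥ 2, let a < b be row indices and c < d column indices. Writing M^{≠i₁,…}_{≠j₁,…} for the submatrix obtained by deleting the listed rows and columns (remaining indices kept in order), one has det(M^{≠a}_{≠c}) · det(M^{≠b}_{≠d}) = det(M) · det(M^{≠a,b}_{≠c,d}) + det(M^{≠b}_{≠c}) · det(M^{≠a}_{≠d}). -/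
open Matrix

section DesnanotJacobiHelpers

variable {R : Type*} [CommRing R] {m n : ℕ}

lemma my_updateRow_comm (A : Matrix (Fin m) (Fin m) R) {i j : Fin m} (h : i ≠ j)
    (u v : Fin m → R) : (A.updateRow i u).updateRow j v = (A.updateRow j v).updateRow i u := by
  ext r s
  simp only [updateRow_apply]
  split_ifs with h1 h2 <;> simp_all

lemma my_det_updateRow_expand (A : Matrix (Fin m) (Fin m) R) (r : Fin m) (w : Fin m → R) :
    (A.updateRow r w).det = ∑ j, w j * (A.updateRow r (Pi.single j 1)).det := by
  have hw : w = ∑ j : Fin m, w j • (Pi.single j (1 : R) : Fin m → R) := by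
    funext k
    simp [Pi.single_apply]
  calc (A.updateRow r w).det
      = detRowAlternating (Function.update (A) r (∑ j : Fin m, w j • (Pi.single j (1 : R) : Fin m → R))) := by
        rw [← hw]; rfl
    _ = ∑ j : Fin m, detRowAlternating (Function.update (A) r (w j • (Pi.single j (1 : R) : Fin m → R))) := by
        exact detRowAlternating.map_update_sum _ _ _ _
    _ = ∑ j, w j * (A.updateRow r (Pi.single j 1)).det := by
        refine Finset.sum_congr rfl fun j _ => ?_
        have : (Function.update (A) r (w j • (Pi.single j (1 : R) : Fin m → R)))
            = (A.updateRow r (w j • (Pi.single j (1:R) : Fin m → R))) := rfl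
        rw [this]
        show (A.updateRow r (w j • (Pi.single j (1:R) : Fin m → R))).det = _
        rw [det_updateRow_smul]

lemma my_one_row (r : Fin m) : (Pi.single r (1 : R) : Fin m → R) = (1 : Matrix (Fin m) (Fin m) R) r := by
  funext k
  simp [Pi.single_apply, Matrix.one_apply, eq_comm]

lemma my_det_unit (c d : Fin m) (hcd : c ≠ d) (i j : Fin m) :
    (((1 : Matrix (Fin m) (Fin m) R).updateRow c (Pi.single j 1)).updateRow d (Pi.single i 1)).det
    = (if j = c ∧ i = d then 1 else 0) + (if j = d ∧ i = c then -(1:R) else 0) := by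
  set N : Matrix (Fin m) (Fin m) R :=
    ((1 : Matrix (Fin m) (Fin m) R).updateRow c (Pi.single j 1)).updateRow d (Pi.single i 1) with hN
  have hNc : N c = Pi.single j 1 := by
    rw [hN, updateRow_ne hcd, updateRow_self]
  have hNd : N d = Pi.single i 1 := by rw [hN, updateRow_self]
  have hNr : ∀ r, r ≠ c → r ≠ d → N r = Pi.single r 1 := by
    intro r h1 h2
    rw [hN, updateRow_ne h2, updateRow_ne h1, ← my_one_row]
  by_cases h1 : j = c ∧ i = d
  · obtain ⟨rfl, rfl⟩ := h1
    have : N = 1 := by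
      rw [hN, my_one_row, updateRow_eq_self, my_one_row, updateRow_eq_self]
    rw [this, det_one]
    simp [hcd]
  · by_cases h2 : j = d ∧ i = c
    · obtain ⟨rfl, rfl⟩ := h2
      have hmat : N = (1 : Matrix (Fin m) (Fin m) R).submatrix (Equiv.swap i j) id := by
        ext r s
        rcases eq_or_ne r j with rfl | hrj
        · rw [hNd]
          simp [Equiv.swap_apply_right, Pi.single_apply, Matrix.one_apply, eq_comm]
        · rcases eq_or_ne r i with rfl | hri
          · rw [hNc]
            simp [Equiv.swap_apply_left, Pi.single_apply, Matrix.one_apply, eq_comm]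
          · rw [hNr r hri hrj]
            simp [Equiv.swap_apply_of_ne_of_ne hri hrj, Pi.single_apply,
              Matrix.one_apply, eq_comm]
      rw [hmat, det_permute, det_one, Equiv.Perm.sign_swap hcd]
      simp [hcd, Ne.symm hcd]
    · have hz : N.det = 0 := by
        rcases eq_or_ne i j with rfl | hij
        · exact det_zero_of_row_eq hcd (by rw [hNc, hNd])
        · rcases eq_or_ne j c with rfl | hjc
          · have hid : i ≠ d := fun h => h1 ⟨rfl, h⟩
            exact det_zero_of_row_eq (Ne.symm hid) (by rw [hNd, hNr i hij hid])
          · rcases eq_or_ne j d with rfl | hjd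
            · have hic : i ≠ c := fun h => h2 ⟨rfl, h⟩
              exact det_zero_of_row_eq (Ne.symm hij) (by rw [hNd, hNr i hic hij])
            · exact det_zero_of_row_eq (Ne.symm hjc) (by rw [hNc, hNr j hjc hjd])
      rw [hz]
      simp [h1, h2]

lemma my_det_two_updateRow (c d : Fin m) (hcd : c ≠ d) (u v : Fin m → R) :
    (((1 : Matrix (Fin m) (Fin m) R).updateRow c u).updateRow d v).det
    = u c * v d - u d * v c := by
  rw [my_det_updateRow_expand]
  have step : ∀ i : Fin m,
      (((1 : Matrix (Fin m) (Fin m) R).updateRow c u).updateRow d (Pi.single i 1)).det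
      = u c * (if i = d then 1 else 0) + u d * (if i = c then -(1:R) else 0) := by
    intro i
    rw [my_updateRow_comm _ hcd, my_det_updateRow_expand]
    have : ∀ j : Fin m,
        (((1 : Matrix (Fin m) (Fin m) R).updateRow d (Pi.single i 1)).updateRow c
          (Pi.single j 1)).det
        = (if j = c ∧ i = d then 1 else 0) + (if j = d ∧ i = c then -(1:R) else 0) := by
      intro j
      rw [my_updateRow_comm _ (Ne.symm hcd), my_det_unit c d hcd i j]
    simp only [this, mul_add]
    rw [Finset.sum_add_distrib]
    congr 1
    · rw [Finset.sum_eq_single c]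
      · simp
      · intro b _ hb
        simp [hb]
      · simp
    · rw [Finset.sum_eq_single d]
      · simp
      · intro b _ hb
        simp [hb]
      · simp
  simp only [step, mul_add]
  rw [Finset.sum_add_distrib]
  have e1 : (∑ i : Fin m, v i * (u c * if i = d then 1 else 0)) = u c * v d := by
    rw [Finset.sum_eq_single d]
    · simp [mul_comm]
    · intro b _ hb
      simp [hb]
    · simp
  have e2 : (∑ i : Fin m, v i * (u d * if i = c then -(1:R) else 0)) = -(u d * v c) := by
    rw [Finset.sum_eq_single c]
    · simp only [if_pos, ite_true, if_true]
      ring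
    · intro b _ hb
      simp [hb]
    · simp
  rw [e1, e2]
  ring

lemma my_det_updateColumn_single (A : Matrix (Fin (m+1)) (Fin (m+1)) R) (i j : Fin (m+1)) :
    (A.updateCol j (Pi.single i 1)).det
    = (-1) ^ (i + j : ℕ) * (A.submatrix i.succAbove j.succAbove).det := by
  rw [det_succ_column _ j]
  rw [Fintype.sum_eq_single i]
  · rw [updateCol_self, Pi.single_eq_same, mul_one, submatrix_updateCol_succAbove]
  · intro k hk
    rw [updateCol_self, Pi.single_eq_of_ne hk, mul_zero, zero_mul]

lemma my_submatrix_updateColumn (A : Matrix (Fin (m+1)) (Fin (m+1)) R) (v : Fin (m+1) → R)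
    (f : Fin m → Fin (m+1)) (cc : Fin (m+1)) (d' : Fin m) :
    (A.updateCol (cc.succAbove d') v).submatrix f cc.succAbove
      = (A.submatrix f cc.succAbove).updateCol d' (v ∘ f) := by
  ext r s
  simp only [submatrix_apply, updateCol_apply, Function.comp_apply]
  by_cases h : s = d'
  · simp [h]
  · rw [if_neg h, if_neg (fun he => h (Fin.succAbove_right_injective he))]

lemma my_single_comp_succAbove (a : Fin (m+1)) (b' : Fin m) :
    (Pi.single (a.succAbove b') (1:R) : Fin (m+1) → R) ∘ a.succAbove
      = Pi.single b' 1 := by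
  funext k
  simp only [Function.comp_apply, Pi.single_apply]
  by_cases h : k = b'
  · simp [h]
  · rw [if_neg (fun he => h (Fin.succAbove_right_injective he)), if_neg h]

lemma my_val_succAbove {k : ℕ} (p : Fin (k+1)) (i : Fin k) :
    (p.succAbove i).val = if i.val < p.val then i.val else i.val + 1 := by
  rw [Fin.succAbove, apply_ite Fin.val, Fin.coe_castSucc, Fin.val_succ]
  simp only [Fin.lt_def, Fin.coe_castSucc]

lemma my_succAbove_comm (a b : Fin (m+2)) (hab : a < b) :
    b.succAbove ∘ (⟨a.val, by omega⟩ : Fin (m+1)).succAbove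
      = a.succAbove ∘ (⟨b.val - 1, by omega⟩ : Fin (m+1)).succAbove := by
  have hb : b.val < m + 2 := b.isLt
  have hab' : a.val < b.val := hab
  funext i
  simp only [Function.comp_apply]
  apply Fin.ext
  rw [my_val_succAbove, my_val_succAbove, my_val_succAbove, my_val_succAbove]
  simp only []
  split_ifs <;> omega

lemma my_updateColumn_comm (A : Matrix (Fin m) (Fin m) R) {i j : Fin m} (h : i ≠ j)
    (u v : Fin m → R) :
    (A.updateCol i u).updateCol j v = (A.updateCol j v).updateCol i u := by
  ext r s
  simp only [updateCol_apply]
  split_ifs with h1 h2 <;> simp_all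

lemma my_det_two_updateColumn (c d : Fin m) (hcd : c ≠ d) (u v : Fin m → R) :
    (((1 : Matrix (Fin m) (Fin m) R).updateCol c u).updateCol d v).det
    = u c * v d - u d * v c := by
  rw [← det_transpose, ← updateRow_transpose, ← updateRow_transpose, transpose_one,
    my_det_two_updateRow c d hcd]

lemma my_mul_updateColumn (M A : Matrix (Fin m) (Fin m) R) (j : Fin m) (v : Fin m → R) :
    M * (A.updateCol j v) = (M * A).updateCol j (M *ᵥ v) := by
  ext i k
  by_cases h : k = j
  · subst h
    simp [mul_apply, updateCol_self, mulVec, dotProduct, updateCol_apply]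
  · simp [mul_apply, updateCol_apply, h]

set_option maxHeartbeats 1000000 in
lemma my_key (M : Matrix (Fin (n+2)) (Fin (n+2)) R) (a b c d : Fin (n+2))
    (hab : a < b) (hcd : c < d) :
    M.det * ((M.submatrix a.succAbove c.succAbove).det * (M.submatrix b.succAbove d.succAbove).det
      - (M.submatrix b.succAbove c.succAbove).det * (M.submatrix a.succAbove d.succAbove).det)
    = M.det * (M.det *
        (M.submatrix (a.succAbove ∘ (⟨b.val - 1, by omega⟩ : Fin (n+1)).succAbove)
          (c.succAbove ∘ (⟨d.val - 1, by omega⟩ : Fin (n+1)).succAbove)).det) := by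
  have hab' : a.val < b.val := hab
  have hcd' : c.val < d.val := hcd
  have hb2 : b.val < n + 2 := b.isLt
  have hd2 : d.val < n + 2 := d.isLt
  set b' : Fin (n+1) := ⟨b.val - 1, by omega⟩ with hb'
  set d' : Fin (n+1) := ⟨d.val - 1, by omega⟩ with hd'
  have hsab : a.succAbove b' = b := by
    apply Fin.ext
    rw [my_val_succAbove]
    simp only [hb']
    split_ifs <;> omega
  have hscd : c.succAbove d' = d := by
    apply Fin.ext
    rw [my_val_succAbove]
    simp only [hd']
    split_ifs <;> omega
  set P1 := (M.submatrix a.succAbove c.succAbove).det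
  set P2 := (M.submatrix b.succAbove d.succAbove).det
  set P3 := (M.submatrix b.succAbove c.succAbove).det
  set P4 := (M.submatrix a.succAbove d.succAbove).det
  set Q := (M.submatrix (a.succAbove ∘ b'.succAbove) (c.succAbove ∘ d'.succAbove)).det with hQ
  set D := M.det with hD
  -- the auxiliary matrix B
  set B : Matrix (Fin (n+2)) (Fin (n+2)) R :=
    ((1 : Matrix (Fin (n+2)) (Fin (n+2)) R).updateCol c
      (fun k => adjugate M k a)).updateCol d (fun k => adjugate M k b) with hB
  have hdetB : B.det = adjugate M c a * adjugate M d b - adjugate M d a * adjugate M c b :=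
    my_det_two_updateColumn c d hcd.ne _ _
  -- M * B
  have hvec : ∀ x : Fin (n+2), (M *ᵥ (fun k => adjugate M k x)) = D • (Pi.single x 1 : Fin (n+2) → R) := by
    intro x
    funext i
    have h1 : (M * adjugate M) i x = (D • (1 : Matrix (Fin (n+2)) (Fin (n+2)) R)) i x := by
      rw [mul_adjugate M]
    simp only [mul_apply] at h1
    simp only [mulVec, dotProduct]
    rw [h1]
    simp [Pi.single_apply, Matrix.one_apply, eq_comm]
  have hMB : M * B = (M.updateCol c (D • (Pi.single a 1 : Fin (n+2) → R))).updateCol d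
      (D • (Pi.single b 1 : Fin (n+2) → R)) := by
    rw [hB, my_mul_updateColumn, my_mul_updateColumn, mul_one, hvec a, hvec b]
  -- determinant of M * B
  have hdetMB : (M * B).det = D * (D * ((-1:R) ^ (a.val + c.val) *
      ((-1:R) ^ (b'.val + d'.val) * Q))) := by
    rw [hMB, det_updateCol_smul,
      my_updateColumn_comm _ hcd.ne, det_updateCol_smul,
      my_det_updateColumn_single]
    rw [← hscd, my_submatrix_updateColumn, ← hsab, my_single_comp_succAbove,
      my_det_updateColumn_single, submatrix_submatrix]
  -- adjugate entries
  have hadj : ∀ (i j : Fin (n+2)), adjugate M i j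
      = (-1:R) ^ (j.val + i.val) * (M.submatrix j.succAbove i.succAbove).det := by
    intro i j
    exact adjugate_fin_succ_eq_det_submatrix M i j
  -- put it together
  have E : D * ((-1:R)^(a.val+c.val) * P1 * ((-1:R)^(b.val+d.val) * P2)
        - (-1:R)^(a.val+d.val) * P4 * ((-1:R)^(b.val+c.val) * P3))
      = D * (D * ((-1:R) ^ (a.val + c.val) * ((-1:R) ^ (b'.val + d'.val) * Q))) := by
    rw [← hdetMB, det_mul, hdetB, hadj, hadj, hadj, hadj]
  set s : R := (-1:R) ^ (a.val + b.val + c.val + d.val) with hs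
  have huv : (-1:R)^(a.val+c.val) * (-1:R)^(b.val+d.val) = s := by
    rw [← pow_add, hs]
    congr 1
    omega
  have hwx : (-1:R)^(b.val+c.val) * (-1:R)^(a.val+d.val) = s := by
    rw [← pow_add, hs]
    congr 1
    omega
  have hp : ∀ x : ℕ, (-1:R)^(x+2) = (-1:R)^x := by
    intro x
    rw [pow_add]
    norm_num
  have huy : (-1:R)^(a.val+c.val) * (-1:R)^(b'.val+d'.val) = s := by
    have he : a.val + c.val + (b'.val + d'.val) + 2 = a.val + b.val + c.val + d.val := by
      simp only [hb', hd']
      omega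
    rw [← pow_add, hs, ← he, hp]
  have hss : s * s = 1 := by
    rw [hs, ← pow_add]
    exact Even.neg_one_pow ⟨_, rfl⟩
  have E2 : D * (s * (P1 * P2 - P3 * P4)) = D * (D * (s * Q)) := by
    calc D * (s * (P1 * P2 - P3 * P4))
        = D * ((-1:R)^(a.val+c.val) * (-1:R)^(b.val+d.val) * (P1 * P2)
            - (-1:R)^(b.val+c.val) * (-1:R)^(a.val+d.val) * (P3 * P4)) := by
          rw [huv, hwx]; ring
      _ = D * (D * ((-1:R)^(a.val+c.val) * (-1:R)^(b'.val+d'.val) * Q)) := by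
          linear_combination E
      _ = D * (D * (s * Q)) := by rw [huy]
  calc D * (P1 * P2 - P3 * P4)
      = s * s * (D * (P1 * P2 - P3 * P4)) := by rw [hss]; ring
    _ = s * (D * (s * (P1 * P2 - P3 * P4))) := by ring
    _ = s * (D * (D * (s * Q))) := by rw [E2]
    _ = s * s * (D * (D * Q)) := by ring
    _ = D * (D * Q) := by rw [hss]; ring

lemma my_jacobi (M : Matrix (Fin (n+2)) (Fin (n+2)) R)
    (a b c d : Fin (n+2)) (hab : a < b) (hcd : c < d) :
    (M.submatrix a.succAbove c.succAbove).det * (M.submatrix b.succAbove d.succAbove).det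
      - (M.submatrix b.succAbove c.succAbove).det * (M.submatrix a.succAbove d.succAbove).det
    = M.det *
        (M.submatrix (a.succAbove ∘ (⟨b.val - 1, by omega⟩ : Fin (n+1)).succAbove)
          (c.succAbove ∘ (⟨d.val - 1, by omega⟩ : Fin (n+1)).succAbove)).det := by
  let A' := mvPolynomialX (Fin (n+2)) (Fin (n+2)) ℤ
  have hgen : (A'.submatrix a.succAbove c.succAbove).det *
        (A'.submatrix b.succAbove d.succAbove).det
      - (A'.submatrix b.succAbove c.succAbove).det * (A'.submatrix a.succAbove d.succAbove).det
    = A'.det *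
        (A'.submatrix (a.succAbove ∘ (⟨b.val - 1, by omega⟩ : Fin (n+1)).succAbove)
          (c.succAbove ∘ (⟨d.val - 1, by omega⟩ : Fin (n+1)).succAbove)).det := by
    apply mul_left_cancel₀ (det_mvPolynomialX_ne_zero (Fin (n+2)) ℤ)
    rw [← mul_assoc]
    rw [mul_assoc]  -- adjust shapes
    exact my_key A' a b c d hab hcd
  -- transfer to R
  set φ : MvPolynomial (Fin (n+2) × Fin (n+2)) ℤ →ₐ[ℤ] R :=
    MvPolynomial.aeval fun p : Fin (n+2) × Fin (n+2) => M p.1 p.2 with hφ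
  have hφA : φ.mapMatrix A' = M := mvPolynomialX_mapMatrix_aeval ℤ M
  have hsub : ∀ (k : ℕ) (f g : Fin k → Fin (n+2)),
      φ (A'.submatrix f g).det = (M.submatrix f g).det := by
    intro k f g
    rw [AlgHom.map_det, ← hφA]
    rfl
  have hdet : φ A'.det = M.det := by
    rw [AlgHom.map_det, hφA]
  have := congrArg φ hgen
  rw [map_sub, _root_.map_mul, _root_.map_mul, _root_.map_mul, hsub, hsub, hsub, hsub, hsub,
    hdet] at this
  exact this

end DesnanotJacobiHelpers

/-- Generalized Dodgson condensation (Desnanot–Jacobi) identity: for an `n × n` matrix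
`M` (here `n+2 ≥ 2`), rows `a < b` and columns `c < d`,
`det(M^{≠a}_{≠c})·det(M^{≠b}_{≠d}) = det(M)·det(M^{≠a,b}_{≠c,d}) + det(M^{≠b}_{≠c})·det(M^{≠a}_{≠d})`. -/
theorem desnanot_jacobi {R : Type*} [CommRing R] {n : ℕ}
    (M : Matrix (Fin (n + 2)) (Fin (n + 2)) R)
    (a b : Fin (n + 2)) (hab : a < b)
    (c d : Fin (n + 2)) (hcd : c < d) :
    (M.submatrix a.succAbove c.succAbove).det * (M.submatrix b.succAbove d.succAbove).det
    = M.det *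
        ((M.submatrix b.succAbove d.succAbove).submatrix
          (Fin.succAbove ⟨a.val, by
            have h1 : a.val < b.val := hab
            have h2 : b.val < n + 2 := b.isLt
            omega⟩)
          (Fin.succAbove ⟨c.val, by
            have h1 : c.val < d.val := hcd
            have h2 : d.val < n + 2 := d.isLt
            omega⟩)).det
      + (M.submatrix b.succAbove c.succAbove).det *
          (M.submatrix a.succAbove d.succAbove).det := by
  have h := my_jacobi M a b c d hab hcd
  rw [submatrix_submatrix, my_succAbove_comm a b hab, my_succAbove_comm c d hcd]
  linear_combination h
end

section
/- Roots of the characteristic polynomial of an annular 'string of loops' network: Let n ≥ 1, let a₁,…,a_{n−1} and b₁,…,b_n be positive reals, and set a₀ = a_n = 0. For z ∈ ℂ∖{0} let D(z) be the n×n matrix with diagonal entries D(z)_{ii} = a_{i−1} + a_i + b_i(2 − z − z⁻¹), off-diagonal entries D(z)_{i,i+1} = D(z)_{i+1,i} = −a_i for 1 ≤ i ≤ n−1, and all other entries 0. Then there is a polynomial Q with real coefficients of degree exactly 2n such that Q(z) = zⁿ·det D(z) for all z ≠ 0, and Q satisfies: (i) Q(z) = z^{2n}·Q(1/z) for all z ≠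 0; (ii) every complex root of Q is a positive real number; (iii) z = 1 is a root of Q of multiplicity exactly 2; (iv) every root of Q other than 1 is a simple root. -/
open Matrix Polynomial

/-- The line-bundle Laplacian `D(z)` (with monodromy `z`) of a "string of loops" network
on an annulus: an `n × n` symmetric tridiagonal matrix with diagonal entries
`a_{i-1} + a_i + b_i (2 - z - z⁻¹)` (1-based indexing, with `a₀ = aₙ = 0` supplied by the
functions `a`, `b`) and off-diagonal entries `D(z)_{i,i+1} = D(z)_{i+1,i} = -a_i`. -/
noncomputable def stringOfLoopsLap (n : ℕ) (a b : ℕ → ℝ) (z : ℂ) :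
    Matrix (Fin n) (Fin n) ℂ :=
  Matrix.of fun i j =>
    if i = j then (a i.val : ℂ) + (a (i.val + 1) : ℂ) + (b (i.val + 1) : ℂ) * (2 - z - z⁻¹)
    else if i.val + 1 = j.val then -(a (i.val + 1) : ℂ)
    else if j.val + 1 = i.val then -(a (j.val + 1) : ℂ)
    else 0

namespace SOLAux

noncomputable def Lmat (n : ℕ) (a : ℕ → ℝ) : Matrix (Fin n) (Fin n) ℝ :=
  Matrix.of fun i j =>
    if i = j then a i.val + a (i.val + 1)
    else if i.val + 1 = j.val then -(a (i.val + 1))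
    else if j.val + 1 = i.val then -(a (j.val + 1))
    else 0

noncomputable def Bmat (n : ℕ) (b : ℕ → ℝ) : Matrix (Fin n) (Fin n) ℝ :=
  Matrix.diagonal fun i => b (i.val + 1)

def extv (n : ℕ) (y : Fin n → ℝ) : ℕ → ℝ := fun k => if h : k < n then y ⟨k, h⟩ else 0

lemma extv_lt (n : ℕ) (y : Fin n → ℝ) (k : ℕ) (h : k < n) : extv n y k = y ⟨k, h⟩ := by
  simp [extv, h]

lemma extv_ge (n : ℕ) (y : Fin n → ℝ) (k : ℕ) (h : ¬ k < n) : extv n y k = 0 := by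
  simp [extv, h]

lemma Lmat_mulVec (n : ℕ) (a : ℕ → ℝ) (ha0 : a 0 = 0) (y : Fin n → ℝ) (i : Fin n) :
    (Lmat n a).mulVec y i
      = (a i.val + a (i.val + 1)) * y i - a i.val * extv n y (i.val - 1)
        - a (i.val + 1) * extv n y (i.val + 1) := by
  have hy : ∀ j : Fin n, extv n y j.val = y j := fun j => by
    rw [extv_lt n y j.val j.isLt]
  have key : ∀ j : Fin n, Lmat n a i j * y j =
      ((if i.val = j.val then (a i.val + a (i.val + 1)) * extv n y j.val else 0)
      + (if i.val + 1 = j.val then -(a (i.val + 1)) * extv n y j.val else 0))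
      + (if j.val + 1 = i.val then -(a (j.val + 1)) * extv n y j.val else 0) := by
    intro j
    rw [hy]
    show (if i = j then a i.val + a (i.val + 1)
      else if i.val + 1 = j.val then -(a (i.val + 1))
      else if j.val + 1 = i.val then -(a (j.val + 1)) else 0) * y j = _
    by_cases h1 : i = j
    · have h1' : i.val = j.val := by rw [h1]
      rw [if_pos h1, if_pos h1', if_neg (by omega), if_neg (by omega)]; ring
    · have h1' : ¬ i.val = j.val := fun h => h1 (Fin.ext h)
      rw [if_neg h1, if_neg h1']
      by_cases h2 : i.val + 1 = j.val
      · rw [if_pos h2, if_pos h2, if_neg (by omega)]; ring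
      · rw [if_neg h2, if_neg h2]
        by_cases h3 : j.val + 1 = i.val
        · rw [if_pos h3, if_pos h3]; ring
        · rw [if_neg h3, if_neg h3]; ring
  have hsum : (Lmat n a).mulVec y i = ∑ j : Fin n, Lmat n a i j * y j := rfl
  rw [hsum, Finset.sum_congr rfl (fun j _ => key j), Finset.sum_add_distrib,
    Finset.sum_add_distrib]
  have e1 : ∑ j : Fin n, (if i.val = j.val then (a i.val + a (i.val + 1)) * extv n y j.val else 0)
      = (a i.val + a (i.val + 1)) * y i := by
    rw [Fin.sum_univ_eq_sum_range
      (fun k => if i.val = k then (a i.val + a (i.val + 1)) * extv n y k else 0)]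
    rw [Finset.sum_ite_eq (Finset.range n) i.val
      (fun k => (a i.val + a (i.val + 1)) * extv n y k)]
    rw [if_pos (Finset.mem_range.2 i.isLt), hy]
  have e2 : ∑ j : Fin n, (if i.val + 1 = j.val then -(a (i.val + 1)) * extv n y j.val else 0)
      = -(a (i.val + 1)) * extv n y (i.val + 1) := by
    rw [Fin.sum_univ_eq_sum_range
      (fun k => if i.val + 1 = k then -(a (i.val + 1)) * extv n y k else 0)]
    rw [Finset.sum_ite_eq (Finset.range n) (i.val + 1)
      (fun k => -(a (i.val + 1)) * extv n y k)]
    by_cases h : i.val + 1 < n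
    · rw [if_pos (Finset.mem_range.2 h)]
    · rw [if_neg (by simpa using h), extv_ge n y _ h, mul_zero]
  have e3 : ∑ j : Fin n, (if j.val + 1 = i.val then -(a (j.val + 1)) * extv n y j.val else 0)
      = -(a i.val) * extv n y (i.val - 1) := by
    rw [Fin.sum_univ_eq_sum_range (fun k => if k + 1 = i.val then -(a (k + 1)) * extv n y k else 0)]
    by_cases h0 : i.val = 0
    · rw [Finset.sum_eq_zero (fun k _ => by rw [if_neg (by omega)]), h0, ha0]; ring
    · have hcong : ∀ k ∈ Finset.range n,
          (if k + 1 = i.val then -(a (k + 1)) * extv n y k else 0)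
            = (if i.val - 1 = k then -(a (k + 1)) * extv n y k else 0) := by
        intro k _
        by_cases h : k + 1 = i.val
        · rw [if_pos h, if_pos (by omega)]
        · rw [if_neg h, if_neg (by omega)]
      rw [Finset.sum_congr rfl hcong,
        Finset.sum_ite_eq (Finset.range n) (i.val - 1) (fun k => -(a (k + 1)) * extv n y k)]
      rw [if_pos (Finset.mem_range.2 (by have := i.isLt; omega))]
      have hval : i.val - 1 + 1 = i.val := by omega
      rw [hval]
  rw [e1, e2, e3]; ring

lemma Bmat_mulVec (n : ℕ) (b : ℕ → ℝ) (y : Fin n → ℝ) (i : Fin n) :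
    (Bmat n b).mulVec y i = b (i.val + 1) * y i :=
  Matrix.mulVec_diagonal _ _ _

lemma pencil_zero (n : ℕ) (a b : ℕ → ℝ) (ha0 : a 0 = 0)
    (hapos : ∀ i, 1 ≤ i → i ≤ n - 1 → 0 < a i)
    (μ : ℝ) (y : Fin n → ℝ)
    (hy : (Lmat n a).mulVec y = μ • (Bmat n b).mulVec y)
    (h0 : extv n y 0 = 0) : y = 0 := by
  suffices h : ∀ k, extv n y k = 0 by
    funext j
    have := h j.val
    rwa [extv_lt n y j.val j.isLt] at this
  intro k
  induction k using Nat.strong_induction_on with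
  | _ k ih =>
    match k with
    | 0 => exact h0
    | Nat.succ k =>
      by_cases hk1 : k + 1 < n
      · have hkn : k < n := by omega
        have hrow := congrFun hy ⟨k, hkn⟩
        rw [Lmat_mulVec n a ha0] at hrow
        have hrow2 : (a k + a (k + 1)) * y ⟨k, hkn⟩ - a k * extv n y (k - 1)
            - a (k + 1) * extv n y (k + 1) = μ * (b (k + 1) * y ⟨k, hkn⟩) := by
          simpa [Bmat_mulVec] using hrow
        have h1 : extv n y k = 0 := ih k (by omega)
        have h2 : extv n y (k - 1) = 0 := ih (k - 1) (by omega)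
        have hyk : y ⟨k, hkn⟩ = 0 := by rw [← extv_lt n y k hkn]; exact h1
        have hpos : 0 < a (k + 1) := hapos (k + 1) (by omega) (by omega)
        rw [hyk, h2] at hrow2
        have : a (k + 1) * extv n y (k + 1) = 0 := by linarith
        rcases mul_eq_zero.1 this with h | h
        · exact absurd h (ne_of_gt hpos)
        · exact h
      · exact extv_ge n y _ hk1

noncomputable def Tmat (n : ℕ) (b : ℕ → ℝ) : Matrix (Fin n) (Fin n) ℝ :=
  Matrix.diagonal fun i => Real.sqrt (b (i.val + 1))

noncomputable def Smat (n : ℕ) (b : ℕ → ℝ) : Matrix (Fin n) (Fin n) ℝ :=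
  Matrix.diagonal fun i => (Real.sqrt (b (i.val + 1)))⁻¹

noncomputable def Mmat (n : ℕ) (a b : ℕ → ℝ) : Matrix (Fin n) (Fin n) ℝ :=
  Smat n b * Lmat n a * Smat n b

lemma sqrtb_pos (n : ℕ) (b : ℕ → ℝ) (hb : ∀ i : Fin n, 0 < b (i.val + 1)) (i : Fin n) :
    0 < Real.sqrt (b (i.val + 1)) := Real.sqrt_pos.2 (hb i)

lemma TS_one (n : ℕ) (b : ℕ → ℝ) (hb : ∀ i : Fin n, 0 < b (i.val + 1)) :
    Tmat n b * Smat n b = 1 := by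
  rw [Tmat, Smat, Matrix.diagonal_mul_diagonal, ← Matrix.diagonal_one]
  exact congrArg Matrix.diagonal
    (funext fun i => mul_inv_cancel₀ (ne_of_gt (sqrtb_pos n b hb i)))

lemma ST_one (n : ℕ) (b : ℕ → ℝ) (hb : ∀ i : Fin n, 0 < b (i.val + 1)) :
    Smat n b * Tmat n b = 1 := by
  rw [Smat, Tmat, Matrix.diagonal_mul_diagonal, ← Matrix.diagonal_one]
  exact congrArg Matrix.diagonal
    (funext fun i => inv_mul_cancel₀ (ne_of_gt (sqrtb_pos n b hb i)))

lemma TT_eq (n : ℕ) (b : ℕ → ℝ) (hb : ∀ i : Fin n, 0 < b (i.val + 1)) :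
    Tmat n b * Tmat n b = Bmat n b := by
  rw [Tmat, Bmat, Matrix.diagonal_mul_diagonal]
  exact congrArg Matrix.diagonal
    (funext fun i => Real.mul_self_sqrt (le_of_lt (hb i)))

lemma BS_eq (n : ℕ) (b : ℕ → ℝ) (hb : ∀ i : Fin n, 0 < b (i.val + 1)) :
    Bmat n b * Smat n b = Tmat n b := by
  rw [Bmat, Smat, Tmat, Matrix.diagonal_mul_diagonal]
  refine congrArg Matrix.diagonal (funext fun i => ?_)
  have h := Real.mul_self_sqrt (le_of_lt (hb i))
  have hs := sqrtb_pos n b hb i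
  rw [inv_eq_one_div, mul_one_div, div_eq_iff (ne_of_gt hs)]
  linarith [h]

lemma L_eq_TMT (n : ℕ) (a b : ℕ → ℝ) (hb : ∀ i : Fin n, 0 < b (i.val + 1)) :
    Lmat n a = Tmat n b * Mmat n a b * Tmat n b := by
  rw [Mmat]
  rw [show Tmat n b * (Smat n b * Lmat n a * Smat n b) * Tmat n b
    = (Tmat n b * Smat n b) * Lmat n a * (Smat n b * Tmat n b)  by noncomm_ring]
  rw [TS_one n b hb, ST_one n b hb, one_mul, mul_one]

lemma Lmat_isSymm (n : ℕ) (a : ℕ → ℝ) : (Lmat n a).IsHermitian := by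
  show (Lmat n a)ᴴ = Lmat n a
  ext i j
  show star (Lmat n a j i) = Lmat n a i j
  rw [star_trivial]
  show (if j = i then a j.val + a (j.val + 1)
      else if j.val + 1 = i.val then -(a (j.val + 1))
      else if i.val + 1 = j.val then -(a (i.val + 1)) else 0)
    = (if i = j then a i.val + a (i.val + 1)
      else if i.val + 1 = j.val then -(a (i.val + 1))
      else if j.val + 1 = i.val then -(a (j.val + 1)) else 0)
  by_cases h1 : i = j
  · subst h1; simp
  · have h1' : ¬ j = i := fun h => h1 h.symm
    rw [if_neg h1, if_neg h1']
    by_cases h2 : i.val + 1 = j.val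
    · have h3 : ¬ j.val + 1 = i.val := by omega
      simp only [if_pos h2, if_neg h3]
    · by_cases h3 : j.val + 1 = i.val
      · simp only [if_neg h2, if_pos h3]
      · simp only [if_neg h2, if_neg h3]

lemma Mmat_isHermitian (n : ℕ) (a b : ℕ → ℝ) : (Mmat n a b).IsHermitian := by
  show (Mmat n a b)ᴴ = Mmat n a b
  rw [Mmat, Matrix.conjTranspose_mul, Matrix.conjTranspose_mul]
  have hS : (Smat n b)ᴴ = Smat n b := Matrix.isHermitian_diagonal _
  have hL : (Lmat n a)ᴴ = Lmat n a := Lmat_isSymm n a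
  rw [hS, hL, ← mul_assoc]

lemma eig_to_pencil (n : ℕ) (a b : ℕ → ℝ) (hb : ∀ i : Fin n, 0 < b (i.val + 1))
    {μ : ℝ} {x : Fin n → ℝ} (hx : (Mmat n a b).mulVec x = μ • x) :
    (Lmat n a).mulVec ((Smat n b).mulVec x)
      = μ • (Bmat n b).mulVec ((Smat n b).mulVec x) := by
  have h1 : (Lmat n a).mulVec ((Smat n b).mulVec x)
      = (Tmat n b).mulVec ((Mmat n a b).mulVec x) := by
    rw [Matrix.mulVec_mulVec, Matrix.mulVec_mulVec, L_eq_TMT n a b hb]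
    rw [show Tmat n b * Mmat n a b * Tmat n b * Smat n b
      = Tmat n b * Mmat n a b * (Tmat n b * Smat n b)  by noncomm_ring,
      TS_one n b hb, mul_one]
  have h2 : (Bmat n b).mulVec ((Smat n b).mulVec x) = (Tmat n b).mulVec x := by
    rw [Matrix.mulVec_mulVec, BS_eq n b hb]
  rw [h1, h2, hx, Matrix.mulVec_smul]

lemma Smul_ne_zero (n : ℕ) (b : ℕ → ℝ) (hb : ∀ i : Fin n, 0 < b (i.val + 1))
    {x : Fin n → ℝ} (hx : x ≠ 0) : (Smat n b).mulVec x ≠ 0 := by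
  intro h
  apply hx
  have : (Tmat n b).mulVec ((Smat n b).mulVec x) = x := by
    rw [Matrix.mulVec_mulVec, TS_one n b hb, Matrix.one_mulVec]
  rw [h, Matrix.mulVec_zero] at this
  exact this.symm

lemma a_nonneg (n : ℕ) (a : ℕ → ℝ) (ha0 : a 0 = 0) (han : a n = 0)
    (hapos : ∀ i, 1 ≤ i → i ≤ n - 1 → 0 < a i) :
    ∀ m, m ≤ n → 0 ≤ a m := by
  intro m hm
  by_cases h0 : m = 0
  · simp [h0, ha0]
  by_cases h1 : m = n
  · simp [h1, han]
  exact le_of_lt (hapos m (by omega) (by omega))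

lemma eig_nonneg (n : ℕ) (a b : ℕ → ℝ) (hn : 1 ≤ n) (ha0 : a 0 = 0) (han : a n = 0)
    (hapos : ∀ i, 1 ≤ i → i ≤ n - 1 → 0 < a i)
    (hb : ∀ i : Fin n, 0 < b (i.val + 1)) (i : Fin n) :
    0 ≤ (Mmat_isHermitian n a b).eigenvalues i := by
  by_contra hneg
  push_neg at hneg
  have hann := a_nonneg n a ha0 han hapos
  set μ : ℝ := (Mmat_isHermitian n a b).eigenvalues i with hμ
  have hx := (Mmat_isHermitian n a b).mulVec_eigenvectorBasis i
  set x : Fin n → ℝ := ⇑((Mmat_isHermitian n a b).eigenvectorBasis i) with hxdef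
  have hxne : x ≠ 0 := by
    intro h
    have hv : (Mmat_isHermitian n a b).eigenvectorBasis i = 0 := by
      apply PiLp.ext
      intro k
      exact congrFun h k
    have hnorm := (Mmat_isHermitian n a b).eigenvectorBasis.orthonormal.1 i
    rw [hv, norm_zero] at hnorm
    exact one_ne_zero hnorm.symm
  set y := (Smat n b).mulVec x with hydef
  have hyne : y ≠ 0 := Smul_ne_zero n b hb hxne
  have hpen : (Lmat n a).mulVec y = μ • (Bmat n b).mulVec y := eig_to_pencil n a b hb hx
  obtain ⟨k, -, hk⟩ := Finset.exists_max_image Finset.univ (fun j => |y j|)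
    ⟨⟨0, by omega⟩, Finset.mem_univ _⟩
  have hk' : ∀ j, |y j| ≤ |y k| := fun j => hk j (Finset.mem_univ j)
  have hkpos : 0 < |y k| := by
    rcases eq_or_ne (y k) 0 with h0 | h0
    · exfalso
      apply hyne
      funext j
      have hj := hk' j
      rw [h0, abs_zero] at hj
      exact abs_eq_zero.1 (le_antisymm hj (abs_nonneg _))
    · exact abs_pos.2 h0
  have hext : ∀ m : ℕ, |extv n y m| ≤ |y k| := by
    intro m
    by_cases hm : m < n
    · rw [extv_lt n y m hm]; exact hk' _
    · rw [extv_ge n y m hm, abs_zero]; exact abs_nonneg _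
  have hrow := congrFun hpen k
  rw [Lmat_mulVec n a ha0] at hrow
  have hrow2 : (a k.val + a (k.val + 1)) * y k - a k.val * extv n y (k.val - 1)
      - a (k.val + 1) * extv n y (k.val + 1) = μ * (b (k.val + 1) * y k) := by
    simpa [Bmat_mulVec] using hrow
  have ha1 : 0 ≤ a k.val := hann k.val (le_of_lt k.isLt)
  have ha2 : 0 ≤ a (k.val + 1) := hann (k.val + 1) k.isLt
  have hbk : 0 < b (k.val + 1) := hb k
  have hcoef : 0 < a k.val + a (k.val + 1) - μ * b (k.val + 1) := by nlinarith
  have heq : (a k.val + a (k.val + 1) - μ * b (k.val + 1)) * y k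
      = a k.val * extv n y (k.val - 1) + a (k.val + 1) * extv n y (k.val + 1) := by
    linarith [hrow2]
  have habs : (a k.val + a (k.val + 1) - μ * b (k.val + 1)) * |y k|
      ≤ (a k.val + a (k.val + 1)) * |y k| := by
    have h1 : (a k.val + a (k.val + 1) - μ * b (k.val + 1)) * |y k|
        = |(a k.val + a (k.val + 1) - μ * b (k.val + 1)) * y k| := by
      rw [abs_mul, abs_of_pos hcoef]
    rw [h1, heq]
    calc |a k.val * extv n y (k.val - 1) + a (k.val + 1) * extv n y (k.val + 1)|
        ≤ |a k.val * extv n y (k.val - 1)| + |a (k.val + 1) * extv n y (k.val + 1)| :=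
          abs_add_le _ _
      _ ≤ a k.val * |y k| + a (k.val + 1) * |y k| := by
          rw [abs_mul, abs_mul, abs_of_nonneg ha1, abs_of_nonneg ha2]
          exact add_le_add (mul_le_mul_of_nonneg_left (hext _) ha1)
            (mul_le_mul_of_nonneg_left (hext _) ha2)
      _ = (a k.val + a (k.val + 1)) * |y k| := by ring
  nlinarith [mul_pos (mul_pos (neg_pos.2 hneg) hbk) hkpos, habs]

lemma eig_distinct (n : ℕ) (a b : ℕ → ℝ) (hn : 1 ≤ n) (ha0 : a 0 = 0)
    (hapos : ∀ i, 1 ≤ i → i ≤ n - 1 → 0 < a i)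
    (hb : ∀ i : Fin n, 0 < b (i.val + 1)) {i j : Fin n} (hij : i ≠ j) :
    (Mmat_isHermitian n a b).eigenvalues i ≠ (Mmat_isHermitian n a b).eigenvalues j := by
  intro he
  have hM := Mmat_isHermitian n a b
  set μ : ℝ := (Mmat_isHermitian n a b).eigenvalues i with hμ
  have hxi := (Mmat_isHermitian n a b).mulVec_eigenvectorBasis i
  have hxj := (Mmat_isHermitian n a b).mulVec_eigenvectorBasis j
  rw [← he] at hxj
  set xi : Fin n → ℝ := ⇑((Mmat_isHermitian n a b).eigenvectorBasis i) with hxidef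
  set xj : Fin n → ℝ := ⇑((Mmat_isHermitian n a b).eigenvectorBasis j) with hxjdef
  set yi := (Smat n b).mulVec xi with hyidef
  set yj := (Smat n b).mulVec xj with hyjdef
  have hpi : (Lmat n a).mulVec yi = μ • (Bmat n b).mulVec yi := eig_to_pencil n a b hb hxi
  have hpj : (Lmat n a).mulVec yj = μ • (Bmat n b).mulVec yj := eig_to_pencil n a b hb hxj
  set k0 : Fin n := ⟨0, by omega⟩ with hk0
  -- nonvanishing of first coordinates
  have hnev : ∀ (v : Fin n → ℝ), (Lmat n a).mulVec v = μ • (Bmat n b).mulVec v →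
      v k0 = 0 → v = 0 := by
    intro v hv h0
    apply pencil_zero n a b ha0 hapos μ v hv
    rw [extv_lt n v 0 (by omega)]
    exact h0
  have hxine : xi ≠ 0 := by
    intro h
    have hv : (Mmat_isHermitian n a b).eigenvectorBasis i = 0 := by
      apply PiLp.ext; intro k; exact congrFun h k
    have hnorm := (Mmat_isHermitian n a b).eigenvectorBasis.orthonormal.1 i
    rw [hv, norm_zero] at hnorm
    exact one_ne_zero hnorm.symm
  have hxjne : xj ≠ 0 := by
    intro h
    have hv : (Mmat_isHermitian n a b).eigenvectorBasis j = 0 := by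
      apply PiLp.ext; intro k; exact congrFun h k
    have hnorm := (Mmat_isHermitian n a b).eigenvectorBasis.orthonormal.1 j
    rw [hv, norm_zero] at hnorm
    exact one_ne_zero hnorm.symm
  have hyik0 : yi k0 ≠ 0 := by
    intro h0
    exact Smul_ne_zero n b hb hxine (hnev yi hpi h0)
  have hyjk0 : yj k0 ≠ 0 := by
    intro h0
    exact Smul_ne_zero n b hb hxjne (hnev yj hpj h0)
  -- the combination
  set u : Fin n → ℝ := yi k0 • yj - yj k0 • yi with hudef
  have hu : (Lmat n a).mulVec u = μ • (Bmat n b).mulVec u := by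
    rw [hudef, Matrix.mulVec_sub, Matrix.mulVec_smul, Matrix.mulVec_smul, hpi, hpj,
      Matrix.mulVec_sub, Matrix.mulVec_smul, Matrix.mulVec_smul,
      smul_comm (yi k0) μ, smul_comm (yj k0) μ, ← smul_sub]
  have hu0 : u k0 = 0 := by
    simp only [hudef, Pi.sub_apply, Pi.smul_apply, smul_eq_mul]
    ring
  have huz : u = 0 := hnev u hu hu0
  -- transfer back to x
  have hTyi : (Tmat n b).mulVec yi = xi := by
    rw [hyidef, Matrix.mulVec_mulVec, TS_one n b hb, Matrix.one_mulVec]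
  have hTyj : (Tmat n b).mulVec yj = xj := by
    rw [hyjdef, Matrix.mulVec_mulVec, TS_one n b hb, Matrix.one_mulVec]
  have hxcomb : yi k0 • xj - yj k0 • xi = 0 := by
    have h1 : (Tmat n b).mulVec u = yi k0 • xj - yj k0 • xi := by
      rw [hudef, Matrix.mulVec_sub, Matrix.mulVec_smul, Matrix.mulVec_smul, hTyi, hTyj]
    rw [← h1, huz, Matrix.mulVec_zero]
  -- get xj = c • xi
  set c : ℝ := yj k0 / yi k0 with hc
  have hcne : c ≠ 0 := div_ne_zero hyjk0 hyik0
  have hxj_eq : xj = c • xi := by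
    funext m
    have := congrFun hxcomb m
    simp only [Pi.sub_apply, Pi.smul_apply, Pi.zero_apply, smul_eq_mul] at this
    simp only [Pi.smul_apply, smul_eq_mul, hc]
    field_simp
    linarith
  have hvj_eq : (Mmat_isHermitian n a b).eigenvectorBasis j
      = c • (Mmat_isHermitian n a b).eigenvectorBasis i := by
    apply PiLp.ext
    intro m
    have := congrFun hxj_eq m
    simpa using this
  have hinner : (inner ℝ ((Mmat_isHermitian n a b).eigenvectorBasis i)
      ((Mmat_isHermitian n a b).eigenvectorBasis j) : ℝ) = 0 :=
    (Mmat_isHermitian n a b).eigenvectorBasis.orthonormal.2 hij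
  rw [hvj_eq, real_inner_smul_right, real_inner_self_eq_norm_mul_norm] at hinner
  have hnormi := (Mmat_isHermitian n a b).eigenvectorBasis.orthonormal.1 i
  rw [hnormi] at hinner
  simp at hinner
  exact hcne hinner

lemma exists_eig_zero (n : ℕ) (a b : ℕ → ℝ) (hn : 1 ≤ n) (ha0 : a 0 = 0) (han : a n = 0)
    (hb : ∀ i : Fin n, 0 < b (i.val + 1)) :
    ∃ i : Fin n, (Mmat_isHermitian n a b).eigenvalues i = 0 := by
  set y1 : Fin n → ℝ := fun _ => 1 with hy1
  have hL1 : (Lmat n a).mulVec y1 = 0 := by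
    funext k
    rw [Lmat_mulVec n a ha0]
    have e1 : extv n y1 (k.val - 1) = 1 := by
      rw [extv_lt n y1 (k.val - 1) (by have := k.isLt; omega)]
    by_cases hkn : k.val + 1 < n
    · have e2 : extv n y1 (k.val + 1) = 1 := by rw [extv_lt n y1 _ hkn]
      rw [e1, e2]
      show (a k.val + a (k.val + 1)) * 1 - a k.val * 1 - a (k.val + 1) * 1 = 0
      ring
    · have hend : k.val + 1 = n := by have := k.isLt; omega
      have e2 : extv n y1 (k.val + 1) = 0 := extv_ge n y1 _ (by omega)
      rw [e1, e2, hend, han]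
      show (a k.val + 0) * 1 - a k.val * 1 - 0 * 0 = 0
      ring
  set x0 := (Tmat n b).mulVec y1 with hx0
  have hx0ne : x0 ≠ 0 := by
    intro h
    have hk0 := congrFun h (⟨0, by omega⟩ : Fin n)
    rw [hx0] at hk0
    have : (Tmat n b).mulVec y1 (⟨0, by omega⟩ : Fin n)
        = Real.sqrt (b (0 + 1)) * 1 := Matrix.mulVec_diagonal _ _ _
    rw [this] at hk0
    have hbpos := sqrtb_pos n b hb (⟨0, by omega⟩ : Fin n)
    simp only [Pi.zero_apply, mul_one] at hk0
    exact (ne_of_gt hbpos) (by simpa using hk0)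
  have hMx0 : (Mmat n a b).mulVec x0 = 0 := by
    rw [hx0, Matrix.mulVec_mulVec, Mmat,
      show Smat n b * Lmat n a * Smat n b * Tmat n b
        = Smat n b * Lmat n a * (Smat n b * Tmat n b) by noncomm_ring,
      ST_one n b hb, mul_one, ← Matrix.mulVec_mulVec, hL1, Matrix.mulVec_zero]
  have hdet0 : (Mmat n a b).det = 0 := by
    rw [← Matrix.exists_mulVec_eq_zero_iff]
    exact ⟨x0, hx0ne, hMx0⟩
  have hprod := (Mmat_isHermitian n a b).det_eq_prod_eigenvalues
  rw [hdet0] at hprod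
  have : ∃ i ∈ Finset.univ, ((Mmat_isHermitian n a b).eigenvalues i : ℝ) = 0 :=
    Finset.prod_eq_zero_iff.1 (by simpa using hprod.symm)
  obtain ⟨i, -, hi⟩ := this
  exact ⟨i, by simpa using hi⟩

lemma det_formula (n : ℕ) (a b : ℕ → ℝ) (hb : ∀ i : Fin n, 0 < b (i.val + 1)) (w : ℂ) :
    Matrix.det ((Lmat n a).map (algebraMap ℝ ℂ) + w • (Bmat n b).map (algebraMap ℝ ℂ))
      = (∏ i : Fin n, (b (i.val + 1) : ℂ))
        * ∏ i : Fin n, (w + ((Mmat_isHermitian n a b).eigenvalues i : ℂ)) := by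
  classical
  set f := algebraMap ℝ ℂ with hf
  set μ := (Mmat_isHermitian n a b).eigenvalues with hμ
  set U : Matrix (Fin n) (Fin n) ℝ
    := ((Mmat_isHermitian n a b).eigenvectorUnitary : Matrix (Fin n) (Fin n) ℝ) with hU
  have hUU : U * star U = 1 :=
    Matrix.mem_unitaryGroup_iff.mp (Matrix.IsHermitian.eigenvectorUnitary
      (Mmat_isHermitian n a b)).2
  have hspec := (Mmat_isHermitian n a b).spectral_theorem
  set P := U.map f with hP
  set Qm := (star U).map f with hQm
  have hPQ : P * Qm = 1 := by
    rw [hP, hQm, ← Matrix.map_mul, hUU, ← Matrix.diagonal_one, Matrix.diagonal_map (map_zero f)]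
    simp
  have hMc : (Mmat n a b).map f = P * (Matrix.diagonal fun i => (μ i : ℂ)) * Qm := by
    rw [hspec, Unitary.conjStarAlgAut_apply, Matrix.map_mul, Matrix.map_mul, Matrix.diagonal_map (map_zero f)]
    rfl
  set Tc := (Tmat n b).map f with hTc
  have hLc : (Lmat n a).map f = Tc * (Mmat n a b).map f * Tc := by
    rw [L_eq_TMT n a b hb, Matrix.map_mul, Matrix.map_mul]
  have hBc : (Bmat n b).map f = Tc * Tc := by
    rw [← TT_eq n b hb, Matrix.map_mul]
  have key : (Lmat n a).map f + w • (Bmat n b).map f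
      = Tc * ((Mmat n a b).map f + w • 1) * Tc := by
    rw [hLc, hBc, mul_add, add_mul]
    congr 1
    rw [mul_smul_comm, mul_one, smul_mul_assoc]
  have key2 : (Mmat n a b).map f + w • (1 : Matrix (Fin n) (Fin n) ℂ)
      = P * ((Matrix.diagonal fun i => (μ i : ℂ)) + w • 1) * Qm := by
    rw [hMc, mul_add, add_mul]
    congr 1
    rw [mul_smul_comm, mul_one, smul_mul_assoc, hPQ]
  have hdiag : (Matrix.diagonal fun i : Fin n => (μ i : ℂ)) + w • 1
      = Matrix.diagonal (fun i => (μ i : ℂ) + w) := by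
    rw [Matrix.smul_one_eq_diagonal, ← Matrix.diagonal_add]
  rw [key, key2, hdiag]
  rw [Matrix.det_mul, Matrix.det_mul, Matrix.det_mul, Matrix.det_mul]
  have hdetPQ : P.det * Qm.det = 1 := by
    rw [← Matrix.det_mul, hPQ, Matrix.det_one]
  have hdetTc : Tc.det = ∏ i : Fin n, (Real.sqrt (b (i.val + 1)) : ℂ) := by
    rw [hTc, Tmat, Matrix.diagonal_map (map_zero f), Matrix.det_diagonal]
    rfl
  have hdetD : (Matrix.diagonal fun i : Fin n => (μ i : ℂ) + w).det
      = ∏ i : Fin n, (w + (μ i : ℂ)) := by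
    rw [Matrix.det_diagonal]
    exact Finset.prod_congr rfl fun i _ => add_comm _ _
  rw [hdetD, hdetTc]
  have hsq : (∏ i : Fin n, (Real.sqrt (b (i.val + 1)) : ℂ))
      * (∏ i : Fin n, (Real.sqrt (b (i.val + 1)) : ℂ)) = ∏ i : Fin n, (b (i.val + 1) : ℂ) := by
    rw [← Finset.prod_mul_distrib]
    refine Finset.prod_congr rfl fun i _ => ?_
    rw [← Complex.ofReal_mul, Real.mul_self_sqrt (le_of_lt (hb i))]
  calc (∏ i : Fin n, (Real.sqrt (b (i.val + 1)) : ℂ))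
        * (P.det * (∏ i : Fin n, (w + (μ i : ℂ))) * Qm.det)
        * (∏ i : Fin n, (Real.sqrt (b (i.val + 1)) : ℂ))
      = ((∏ i : Fin n, (Real.sqrt (b (i.val + 1)) : ℂ))
          * (∏ i : Fin n, (Real.sqrt (b (i.val + 1)) : ℂ)))
        * (P.det * Qm.det) * (∏ i : Fin n, (w + (μ i : ℂ))) := by ring
    _ = (∏ i : Fin n, (b (i.val + 1) : ℂ)) * ∏ i : Fin n, (w + (μ i : ℂ)) := by
        rw [hsq, hdetPQ, mul_one]

lemma quad_roots (c : ℝ) (hc : 2 ≤ c) :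
    ∃ r s : ℝ, r * s = 1 ∧ r + s = c ∧ 0 < r ∧ 0 < s
      ∧ (c = 2 → r = 1 ∧ s = 1) ∧ ((r = 1 ∨ s = 1) → c = 2) := by
  have h4 : (0:ℝ) ≤ c ^ 2 - 4 := by nlinarith
  set d : ℝ := Real.sqrt (c ^ 2 - 4) with hd
  have hd2 : d ^ 2 = c ^ 2 - 4 := Real.sq_sqrt h4
  have hdnn : 0 ≤ d := Real.sqrt_nonneg _
  have hdc : d < c := by nlinarith
  refine ⟨(c + d) / 2, (c - d) / 2, by linear_combination (-1/4 : ℝ) * hd2, by ring,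
    by nlinarith, by nlinarith, ?_, ?_⟩
  · intro h2
    have : c ^ 2 - 4 = 0 := by rw [h2]; ring
    have hd0 : d = 0 := by rw [hd, this, Real.sqrt_zero]
    constructor <;> rw [hd0, h2] <;> norm_num
  · rintro (h | h)
    · have : d = 2 - c := by linarith
      nlinarith
    · have : d = c - 2 := by linarith
      nlinarith

lemma sol_eq (n : ℕ) (a b : ℕ → ℝ) (z : ℂ) :
    stringOfLoopsLap n a b z
      = (Lmat n a).map (algebraMap ℝ ℂ)
        + (2 - z - z⁻¹) • (Bmat n b).map (algebraMap ℝ ℂ) := by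
  ext i j
  simp only [stringOfLoopsLap, Matrix.of_apply, Matrix.add_apply, Matrix.map_apply,
    Matrix.smul_apply, Lmat, Bmat]
  by_cases h1 : i = j
  · subst h1
    rw [if_pos rfl, if_pos rfl, Matrix.diagonal_apply_eq]
    simp only [smul_eq_mul, Complex.coe_algebraMap]
    push_cast
    ring
  · rw [if_neg h1, if_neg h1, Matrix.diagonal_apply_ne _ h1, map_zero, smul_zero, add_zero]
    by_cases h2 : i.val + 1 = j.val
    · rw [if_pos h2, if_pos h2]; simp only [Complex.coe_algebraMap]; push_cast; ring
    · rw [if_neg h2, if_neg h2]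
      by_cases h3 : j.val + 1 = i.val
      · rw [if_pos h3, if_pos h3]; simp only [Complex.coe_algebraMap]; push_cast; ring
      · rw [if_neg h3, if_neg h3]; simp

end SOLAux

open SOLAux in
/-- Roots of the characteristic polynomial of an annular "string of loops" network:
there is a real polynomial `Q` of degree exactly `2n` with `Q(z) = zⁿ · det D(z)`, which
is reciprocal (`Q(z) = z^{2n} Q(1/z)`), whose complex roots are all positive reals,
with a double root at `z = 1` and all other roots simple. -/
theorem string_of_loops_roots (n : ℕ) (hn : 1 ≤ n) (a b : ℕ → ℝ)
    (ha0 : a 0 = 0) (han : a n = 0)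
    (hapos : ∀ i, 1 ≤ i → i ≤ n - 1 → 0 < a i)
    (hbpos : ∀ i, 1 ≤ i → i ≤ n → 0 < b i) :
    ∃ Q : Polynomial ℝ,
      Q.degree = (2 * n : ℕ) ∧
      (∀ z : ℂ, z ≠ 0 →
        (Q.map (algebraMap ℝ ℂ)).eval z = z ^ n * (stringOfLoopsLap n a b z).det) ∧
      (∀ z : ℂ, z ≠ 0 →
        (Q.map (algebraMap ℝ ℂ)).eval z = z ^ (2 * n) * (Q.map (algebraMap ℝ ℂ)).eval z⁻¹) ∧
      (∀ w : ℂ, (Q.map (algebraMap ℝ ℂ)).IsRoot w → ∃ x : ℝ, 0 < x ∧ w = (x : ℂ)) ∧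
      (Q.map (algebraMap ℝ ℂ)).rootMultiplicity 1 = 2 ∧
      (∀ w : ℂ, (Q.map (algebraMap ℝ ℂ)).IsRoot w → w ≠ 1 →
        (Q.map (algebraMap ℝ ℂ)).rootMultiplicity w = 1) := by
  classical
  have hb : ∀ i : Fin n, 0 < b (i.val + 1) := fun i =>
    hbpos (i.val + 1) (by omega) (by have := i.isLt; omega)
  have hμnn : ∀ i, 0 ≤ (Mmat_isHermitian n a b).eigenvalues i :=
    eig_nonneg n a b hn ha0 han hapos hb
  have hμdist : ∀ {i j : Fin n}, i ≠ j →
      (Mmat_isHermitian n a b).eigenvalues i ≠ (Mmat_isHermitian n a b).eigenvalues j :=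
    fun hij => eig_distinct n a b hn ha0 hapos hb hij
  obtain ⟨i₀, hi₀⟩ := exists_eig_zero n a b hn ha0 han hb
  have hc2 : ∀ i, 2 ≤ 2 + (Mmat_isHermitian n a b).eigenvalues i := fun i => by
    linarith [hμnn i]
  choose r s hrs hsum hrpos hspos hc2r hr2c using fun i =>
    quad_roots (2 + (Mmat_isHermitian n a b).eigenvalues i) (hc2 i)
  have hsinv : ∀ i, s i = (r i)⁻¹ := fun i => eq_inv_of_mul_eq_one_right (hrs i)
  have hrinv : ∀ i, r i = (s i)⁻¹ := fun i => eq_inv_of_mul_eq_one_left (hrs i)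
  have hkey : ∀ p q : Fin n, (r p = r q ∨ r p = s q ∨ s p = r q ∨ s p = s q) → p = q := by
    intro p q hcase
    by_contra hpq
    have hμne := hμdist hpq
    have e : 2 + (Mmat_isHermitian n a b).eigenvalues p
        = 2 + (Mmat_isHermitian n a b).eigenvalues q := by
      rw [← hsum p, ← hsum q]
      rcases hcase with h | h | h | h
      · rw [hsinv p, hsinv q, h]
      · rw [hsinv p, h, ← hrinv q]; ring
      · rw [hrinv p, h, ← hsinv q]; ring
      · rw [hrinv p, h, ← hrinv q]
    exact hμne (by linarith)
  have hone : ∀ i, r i = s i → r i = 1 := by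
    intro i h
    have h2 : r i * r i = 1 := by
      have h3 := hrs i
      rw [← h] at h3
      exact h3
    rcases mul_self_eq_one_iff.1 h2 with h' | h'
    · exact h'
    · exfalso; linarith [hrpos i]
  have hKbpos : (0:ℝ) < ∏ i : Fin n, b (i.val + 1) :=
    Finset.prod_pos fun i _ => hb i
  set K : ℝ := (-1) ^ n * ∏ i : Fin n, b (i.val + 1) with hK
  have hKne : K ≠ 0 := mul_ne_zero (pow_ne_zero _ (by norm_num)) (ne_of_gt hKbpos)
  set Q : Polynomial ℝ
    := Polynomial.C K * ∏ i : Fin n, ((X - C (r i)) * (X - C (s i))) with hQ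
  have hKCne : ((K:ℂ)) ≠ 0 := by exact_mod_cast hKne
  have hmap : Q.map (algebraMap ℝ ℂ)
      = Polynomial.C ((K:ℂ))
        * ∏ i : Fin n, ((X - C ((r i : ℂ))) * (X - C ((s i : ℂ)))) := by
    rw [hQ, Polynomial.map_mul, Polynomial.map_C, Polynomial.map_prod]
    congr 1
    refine Finset.prod_congr rfl fun i _ => ?_
    rw [Polynomial.map_mul, Polynomial.map_sub, Polynomial.map_sub, Polynomial.map_X,
      Polynomial.map_C, Polynomial.map_C]
    rfl
  have heval : ∀ z : ℂ, (Q.map (algebraMap ℝ ℂ)).eval z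
      = (K:ℂ) * ∏ i : Fin n, ((z - (r i:ℂ)) * (z - (s i:ℂ))) := by
    intro z
    rw [hmap]
    simp [Polynomial.eval_prod]
  have hfacne : ∀ i : Fin n,
      ((X : Polynomial ℂ) - C ((r i : ℂ))) * (X - C ((s i : ℂ))) ≠ 0 := fun i =>
    mul_ne_zero (Polynomial.X_sub_C_ne_zero _) (Polynomial.X_sub_C_ne_zero _)
  have hroot_cases : ∀ w : ℂ, (Q.map (algebraMap ℝ ℂ)).IsRoot w
      → ∃ i, w = ((r i : ℝ) : ℂ) ∨ w = ((s i : ℝ) : ℂ) := by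
    intro w hw
    have hw' : (K:ℂ) * ∏ i : Fin n, ((w - (r i:ℂ)) * (w - (s i:ℂ))) = 0 := by
      rw [← heval w]; exact hw
    have hprod0 : ∏ i : Fin n, ((w - (r i:ℂ)) * (w - (s i:ℂ))) = 0 := by
      rcases mul_eq_zero.1 hw' with h | h
      · exact absurd h hKCne
      · exact h
    obtain ⟨i, -, hi⟩ := Finset.prod_eq_zero_iff.1 hprod0
    rcases mul_eq_zero.1 hi with h | h
    · exact ⟨i, Or.inl (sub_eq_zero.1 h)⟩
    · exact ⟨i, Or.inr (sub_eq_zero.1 h)⟩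
  have hcount : ∀ w : ℂ, (Q.map (algebraMap ℝ ℂ)).rootMultiplicity w
      = ∑ i : Fin n, ((if w = ((r i:ℝ):ℂ) then 1 else 0)
          + (if w = ((s i:ℝ):ℂ) then 1 else 0)) := by
    intro w
    have hroots : (Q.map (algebraMap ℝ ℂ)).roots
        = Finset.univ.val.bind fun i : Fin n => ({((r i:ℂ))} + {((s i:ℂ))}) := by
      have hfac : ∀ i : Fin n,
          (((X : Polynomial ℂ) - C ((r i:ℂ))) * (X - C ((s i:ℂ)))).roots
            = {((r i:ℂ))} + {((s i:ℂ))} := by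
        intro i
        rw [Polynomial.roots_mul (hfacne i), Polynomial.roots_X_sub_C,
          Polynomial.roots_X_sub_C]
      rw [hmap, Polynomial.roots_C_mul _ hKCne,
        Polynomial.roots_prod _ _ (Finset.prod_ne_zero_iff.2 fun i _ => hfacne i)]
      exact Multiset.bind_congr fun i _ => hfac i
    rw [← Polynomial.count_roots, hroots, Multiset.count_bind]
    have hmapc : Multiset.map (fun i : Fin n => Multiset.count w ({((r i:ℂ))} + {((s i:ℂ))}))
        Finset.univ.val
        = Multiset.map (fun i : Fin n =>
            (if w = ((r i:ℝ):ℂ) then 1 else 0) + (if w = ((s i:ℝ):ℂ) then 1 else 0))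
          Finset.univ.val := by
      refine Multiset.map_congr rfl fun i _ => ?_
      rw [Multiset.count_add, Multiset.count_singleton, Multiset.count_singleton]
    rw [hmapc]
    rfl
  refine ⟨Q, ?_, ?_, ?_, ?_, ?_, ?_⟩
  · -- degree
    have hdegfac : ∀ i : Fin n,
        ((X - C (r i)) * (X - C (s i))).degree = ((2:ℕ) : WithBot ℕ) := by
      intro i
      rw [Polynomial.degree_mul, Polynomial.degree_X_sub_C, Polynomial.degree_X_sub_C]
      rfl
    rw [hQ, Polynomial.degree_mul, Polynomial.degree_C hKne, Polynomial.degree_prod, zero_add]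
    rw [Finset.sum_congr rfl fun i _ => hdegfac i, ← Nat.cast_sum]
    congr 1
    simp [Finset.sum_const, Finset.card_univ, mul_comm]
  · -- evaluation identity
    intro z hz
    have hzinv : z * z⁻¹ = 1 := mul_inv_cancel₀ hz
    have hfac : ∀ i : Fin n,
        z * ((2 - z - z⁻¹) + ((Mmat_isHermitian n a b).eigenvalues i : ℂ))
          = -((z - (r i:ℂ)) * (z - (s i:ℂ))) := by
      intro i
      have h1 : (r i : ℂ) * (s i : ℂ) = 1 := by
        rw [← Complex.ofReal_mul, hrs i]; norm_num
      have h2 : (r i : ℂ) + (s i : ℂ)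
          = 2 + ((Mmat_isHermitian n a b).eigenvalues i : ℂ) := by
        rw [← Complex.ofReal_add, hsum i]; push_cast; ring
      linear_combination (-z) * h2 - hzinv + h1
    have hzn : z ^ n = ∏ _i : Fin n, z := by
      rw [Finset.prod_const, Finset.card_univ, Fintype.card_fin]
    have hneg : ∏ i : Fin n, -((z - (r i:ℂ)) * (z - (s i:ℂ)))
        = (-1) ^ n * ∏ i : Fin n, ((z - (r i:ℂ)) * (z - (s i:ℂ))) := by
      rw [show (fun i : Fin n => -((z - (r i:ℂ)) * (z - (s i:ℂ))))
          = fun i : Fin n => (-1) * ((z - (r i:ℂ)) * (z - (s i:ℂ))) from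
        funext fun i => by ring]
      rw [Finset.prod_mul_distrib, Finset.prod_const, Finset.card_univ, Fintype.card_fin]
    have main : z ^ n * ((∏ i : Fin n, (b (i.val + 1) : ℂ))
        * ∏ i : Fin n, ((2 - z - z⁻¹) + ((Mmat_isHermitian n a b).eigenvalues i : ℂ)))
          = (K:ℂ) * ∏ i : Fin n, ((z - (r i:ℂ)) * (z - (s i:ℂ))) := by
      rw [mul_left_comm, hzn, ← Finset.prod_mul_distrib,
        Finset.prod_congr rfl fun i _ => hfac i, hneg, hK]
      push_cast
      ring
    rw [sol_eq n a b z, det_formula n a b hb (2 - z - z⁻¹), heval z, main]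
  · -- reciprocal identity
    intro z hz
    have hzinv : z * z⁻¹ = 1 := mul_inv_cancel₀ hz
    have hfac : ∀ i : Fin n, z ^ 2 * ((z⁻¹ - (r i:ℂ)) * (z⁻¹ - (s i:ℂ)))
        = (z - (r i:ℂ)) * (z - (s i:ℂ)) := by
      intro i
      have h1 : (r i : ℂ) * (s i : ℂ) = 1 := by
        rw [← Complex.ofReal_mul, hrs i]; norm_num
      linear_combination (z * z⁻¹ + 1 - ((r i:ℂ) + (s i:ℂ)) * z) * hzinv + (z^2 - 1) * h1
    have hzn2 : z ^ (2 * n) = ∏ _i : Fin n, z ^ 2 := by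
      rw [Finset.prod_const, Finset.card_univ, Fintype.card_fin, ← pow_mul, mul_comm]
    have main2 : z ^ (2 * n) * ((K:ℂ) * ∏ i : Fin n, ((z⁻¹ - (r i:ℂ)) * (z⁻¹ - (s i:ℂ))))
        = (K:ℂ) * ∏ i : Fin n, ((z - (r i:ℂ)) * (z - (s i:ℂ))) := by
      rw [mul_left_comm, hzn2, ← Finset.prod_mul_distrib,
        Finset.prod_congr rfl fun i _ => hfac i]
    rw [heval z, heval z⁻¹, main2]
  · -- roots are positive reals
    intro w hw
    obtain ⟨i, hi | hi⟩ := hroot_cases w hw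
    · exact ⟨r i, hrpos i, hi⟩
    · exact ⟨s i, hspos i, hi⟩
  · -- multiplicity at 1 is 2
    rw [hcount 1]
    have hri₀ : r i₀ = 1 ∧ s i₀ = 1 := hc2r i₀ (by rw [hi₀]; norm_num)
    rw [Finset.sum_eq_single i₀]
    · rw [if_pos (by rw [hri₀.1]; norm_num), if_pos (by rw [hri₀.2]; norm_num)]
    · intro j _ hj
      have hrj : ¬ ((1:ℂ) = ((r j:ℝ) : ℂ)) := by
        intro h
        have h' : r j = 1 := by exact_mod_cast h.symm
        have h2 : 2 + (Mmat_isHermitian n a b).eigenvalues j = 2 := hr2c j (Or.inl h')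
        have hj0 : (Mmat_isHermitian n a b).eigenvalues j
            = (Mmat_isHermitian n a b).eigenvalues i₀ := by rw [hi₀]; linarith
        exact hj (by by_contra hne; exact hμdist hne hj0)
      have hsj : ¬ ((1:ℂ) = ((s j:ℝ) : ℂ)) := by
        intro h
        have h' : s j = 1 := by exact_mod_cast h.symm
        have h2 : 2 + (Mmat_isHermitian n a b).eigenvalues j = 2 := hr2c j (Or.inr h')
        have hj0 : (Mmat_isHermitian n a b).eigenvalues j
            = (Mmat_isHermitian n a b).eigenvalues i₀ := by rw [hi₀]; linarith
        exact hj (by by_contra hne; exact hμdist hne hj0)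
      rw [if_neg hrj, if_neg hsj]
      norm_num
    · intro h
      exact absurd (Finset.mem_univ i₀) h
  · -- other roots simple
    intro w hw hw1
    obtain ⟨j₀, hj₀⟩ := hroot_cases w hw
    rw [hcount w]
    rw [Finset.sum_eq_single j₀]
    · rcases hj₀ with h | h
      · have hns : ¬ (w = ((s j₀:ℝ) : ℂ)) := by
          intro hs'
          have hrs' : r j₀ = s j₀ := Complex.ofReal_inj.1 (h.symm.trans hs')
          have hr1 : r j₀ = 1 := hone j₀ hrs'
          exact hw1 (by rw [h, hr1, Complex.ofReal_one])
        rw [if_pos h, if_neg hns]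
      · have hnr : ¬ (w = ((r j₀:ℝ) : ℂ)) := by
          intro hr'
          have hrs' : r j₀ = s j₀ := Complex.ofReal_inj.1 (hr'.symm.trans h)
          have hs1 : s j₀ = 1 := by rw [← hrs']; exact hone j₀ hrs'
          exact hw1 (by rw [h, hs1, Complex.ofReal_one])
        rw [if_neg hnr, if_pos h]
    · intro j _ hj
      have hnr : ¬ (w = ((r j:ℝ):ℂ)) := by
        intro h
        apply hj
        apply hkey j j₀
        rcases hj₀ with h0 | h0
        · exact Or.inl (Complex.ofReal_inj.1 (h.symm.trans h0))
        · exact Or.inr (Or.inl (Complex.ofReal_inj.1 (h.symm.trans h0)))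
      have hns : ¬ (w = ((s j:ℝ):ℂ)) := by
        intro h
        apply hj
        apply hkey j j₀
        rcases hj₀ with h0 | h0
        · exact Or.inr (Or.inr (Or.inl (Complex.ofReal_inj.1 (h.symm.trans h0))))
        · exact Or.inr (Or.inr (Or.inr (Complex.ofReal_inj.1 (h.symm.trans h0))))
      rw [if_neg hnr, if_neg hns]
      norm_num
    · intro h
      exact absurd (Finset.mem_univ j₀) h
end
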